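/- arXiv:0903.1456 — 8 statements merged into one kernel-verified Lean document; each statement's English description precedes it below -/
import Mathlib

section
/- Let a countable discrete group Γ act on a σ-finite measure space (M, B, m) by measure-preserving automorphisms, with fundamental domain X. A family of measurable sets (F_i)_{i∈I} packs by Γ (i.e., the sets γ·F_i for (γ,i) ranging over Γ×I are pairwise disjoint up to measure zero) if and only if there exists a family (X_i)_{i∈I} of pairwise disjoint measurable subsets of X such that F_i is Γ-equivalent to X_i for every i ∈ I. -/
open MeasureTheory Set Pointwise

/-- `E` and `F` are `Γ`-equivalent: there are measurable partitions (up to null sets)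
`(P γ)` of `E` and `(γ • P γ)` of `F`. -/
def GammaEquiv {M : Type*} [MeasurableSpace M] (Γ : Type*) [Group Γ] [MulAction Γ M]
    (μ : Measure M) (E F : Set M) : Prop :=
  ∃ P : Γ → Set M,
    (∀ γ, MeasurableSet (P γ)) ∧
    (Pairwise fun γ γ' => μ (P γ ∩ P γ') = 0) ∧
    μ (symmDiff E (⋃ γ, P γ)) = 0 ∧
    (Pairwise fun γ γ' => μ ((γ • P γ) ∩ (γ' • P γ')) = 0) ∧
    μ (symmDiff F (⋃ γ : Γ, γ • P γ)) = 0

section Aux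

variable {M : Type*} [MeasurableSpace M] {Γ : Type*} [Group Γ] [MulAction Γ M]
  {μ : Measure M}

omit [MeasurableSpace M] in
theorem smul_set_eq_preimage (γ : Γ) (s : Set M) :
    γ • s = (fun x : M => γ⁻¹ • x) ⁻¹' s := by
  rw [Set.preimage_smul, inv_inv]

theorem measurableSet_smul (hmeas : ∀ γ : Γ, Measurable fun x : M => γ • x)
    (γ : Γ) {s : Set M} (hs : MeasurableSet s) : MeasurableSet (γ • s) := by
  rw [smul_set_eq_preimage]
  exact hmeas γ⁻¹ hs

theorem measurePreserving_smul' (hmeas : ∀ γ : Γ, Measurable fun x : M => γ • x)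
    [SMulInvariantMeasure Γ M μ] (γ : Γ) :
    MeasurePreserving (fun x : M => γ • x) μ μ := by
  refine ⟨hmeas γ, Measure.ext fun s hs => ?_⟩
  rw [Measure.map_apply (hmeas γ) hs]
  exact SMulInvariantMeasure.measure_preimage_smul γ hs

/-- The action as a measurable equivalence. -/
noncomputable def smulEquiv (hmeas : ∀ γ : Γ, Measurable fun x : M => γ • x)
    (γ : Γ) : M ≃ᵐ M where
  toEquiv := MulAction.toPerm γ
  measurable_toFun := hmeas γ
  measurable_invFun := hmeas γ⁻¹

theorem measure_smul_set (hmeas : ∀ γ : Γ, Measurable fun x : M => γ • x)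
    [SMulInvariantMeasure Γ M μ] (γ : Γ) (s : Set M) : μ (γ • s) = μ s := by
  rw [smul_set_eq_preimage]
  exact (measurePreserving_smul' hmeas γ⁻¹).measure_preimage_emb
    (smulEquiv hmeas γ⁻¹).measurableEmbedding s

theorem smul_set_null (hmeas : ∀ γ : Γ, Measurable fun x : M => γ • x)
    [SMulInvariantMeasure Γ M μ] (γ : Γ) {s : Set M} (hs : μ s = 0) :
    μ (γ • s) = 0 := by
  rw [measure_smul_set hmeas]; exact hs

theorem smul_ae_eq (hmeas : ∀ γ : Γ, Measurable fun x : M => γ • x)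
    [SMulInvariantMeasure Γ M μ] (γ : Γ) {s t : Set M} (h : s =ᵐ[μ] t) :
    (γ • s : Set M) =ᵐ[μ] (γ • t : Set M) := by
  rw [← measure_symmDiff_eq_zero_iff] at h ⊢
  have : symmDiff (γ • s) (γ • t) = γ • symmDiff s t := by
    simp only [symmDiff_def, Set.sup_eq_union, Set.smul_set_union, Set.smul_set_sdiff,
      Set.smul_set_inter]
  rw [this]
  exact smul_set_null hmeas γ h

/-- If `A`, `B` are a.e. contained in `S`, `T` respectively and `S ∩ T` is null,
then `A ∩ B` is null. -/
theorem inter_null_of_ae_sub {A B S T : Set M}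
    (hA : μ (A \ S) = 0) (hB : μ (B \ T) = 0) (hST : μ (S ∩ T) = 0) :
    μ (A ∩ B) = 0 := by
  have hsub : A ∩ B ⊆ (S ∩ T) ∪ ((A \ S) ∪ (B \ T)) := by
    intro x ⟨hxA, hxB⟩
    by_cases hxS : x ∈ S
    · by_cases hxT : x ∈ T
      · exact Or.inl ⟨hxS, hxT⟩
      · exact Or.inr (Or.inr ⟨hxB, hxT⟩)
    · exact Or.inr (Or.inl ⟨hxA, hxS⟩)
  exact measure_mono_null hsub
    (measure_union_null hST (measure_union_null hA hB))

/-- Key disjointness lemma: if `A`, `B` are a.e. contained in a fundamental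
domain `X` and either `a ≠ b` or `A ∩ B` is null, then `a • A` and `b • B`
are a.e. disjoint. -/
theorem key_disjoint (hmeas : ∀ γ : Γ, Measurable fun x : M => γ • x)
    [SMulInvariantMeasure Γ M μ] {X : Set M}
    (hX : IsFundamentalDomain Γ X μ) (a b : Γ) {A B : Set M}
    (hA : μ (A \ X) = 0) (hB : μ (B \ X) = 0)
    (hcase : a = b → μ (A ∩ B) = 0) :
    μ ((a • A) ∩ (b • B)) = 0 := by
  by_cases hab : a = b
  · subst hab
    rw [← Set.smul_set_inter]
    exact smul_set_null hmeas a (hcase rfl)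
  · refine inter_null_of_ae_sub (S := a • X) (T := b • X) ?_ ?_ (hX.aedisjoint hab)
    · rw [← Set.smul_set_sdiff]
      exact smul_set_null hmeas a hA
    · rw [← Set.smul_set_sdiff]
      exact smul_set_null hmeas b hB

end Aux

/-- A family `(F i)` of measurable sets packs by `Γ` iff there is a family of pairwise
a.e. disjoint measurable subsets `(X i)` of the fundamental domain `X` such that
`F i` is `Γ`-equivalent to `X i` for every `i`. -/
theorem packs_iff_equiv_subsets_of_fundamentalDomain
    {M : Type*} [MeasurableSpace M] {Γ : Type*} [Group Γ] [Countable Γ]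
    [MulAction Γ M]
    (hmeas : ∀ γ : Γ, Measurable fun x : M => γ • x)
    (μ : Measure M) [SigmaFinite μ] [SMulInvariantMeasure Γ M μ]
    (X : Set M) (hXmeas : MeasurableSet X) (hX : IsFundamentalDomain Γ X μ)
    {I : Type*} (F : I → Set M) (hFmeas : ∀ i, MeasurableSet (F i)) :
    (∀ (g h : Γ) (i j : I), (g, i) ≠ (h, j) → μ ((g • F i) ∩ (h • F j)) = 0) ↔
      ∃ Xi : I → Set M,
        (∀ i, MeasurableSet (Xi i)) ∧
        (∀ i, Xi i ⊆ X) ∧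
        (Pairwise fun i j => μ (Xi i ∩ Xi j) = 0) ∧
        (∀ i, GammaEquiv Γ μ (F i) (Xi i)) := by
  constructor
  · -- forward direction
    intro hpack
    refine ⟨fun i => ⋃ γ : Γ, (γ • F i ∩ X), ?_, ?_, ?_, ?_⟩
    · exact fun i => MeasurableSet.iUnion fun γ =>
        (measurableSet_smul hmeas γ (hFmeas i)).inter hXmeas
    · exact fun i => Set.iUnion_subset fun γ => Set.inter_subset_right
    · intro i j hij
      have hsub : (⋃ γ : Γ, (γ • F i ∩ X)) ∩ (⋃ γ : Γ, (γ • F j ∩ X)) ⊆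
          ⋃ γ : Γ, ⋃ δ : Γ, (γ • F i ∩ δ • F j) := by
        intro x ⟨h1, h2⟩
        rw [Set.mem_iUnion] at h1 h2
        obtain ⟨γ, hγ, -⟩ := h1
        obtain ⟨δ, hδ, -⟩ := h2
        exact Set.mem_iUnion.2 ⟨γ, Set.mem_iUnion.2 ⟨δ, hγ, hδ⟩⟩
      refine measure_mono_null hsub (measure_iUnion_null fun γ =>
        measure_iUnion_null fun δ => hpack γ δ i j ?_)
      simp [hij]
    · intro i
      refine ⟨fun γ => F i ∩ γ⁻¹ • X, ?_, ?_, ?_, ?_, ?_⟩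
      · exact fun γ => (hFmeas i).inter (measurableSet_smul hmeas γ⁻¹ hXmeas)
      · intro γ γ' hne
        have hdis : MeasureTheory.AEDisjoint μ (γ⁻¹ • X) (γ'⁻¹ • X) :=
          hX.aedisjoint (fun h => hne (inv_injective h))
        refine measure_mono_null ?_ hdis
        rintro x ⟨⟨-, h1⟩, -, h2⟩
        exact ⟨h1, h2⟩
      · -- symmDiff (F i) (⋃ γ, F i ∩ γ⁻¹ • X) is null
        have hcov : μ {x : M | ∀ γ : Γ, γ • x ∉ X} = 0 := by
          have := hX.ae_covers
          rw [MeasureTheory.ae_iff] at this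
          simpa [not_exists] using this
        have hsub : symmDiff (F i) (⋃ γ : Γ, (F i ∩ γ⁻¹ • X)) ⊆
            {x : M | ∀ γ : Γ, γ • x ∉ X} := by
          intro x hx
          rcases hx with ⟨hx1, hx2⟩ | ⟨hx1, hx2⟩
          · intro γ hγ
            exact hx2 (Set.mem_iUnion.2 ⟨γ, hx1, Set.mem_inv_smul_set_iff.2 hγ⟩)
          · rw [Set.mem_iUnion] at hx1
            obtain ⟨γ, hγ, -⟩ := hx1
            exact absurd hγ hx2
        exact measure_mono_null hsub hcov
      · intro γ γ' hne
        have hrw : ∀ δ : Γ, δ • (F i ∩ δ⁻¹ • X) = δ • F i ∩ X := by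
          intro δ
          rw [Set.smul_set_inter, smul_inv_smul]
        rw [hrw γ, hrw γ']
        refine measure_mono_null ?_ (hpack γ γ' i i (by simp [hne]))
        rintro x ⟨⟨h1, -⟩, h2, -⟩
        exact ⟨h1, h2⟩
      · have hrw : (⋃ γ : Γ, γ • (F i ∩ γ⁻¹ • X)) = ⋃ γ : Γ, (γ • F i ∩ X) := by
          refine Set.iUnion_congr fun γ => ?_
          rw [Set.smul_set_inter, smul_inv_smul]
        rw [hrw, symmDiff_self]
        simp
  · -- backward direction
    rintro ⟨Xi, hXimeas, hXisub, hXidisj, hequiv⟩ g h i j hne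
    -- common tools
    have sub_null : ∀ (i : I) (P : Γ → Set M),
        μ (symmDiff (Xi i) (⋃ γ : Γ, γ • P γ)) = 0 →
        ∀ γ : Γ, μ ((γ • P γ) \ X) = 0 := by
      intro i P hP γ
      refine measure_mono_null ?_ hP
      intro x ⟨hx1, hx2⟩
      refine Or.inr ⟨Set.mem_iUnion.2 ⟨γ, hx1⟩, fun hxXi => hx2 (hXisub i hxXi)⟩
    have sub_nullXi : ∀ (i : I) (P : Γ → Set M),
        μ (symmDiff (Xi i) (⋃ γ : Γ, γ • P γ)) = 0 →
        ∀ γ : Γ, μ ((γ • P γ) \ Xi i) = 0 := by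
      intro i P hP γ
      refine measure_mono_null ?_ hP
      intro x ⟨hx1, hx2⟩
      exact Or.inr ⟨Set.mem_iUnion.2 ⟨γ, hx1⟩, hx2⟩
    by_cases hij : i = j
    · -- same index: g ≠ h
      subst hij
      have hgh : g ≠ h := fun hgh => hne (by rw [hgh])
      obtain ⟨P, hPmeas, hPdisj, hPF, hQdisj, hQXi⟩ := hequiv i
      have hFae : (g • F i : Set M) =ᵐ[μ] ⋃ γ : Γ, (g * γ⁻¹) • (γ • P γ) := by
        have h1 : F i =ᵐ[μ] ⋃ γ : Γ, P γ := measure_symmDiff_eq_zero_iff.mp hPF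
        have := smul_ae_eq hmeas g h1
        rw [Set.smul_set_iUnion] at this
        refine this.trans (Filter.EventuallyEq.of_eq (Set.iUnion_congr fun γ => ?_))
        rw [smul_smul, inv_mul_cancel_right]
      have hFae' : (h • F i : Set M) =ᵐ[μ] ⋃ δ : Γ, (h * δ⁻¹) • (δ • P δ) := by
        have h1 : F i =ᵐ[μ] ⋃ δ : Γ, P δ := measure_symmDiff_eq_zero_iff.mp hPF
        have := smul_ae_eq hmeas h h1
        rw [Set.smul_set_iUnion] at this
        refine this.trans (Filter.EventuallyEq.of_eq (Set.iUnion_congr fun δ => ?_))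
        rw [smul_smul, inv_mul_cancel_right]
      rw [measure_congr (MeasureTheory.ae_eq_set_inter hFae hFae')]
      refine measure_mono_null (t := ⋃ γ : Γ, ⋃ δ : Γ,
        ((g * γ⁻¹) • (γ • P γ) ∩ (h * δ⁻¹) • (δ • P δ))) ?_ ?_
      · intro x ⟨h1, h2⟩
        rw [Set.mem_iUnion] at h1 h2
        obtain ⟨γ, hγ⟩ := h1
        obtain ⟨δ, hδ⟩ := h2
        exact Set.mem_iUnion.2 ⟨γ, Set.mem_iUnion.2 ⟨δ, hγ, hδ⟩⟩
      · refine measure_iUnion_null fun γ => measure_iUnion_null fun δ => ?_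
        refine key_disjoint hmeas hX _ _ (sub_null i P hQXi γ) (sub_null i P hQXi δ) ?_
        intro heq
        have hγδ : γ ≠ δ := by
          rintro rfl
          exact hgh (mul_right_cancel heq)
        exact hQdisj hγδ
    · -- different indices
      obtain ⟨P, hPmeas, hPdisj, hPF, hQdisj, hQXi⟩ := hequiv i
      obtain ⟨Q, hQmeas, hQdisj', hQF, hRdisj, hRXi⟩ := hequiv j
      have hFae : (g • F i : Set M) =ᵐ[μ] ⋃ γ : Γ, (g * γ⁻¹) • (γ • P γ) := by
        have h1 : F i =ᵐ[μ] ⋃ γ : Γ, P γ := measure_symmDiff_eq_zero_iff.mp hPF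
        have := smul_ae_eq hmeas g h1
        rw [Set.smul_set_iUnion] at this
        refine this.trans (Filter.EventuallyEq.of_eq (Set.iUnion_congr fun γ => ?_))
        rw [smul_smul, inv_mul_cancel_right]
      have hFae' : (h • F j : Set M) =ᵐ[μ] ⋃ δ : Γ, (h * δ⁻¹) • (δ • Q δ) := by
        have h1 : F j =ᵐ[μ] ⋃ δ : Γ, Q δ := measure_symmDiff_eq_zero_iff.mp hQF
        have := smul_ae_eq hmeas h h1
        rw [Set.smul_set_iUnion] at this
        refine this.trans (Filter.EventuallyEq.of_eq (Set.iUnion_congr fun δ => ?_))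
        rw [smul_smul, inv_mul_cancel_right]
      rw [measure_congr (MeasureTheory.ae_eq_set_inter hFae hFae')]
      refine measure_mono_null (t := ⋃ γ : Γ, ⋃ δ : Γ,
        ((g * γ⁻¹) • (γ • P γ) ∩ (h * δ⁻¹) • (δ • Q δ))) ?_ ?_
      · intro x ⟨h1, h2⟩
        rw [Set.mem_iUnion] at h1 h2
        obtain ⟨γ, hγ⟩ := h1
        obtain ⟨δ, hδ⟩ := h2
        exact Set.mem_iUnion.2 ⟨γ, Set.mem_iUnion.2 ⟨δ, hγ, hδ⟩⟩
      · refine measure_iUnion_null fun γ => measure_iUnion_null fun δ => ?_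
        refine key_disjoint hmeas hX _ _ (sub_null i P hQXi γ) (sub_null j Q hRXi δ) ?_
        intro _
        exact inter_null_of_ae_sub (sub_nullXi i P hQXi γ) (sub_nullXi j Q hRXi δ)
          (hXidisj hij)
end

section
/- Consider two commuting measure-preserving actions of countable discrete groups Γ (acting on the left) and Λ (acting on the right) on a σ-finite measure space (M, B, m), with fundamental domains X for Γ and Y for Λ, both of finite positive measure. If there exist k fundamental domains F_1, …, F_k for Λ such that the family {F_1, …, F_k} packs by Γ, then for every measurable set A that is invariant under both Γ and Λ, one has m(A ∩ X) ≥ k · m(A ∩ Y). -/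
open MeasureTheory Set Pointwise ENNReal

/-- For a fundamental domain `t` of a countable group `G` acting measure-preservingly, and a set
`A` that is a.e. invariant under `G`, the measure of `A ∩ s` for an arbitrary set `s` can be
computed as a sum over translates of `s` intersected with `A ∩ t`. -/
lemma aux_tsum_inter {M : Type*} [MeasurableSpace M] {G : Type*} [Group G] [Countable G]
    [MulAction G M] {μ : Measure M} [SMulInvariantMeasure G M μ]
    (hmeas : ∀ g : G, Measurable fun x : M => g • x)
    {t A : Set M} (ht : IsFundamentalDomain G t μ)
    (hA : ∀ g : G, (g • A : Set M) =ᵐ[μ] A) (s : Set M) :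
    μ (A ∩ s) = ∑' g : G, μ ((A ∩ t) ∩ g • s) := by
  letI : MeasurableSpace G := ⊤
  haveI : MeasurableSMul G M :=
    { toMeasurableConstSMul := ⟨fun c => hmeas c⟩, measurable_smul_const := fun _ => measurable_from_top }
  rw [ht.measure_eq_tsum' (A ∩ s),
    ← (Equiv.inv G).tsum_eq (fun g => μ ((A ∩ t) ∩ g • s))]
  refine tsum_congr fun g => ?_
  -- goal: μ ((A ∩ s) ∩ g • t) = μ ((A ∩ t) ∩ g⁻¹ • s)
  have h1 : μ ((A ∩ s) ∩ g • t) = μ (g⁻¹ • ((A ∩ s) ∩ g • t)) :=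
    (measure_smul (μ := μ) g⁻¹ _).symm
  have h2 : g⁻¹ • ((A ∩ s) ∩ g • t) = (g⁻¹ • A ∩ g⁻¹ • s) ∩ t := by
    simp [Set.smul_set_inter, inv_smul_smul]
  have h3 : ((g⁻¹ • A ∩ g⁻¹ • s) ∩ t : Set M) =ᵐ[μ] ((A ∩ g⁻¹ • s) ∩ t : Set M) :=
    ((hA g⁻¹).inter (ae_eq_refl _)).inter (ae_eq_refl _)
  rw [h1, h2, measure_congr h3, Set.inter_right_comm]
  rfl

/-- If there are `k` fundamental domains `F 1, …, F k` for `Λ` whose family packs by `Γ`,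
then `μ (A ∩ X) ≥ k • μ (A ∩ Y)` for every set `A` invariant under both commuting actions. -/
theorem measure_inter_ge_of_packing_fundamentalDomains
    {M : Type*} [MeasurableSpace M]
    {Γ : Type*} [Group Γ] [Countable Γ] [MulAction Γ M]
    {Λ : Type*} [Group Λ] [Countable Λ] [MulAction Λ M]
    (hmeasΓ : ∀ γ : Γ, Measurable fun x : M => γ • x)
    (hmeasΛ : ∀ l : Λ, Measurable fun x : M => l • x)
    (μ : Measure M) [SigmaFinite μ]
    [SMulInvariantMeasure Γ M μ] [SMulInvariantMeasure Λ M μ]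
    (hcomm : ∀ (γ : Γ) (l : Λ) (x : M), γ • (l • x) = l • (γ • x))
    (X Y : Set M) (hXmeas : MeasurableSet X) (hYmeas : MeasurableSet Y)
    (hX : IsFundamentalDomain Γ X μ) (hY : IsFundamentalDomain Λ Y μ)
    (hX0 : 0 < μ X) (hXfin : μ X ≠ ⊤) (hY0 : 0 < μ Y) (hYfin : μ Y ≠ ⊤)
    (k : ℕ) (hk : 1 ≤ k) (F : Fin k → Set M)
    (hFmeas : ∀ i, MeasurableSet (F i))
    (hFfund : ∀ i, IsFundamentalDomain Λ (F i) μ)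
    (hpack : ∀ (g h : Γ) (i j : Fin k), (g, i) ≠ (h, j) → μ ((g • F i) ∩ (h • F j)) = 0) :
    ∀ A : Set M, MeasurableSet A →
      (∀ γ : Γ, μ (symmDiff (γ • A) A) = 0) →
      (∀ l : Λ, μ (symmDiff (l • A) A) = 0) →
      (k : ℝ≥0∞) * μ (A ∩ Y) ≤ μ (A ∩ X) := by
  intro A hAmeas hAΓ hAΛ
  have hAΓ' : ∀ γ : Γ, (γ • A : Set M) =ᵐ[μ] A := fun γ =>
    measure_symmDiff_eq_zero_iff.1 (hAΓ γ)
  have hAΛ' : ∀ l : Λ, (l • A : Set M) =ᵐ[μ] A := fun l =>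
    measure_symmDiff_eq_zero_iff.1 (hAΛ l)
  -- Step 1: each `F i` has the same `A`-measure as `Y`
  have step1 : ∀ i, μ (A ∩ F i) = μ (A ∩ Y) := fun i => by
    letI : MeasurableSpace Λ := ⊤
    haveI : MeasurableSMul Λ M :=
      { toMeasurableConstSMul := ⟨fun c => hmeasΛ c⟩, measurable_smul_const := fun _ => measurable_from_top }
    rw [aux_tsum_inter hmeasΛ hY hAΛ' (F i), ← (hFfund i).measure_eq_tsum' (A ∩ Y)]
  -- Step 2: μ (A ∩ F i) expressed via the Γ-fundamental domain X
  have step2 : ∀ i, μ (A ∩ F i) = ∑' γ : Γ, μ ((A ∩ X) ∩ γ • F i) := fun i =>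
    aux_tsum_inter hmeasΓ hX hAΓ' (F i)
  -- measurability of translates
  have hsmulmeas : ∀ (γ : Γ) (i : Fin k), MeasurableSet (γ • F i : Set M) := by
    intro γ i
    have : (γ • F i : Set M) = (fun x : M => γ⁻¹ • x) ⁻¹' (F i) := by
      ext x; simp [Set.mem_smul_set_iff_inv_smul_mem]
    rw [this]
    exact (hmeasΓ γ⁻¹) (hFmeas i)
  -- the family over pairs is a.e. disjoint
  set f : Fin k × Γ → Set M := fun p => (A ∩ X) ∩ p.2 • F p.1 with hf
  have hdisj : Pairwise (Function.onFun (AEDisjoint μ) f) := by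
    intro p q hpq
    have hne : (p.2, p.1) ≠ (q.2, q.1) := by
      intro h
      exact hpq (Prod.ext (congrArg Prod.snd h) (congrArg Prod.fst h))
    have := hpack p.2 q.2 p.1 q.1 hne
    refine measure_mono_null ?_ this
    exact Set.inter_subset_inter Set.inter_subset_right Set.inter_subset_right
  have hnm : ∀ p : Fin k × Γ, NullMeasurableSet (f p) μ :=
    fun p => ((hAmeas.inter hXmeas).inter (hsmulmeas p.2 p.1)).nullMeasurableSet
  have hsum : ∑' p : Fin k × Γ, μ (f p) = μ (⋃ p, f p) :=
    (measure_iUnion₀ hdisj hnm).symm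
  have hle : μ (⋃ p, f p) ≤ μ (A ∩ X) :=
    measure_mono (Set.iUnion_subset fun p => Set.inter_subset_left)
  calc (k : ℝ≥0∞) * μ (A ∩ Y)
      = ∑ i : Fin k, μ (A ∩ Y) := by
        simp [Finset.sum_const, Finset.card_univ, mul_comm]
    _ = ∑ i : Fin k, μ (A ∩ F i) := by simp [step1]
    _ = ∑ i : Fin k, ∑' γ : Γ, μ ((A ∩ X) ∩ γ • F i) := by simp [step2]
    _ = ∑' i : Fin k, ∑' γ : Γ, μ ((A ∩ X) ∩ γ • F i) := (tsum_fintype _).symm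
    _ = ∑' p : Fin k × Γ, μ (f p) := (ENNReal.tsum_prod' (f := fun p : Fin k × Γ => μ ((A ∩ X) ∩ p.2 • F p.1))).symm
    _ = μ (⋃ p, f p) := hsum
    _ ≤ μ (A ∩ X) := hle
end

section
/- Consider two commuting measure-preserving actions of countable discrete groups Γ and Λ on a σ-finite measure space (M, B, m), with fundamental domains X for Γ and Y for Λ of finite positive measure. If for every measurable set A invariant under both Γ and Λ one has m(A ∩ X) ≥ k · m(A ∩ Y) (k ≥ 1 an integer), then there exist k fundamental domains F_1, …, F_k for Λ such that the family {F_1, …, F_k} packs by Γ. -/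
open MeasureTheory Set Pointwise ENNReal

namespace PackingAux

variable {M : Type*} {Γ : Type*} {Λ : Type*} [Group Γ] [MulAction Γ M]
  [Group Λ] [MulAction Λ M]

variable (k : ℕ) (f : ℕ → Γ × Λ × Fin k) (X Y : Set M)

/-- Greedy matching state: unmatched parts of the `k` copies of `Y`, and of `X`. -/
def st : ℕ → (Fin k → Set M) × Set M
  | 0 => (fun _ => Y, X)
  | n + 1 =>
    let c := f n
    let P := (st n).1 c.2.2 ∩ {x | c.1 • c.2.1 • x ∈ (st n).2}
    (Function.update (st n).1 c.2.2 ((st n).1 c.2.2 \ P),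
      (st n).2 \ (c.1 • c.2.1 • P))

def R (n : ℕ) (i : Fin k) : Set M := (st k f X Y n).1 i
def S (n : ℕ) : Set M := (st k f X Y n).2
def lbl (n : ℕ) : Fin k := (f n).2.2
def gam (n : ℕ) : Γ := (f n).1
def lam (n : ℕ) : Λ := (f n).2.1
def P (n : ℕ) : Set M :=
  R k f X Y n (lbl k f n) ∩ {x | gam k f n • lam k f n • x ∈ S k f X Y n}
def Q (n : ℕ) : Set M := gam k f n • lam k f n • P k f X Y n

lemma R_zero (i : Fin k) : R k f X Y 0 i = Y := rfl
lemma S_zero : S k f X Y 0 = X := rfl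

lemma R_succ (n : ℕ) (i : Fin k) :
    R k f X Y (n + 1) i =
      if i = lbl k f n then R k f X Y n (lbl k f n) \ P k f X Y n else R k f X Y n i := by
  show Function.update _ _ _ _ = _
  rw [Function.update_apply]
  rfl

lemma S_succ (n : ℕ) : S k f X Y (n + 1) = S k f X Y n \ Q k f X Y n := rfl

lemma R_succ_lbl (n : ℕ) :
    R k f X Y (n + 1) (lbl k f n) = R k f X Y n (lbl k f n) \ P k f X Y n := by
  rw [R_succ, if_pos rfl]

lemma R_succ_subset (n : ℕ) (i : Fin k) : R k f X Y (n + 1) i ⊆ R k f X Y n i := by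
  rw [R_succ]
  split
  · next h => rw [h]; exact diff_subset
  · exact subset_rfl

lemma S_succ_subset (n : ℕ) : S k f X Y (n + 1) ⊆ S k f X Y n := diff_subset

lemma R_mono {m n : ℕ} (h : m ≤ n) (i : Fin k) : R k f X Y n i ⊆ R k f X Y m i := by
  induction n with
  | zero => simpa [Nat.le_zero.mp h] using subset_rfl
  | succ n ih =>
    rcases Nat.lt_or_ge m (n + 1) with h' | h'
    · exact (R_succ_subset k f X Y n i).trans (ih (Nat.lt_succ_iff.mp h'))
    · have : m = n + 1 := le_antisymm h h'
      subst this; exact subset_rfl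

lemma S_mono {m n : ℕ} (h : m ≤ n) : S k f X Y n ⊆ S k f X Y m := by
  induction n with
  | zero => simpa [Nat.le_zero.mp h] using subset_rfl
  | succ n ih =>
    rcases Nat.lt_or_ge m (n + 1) with h' | h'
    · exact (S_succ_subset k f X Y n).trans (ih (Nat.lt_succ_iff.mp h'))
    · have : m = n + 1 := le_antisymm h h'
      subst this; exact subset_rfl

lemma R_subset_Y (n : ℕ) (i : Fin k) : R k f X Y n i ⊆ Y :=
  R_mono k f X Y (Nat.zero_le n) i

lemma S_subset_X (n : ℕ) : S k f X Y n ⊆ X := S_mono k f X Y (Nat.zero_le n)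

lemma P_subset (n : ℕ) : P k f X Y n ⊆ R k f X Y n (lbl k f n) := inter_subset_left

lemma Q_subset (n : ℕ) : Q k f X Y n ⊆ S k f X Y n := by
  rintro x hx
  rcases hx with ⟨y, hy, rfl⟩
  rcases hy with ⟨z, hz, rfl⟩
  exact hz.2

lemma Q_disjoint {n m : ℕ} (h : n < m) : Disjoint (Q k f X Y n) (Q k f X Y m) := by
  have h1 : Q k f X Y m ⊆ S k f X Y (n + 1) :=
    (Q_subset k f X Y m).trans (S_mono k f X Y h)
  rw [S_succ] at h1
  exact disjoint_sdiff_self_right.mono_right h1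

lemma P_disjoint {n m : ℕ} (h : n < m) (hl : lbl k f n = lbl k f m) :
    Disjoint (P k f X Y n) (P k f X Y m) := by
  have h1 : P k f X Y m ⊆ R k f X Y (n + 1) (lbl k f n) := by
    rw [hl]
    exact (P_subset k f X Y m).trans (R_mono k f X Y h _)
  rw [R_succ_lbl] at h1
  exact disjoint_sdiff_self_right.mono_right h1

lemma diff_S_eq : X \ (⋂ n, S k f X Y n) = ⋃ n, Q k f X Y n := by
  ext x
  simp only [mem_diff, mem_iInter, mem_iUnion, not_forall]
  constructor
  · rintro ⟨hxX, ⟨n, hn⟩⟩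
    have hex : ∃ n, x ∉ S k f X Y n := ⟨n, hn⟩
    classical
    have hm : x ∉ S k f X Y (Nat.find hex) := Nat.find_spec hex
    have hm0 : Nat.find hex ≠ 0 := fun h0 => hm (by rw [h0]; exact hxX)
    obtain ⟨m', hm'⟩ := Nat.exists_eq_succ_of_ne_zero hm0
    rw [hm'] at hm
    have hmem : x ∈ S k f X Y m' := by
      by_contra hc
      exact Nat.find_min hex (by omega) hc
    rw [S_succ] at hm
    exact ⟨m', by_contra fun hq => hm ⟨hmem, hq⟩⟩
  · rintro ⟨n, hn⟩
    refine ⟨S_subset_X k f X Y n (Q_subset k f X Y n hn), n + 1, ?_⟩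
    rw [S_succ]
    exact fun hc => hc.2 hn

lemma diff_R_eq (i : Fin k) :
    Y \ (⋂ n, R k f X Y n i) = ⋃ n, ⋃ (_ : lbl k f n = i), P k f X Y n := by
  ext x
  simp only [mem_diff, mem_iInter, mem_iUnion, not_forall]
  constructor
  · rintro ⟨hxY, ⟨n, hn⟩⟩
    have hex : ∃ n, x ∉ R k f X Y n i := ⟨n, hn⟩
    classical
    have hm : x ∉ R k f X Y (Nat.find hex) i := Nat.find_spec hex
    have hm0 : Nat.find hex ≠ 0 := fun h0 => hm (by rw [h0]; exact hxY)
    obtain ⟨m', hm'⟩ := Nat.exists_eq_succ_of_ne_zero hm0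
    rw [hm'] at hm
    have hmem : x ∈ R k f X Y m' i := by
      by_contra hc
      exact Nat.find_min hex (by omega) hc
    rw [R_succ] at hm
    by_cases hli : i = lbl k f m'
    · subst hli
      rw [if_pos rfl] at hm
      exact ⟨m', rfl, by_contra fun hp => hm ⟨hmem, hp⟩⟩
    · rw [if_neg hli] at hm
      exact absurd hmem hm
  · rintro ⟨n, hl, hp⟩
    refine ⟨R_subset_Y k f X Y n _ (P_subset k f X Y n hp), n + 1, ?_⟩
    rw [← hl, R_succ_lbl]
    exact fun hc => hc.2 hp

lemma not_mem_Sinf (hf : Function.Surjective f) {i : Fin k} (γ : Γ) (l : Λ) {x : M}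
    (hx : x ∈ ⋂ n, R k f X Y n i) : γ • l • x ∉ ⋂ n, S k f X Y n := by
  obtain ⟨n, hn⟩ := hf (γ, l, i)
  intro hS
  have hxR : x ∈ R k f X Y (n + 1) i := mem_iInter.mp hx (n + 1)
  have hli : lbl k f n = i := by rw [lbl, hn]
  rw [← hli, R_succ_lbl] at hxR
  refine hxR.2 ⟨by rw [hli]; exact mem_iInter.mp hx n, ?_⟩
  show gam k f n • lam k f n • x ∈ S k f X Y n
  rw [gam, lam, hn]
  exact mem_iInter.mp hS n

section Meas

variable {M : Type*} [MeasurableSpace M] {Γ : Type*} {Λ : Type*} [Group Γ] [MulAction Γ M]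
  [Group Λ] [MulAction Λ M]

variable (k : ℕ) (f : ℕ → Γ × Λ × Fin k) (X Y : Set M)

lemma smul_set_measurableΓ (hΓ : ∀ γ : Γ, Measurable fun x : M => γ • x)
    (γ : Γ) {s : Set M} (hs : MeasurableSet s) : MeasurableSet (γ • s) := by
  have : γ • s = (fun x : M => γ⁻¹ • x) ⁻¹' s := by
    ext x
    simp [Set.mem_smul_set_iff_inv_smul_mem]
  rw [this]
  exact hΓ γ⁻¹ hs

lemma smul_set_measurableΛ (hΛ : ∀ l : Λ, Measurable fun x : M => l • x)
    (l : Λ) {s : Set M} (hs : MeasurableSet s) : MeasurableSet (l • s) := by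
  have : l • s = (fun x : M => l⁻¹ • x) ⁻¹' s := by
    ext x
    simp [Set.mem_smul_set_iff_inv_smul_mem]
  rw [this]
  exact hΛ l⁻¹ hs

lemma meas_st (hX : MeasurableSet X) (hY : MeasurableSet Y)
    (hΓ : ∀ γ : Γ, Measurable fun x : M => γ • x)
    (hΛ : ∀ l : Λ, Measurable fun x : M => l • x) :
    ∀ n : ℕ, (∀ i, MeasurableSet (R k f X Y n i)) ∧ MeasurableSet (S k f X Y n) := by
  intro n
  induction n with
  | zero => exact ⟨fun _ => hY, hX⟩
  | succ n ih =>
    have hP : MeasurableSet (P k f X Y n) :=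
      (ih.1 _).inter (((hΓ (gam k f n)).comp (hΛ (lam k f n))) ih.2)
    constructor
    · intro i
      rw [R_succ]
      split
      · exact (ih.1 _).diff hP
      · exact ih.1 i
    · rw [S_succ]
      exact ih.2.diff
        (smul_set_measurableΓ hΓ _ (smul_set_measurableΛ hΛ _ hP))

lemma meas_P (hX : MeasurableSet X) (hY : MeasurableSet Y)
    (hΓ : ∀ γ : Γ, Measurable fun x : M => γ • x)
    (hΛ : ∀ l : Λ, Measurable fun x : M => l • x) (n : ℕ) :
    MeasurableSet (P k f X Y n) :=
  ((meas_st k f X Y hX hY hΓ hΛ n).1 _).inter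
    (((hΓ (gam k f n)).comp (hΛ (lam k f n))) (meas_st k f X Y hX hY hΓ hΛ n).2)

/-- unordered-pair versions of disjointness -/
lemma Q_disjoint' {n m : ℕ} (h : n ≠ m) : Disjoint (Q k f X Y n) (Q k f X Y m) := by
  rcases h.lt_or_gt with h' | h'
  · exact Q_disjoint k f X Y h'
  · exact (Q_disjoint k f X Y h').symm

lemma P_disjoint' {n m : ℕ} (h : n ≠ m) (hl : lbl k f n = lbl k f m) :
    Disjoint (P k f X Y n) (P k f X Y m) := by
  rcases h.lt_or_gt with h' | h'
  · exact P_disjoint k f X Y h' hl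
  · exact (P_disjoint k f X Y h' hl.symm).symm

lemma P_subset_Y (n : ℕ) : P k f X Y n ⊆ Y :=
  (P_subset k f X Y n).trans (R_subset_Y k f X Y n _)

lemma Q_subset_X (n : ℕ) : Q k f X Y n ⊆ X :=
  (Q_subset k f X Y n).trans (S_subset_X k f X Y n)

end Meas

end PackingAux
open PackingAux in
/-- If `μ (A ∩ X) ≥ k · μ (A ∩ Y)` for every jointly invariant set `A`, then there exist `k`
fundamental domains for `Λ` whose family packs by `Γ`. -/
theorem exists_packing_fundamentalDomains_of_measure_inter_ge
    {M : Type*} [MeasurableSpace M]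
    {Γ : Type*} [Group Γ] [Countable Γ] [MulAction Γ M]
    {Λ : Type*} [Group Λ] [Countable Λ] [MulAction Λ M]
    (hmeasΓ : ∀ γ : Γ, Measurable fun x : M => γ • x)
    (hmeasΛ : ∀ l : Λ, Measurable fun x : M => l • x)
    (μ : Measure M) [SigmaFinite μ]
    [SMulInvariantMeasure Γ M μ] [SMulInvariantMeasure Λ M μ]
    (hcomm : ∀ (γ : Γ) (l : Λ) (x : M), γ • (l • x) = l • (γ • x))
    (X Y : Set M) (hXmeas : MeasurableSet X) (hYmeas : MeasurableSet Y)
    (hX : IsFundamentalDomain Γ X μ) (hY : IsFundamentalDomain Λ Y μ)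
    (hX0 : 0 < μ X) (hXfin : μ X ≠ ⊤) (hY0 : 0 < μ Y) (hYfin : μ Y ≠ ⊤)
    (k : ℕ) (hk : 1 ≤ k)
    (hineq : ∀ A : Set M, MeasurableSet A →
      (∀ γ : Γ, μ (symmDiff (γ • A) A) = 0) →
      (∀ l : Λ, μ (symmDiff (l • A) A) = 0) →
      (k : ℝ≥0∞) * μ (A ∩ Y) ≤ μ (A ∩ X)) :
    ∃ F : Fin k → Set M,
      (∀ i, MeasurableSet (F i)) ∧
      (∀ i, IsFundamentalDomain Λ (F i) μ) ∧
      (∀ (g h : Γ) (i j : Fin k), (g, i) ≠ (h, j) → μ ((g • F i) ∩ (h • F j)) = 0) := by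
  classical
  have hne : Nonempty (Γ × Λ × Fin k) := ⟨(1, 1, ⟨0, hk⟩)⟩
  obtain ⟨f, hf⟩ := exists_surjective_nat (Γ × Λ × Fin k)
  -- commuting of the two actions on sets
  have hsc : ∀ (γ : Γ) (l : Λ) (s : Set M), γ • l • s = l • γ • s := by
    intro γ l s
    ext x
    constructor
    · rintro ⟨y, ⟨z, hz, rfl⟩, rfl⟩
      exact ⟨γ • z, ⟨z, hz, rfl⟩, (hcomm γ l z).symm⟩
    · rintro ⟨y, ⟨z, hz, rfl⟩, rfl⟩
      exact ⟨l • z, ⟨z, hz, rfl⟩, hcomm γ l z⟩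
  have hst := meas_st k f X Y hXmeas hYmeas hmeasΓ hmeasΛ
  have hPm : ∀ n, MeasurableSet (P k f X Y n) := meas_P k f X Y hXmeas hYmeas hmeasΓ hmeasΛ
  set Rinf : Fin k → Set M := fun i => ⋂ n, R k f X Y n i with hRinf
  set Sinf : Set M := ⋂ n, S k f X Y n with hSinf
  have hRim : ∀ i, MeasurableSet (Rinf i) := fun i =>
    MeasurableSet.iInter fun n => (hst n).1 i
  set U : Set M := ⋃ j, Rinf j with hU
  have hUm : MeasurableSet U := MeasurableSet.iUnion fun j => hRim j
  set A : Set M := ⋃ p : Γ × Λ, p.1 • p.2 • U with hA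
  have hAm : MeasurableSet A := MeasurableSet.iUnion fun p =>
    smul_set_measurableΓ hmeasΓ _ (smul_set_measurableΛ hmeasΛ _ hUm)
  have hAsubΓ : ∀ γ : Γ, γ • A ⊆ A := by
    intro γ
    rw [hA, smul_set_iUnion]
    refine iUnion_subset fun p => ?_
    rw [← mul_smul]
    exact subset_iUnion (fun q : Γ × Λ => q.1 • q.2 • U) (γ * p.1, p.2)
  have hAΓ : ∀ γ : Γ, γ • A = A := by
    intro γ
    refine subset_antisymm (hAsubΓ γ) ?_
    have := smul_set_mono (a := γ) (hAsubΓ γ⁻¹)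
    rwa [smul_inv_smul] at this
  have hAsubΛ : ∀ l : Λ, l • A ⊆ A := by
    intro l
    rw [hA, smul_set_iUnion]
    refine iUnion_subset fun p => ?_
    rw [← hsc p.1 l (p.2 • U), ← mul_smul]
    exact subset_iUnion (fun q : Γ × Λ => q.1 • q.2 • U) (p.1, l * p.2)
  have hAΛ : ∀ l : Λ, l • A = A := by
    intro l
    refine subset_antisymm (hAsubΛ l) ?_
    have := smul_set_mono (a := l) (hAsubΛ l⁻¹)
    rwa [smul_inv_smul] at this
  have key : (k : ℝ≥0∞) * μ (A ∩ Y) ≤ μ (A ∩ X) := by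
    refine hineq A hAm (fun γ => ?_) (fun l => ?_)
    · rw [hAΓ γ, symmDiff_self]; simp
    · rw [hAΛ l, symmDiff_self]; simp
  have hAS : ∀ x ∈ A, x ∉ Sinf := by
    intro x hx hxS
    rw [hA, mem_iUnion] at hx
    obtain ⟨p, hx⟩ := hx
    obtain ⟨y, ⟨u, hu, rfl⟩, rfl⟩ := hx
    rw [hU, mem_iUnion] at hu
    obtain ⟨j, huj⟩ := hu
    exact not_mem_Sinf k f X Y hf p.1 p.2 huj hxS
  have hAX_eq : A ∩ X = ⋃ n, A ∩ Q k f X Y n := by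
    have h1 : A ∩ X = A ∩ (X \ Sinf) := by
      ext x
      constructor
      · rintro ⟨hxA, hxX⟩
        exact ⟨hxA, hxX, hAS x hxA⟩
      · rintro ⟨hxA, hxX, -⟩
        exact ⟨hxA, hxX⟩
    rw [h1, hSinf, diff_S_eq, inter_iUnion]
  have hQP : ∀ n, μ (A ∩ Q k f X Y n) = μ (A ∩ P k f X Y n) := by
    intro n
    have h1 : A ∩ Q k f X Y n = gam k f n • lam k f n • (A ∩ P k f X Y n) := by
      show A ∩ gam k f n • lam k f n • P k f X Y n = _
      rw [smul_set_inter (a := lam k f n), hAΛ, smul_set_inter (a := gam k f n), hAΓ]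
    rw [h1, measure_smul, measure_smul]
  have hXsum : μ (A ∩ X) ≤ ∑ i : Fin k, μ (A ∩ (Y \ Rinf i)) := by
    rw [hAX_eq]
    calc μ (⋃ n, A ∩ Q k f X Y n) ≤ ∑' n, μ (A ∩ Q k f X Y n) := measure_iUnion_le _
      _ = ∑' n, μ (A ∩ P k f X Y n) := tsum_congr hQP
      _ = ∑' n, ∑ i : Fin k, (if lbl k f n = i then μ (A ∩ P k f X Y n) else 0) := by
          refine tsum_congr fun n => ?_
          simp
      _ = ∑ i : Fin k, ∑' n, (if lbl k f n = i then μ (A ∩ P k f X Y n) else 0) :=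
          Summable.tsum_finsetSum fun i _ => ENNReal.summable
      _ = ∑ i : Fin k, μ (A ∩ (Y \ Rinf i)) := by
          refine Finset.sum_congr rfl fun i _ => ?_
          have h2 : ∀ n, (if lbl k f n = i then μ (A ∩ P k f X Y n) else 0)
              = μ (if lbl k f n = i then A ∩ P k f X Y n else ∅) := by
            intro n; split <;> simp
          rw [tsum_congr h2,
            ← measure_iUnion (fun n m hnm => ?_) (fun n => ?_)]
          · congr 1
            ext x
            simp only [mem_iUnion]
            constructor
            · rintro ⟨n, hn⟩
              by_cases hl : lbl k f n = i
              · rw [if_pos hl] at hn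
                refine ⟨hn.1, ?_⟩
                show x ∈ Y \ ⋂ n, R k f X Y n i
                rw [diff_R_eq k f X Y i]
                exact mem_iUnion.mpr ⟨n, mem_iUnion.mpr ⟨hl, hn.2⟩⟩
              · rw [if_neg hl] at hn; exact absurd hn (notMem_empty x)
            · rintro ⟨hxA, hxY⟩
              have : x ∈ Y \ ⋂ n, R k f X Y n i := hxY
              rw [diff_R_eq k f X Y i, mem_iUnion] at this
              obtain ⟨n, hn⟩ := this
              rw [mem_iUnion] at hn
              obtain ⟨hl, hp⟩ := hn
              exact ⟨n, by rw [if_pos hl]; exact ⟨hxA, hp⟩⟩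
          · dsimp only [Function.onFun]
            by_cases h1 : lbl k f n = i
            · by_cases h2 : lbl k f m = i
              · rw [if_pos h1, if_pos h2]
                exact (P_disjoint' k f X Y hnm (h1.trans h2.symm)).mono
                  inter_subset_right inter_subset_right
              · rw [if_neg h2]; exact disjoint_bot_right
            · rw [if_neg h1]; exact disjoint_bot_left
          · split
            · exact hAm.inter (hPm n)
            · exact MeasurableSet.empty
  have hYsplit : ∀ i, μ (A ∩ Y) = μ (A ∩ (Y \ Rinf i)) + μ (Rinf i) := by
    intro i
    have hsubA : Rinf i ⊆ A := by
      intro u hu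
      rw [hA, mem_iUnion]
      refine ⟨(1, 1), ?_⟩
      show u ∈ (1 : Γ) • (1 : Λ) • U
      rw [one_smul, one_smul, hU, mem_iUnion]
      exact ⟨i, hu⟩
    have hsubY : Rinf i ⊆ Y := fun u hu => mem_iInter.mp hu 0
    have hdisj : Disjoint (A ∩ (Y \ Rinf i)) (Rinf i) :=
      disjoint_sdiff_self_left.mono_left inter_subset_right
    have hun : A ∩ Y = (A ∩ (Y \ Rinf i)) ∪ Rinf i := by
      ext x
      constructor
      · rintro ⟨hxA, hxY⟩
        by_cases hx : x ∈ Rinf i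
        · exact Or.inr hx
        · exact Or.inl ⟨hxA, hxY, hx⟩
      · rintro (⟨hxA, hxY, -⟩ | hx)
        · exact ⟨hxA, hxY⟩
        · exact ⟨hsubA hx, hsubY hx⟩
    rw [hun, measure_union hdisj (hRim i)]
  have hBfin : (∑ i : Fin k, μ (A ∩ (Y \ Rinf i))) ≠ ⊤ := by
    refine ENNReal.sum_ne_top.mpr fun i _ => ?_
    exact ne_top_of_le_ne_top hYfin (measure_mono (inter_subset_right.trans diff_subset))
  have hkey2 : (∑ i : Fin k, μ (A ∩ (Y \ Rinf i))) + ∑ i : Fin k, μ (Rinf i)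
      ≤ ∑ i : Fin k, μ (A ∩ (Y \ Rinf i)) := by
    rw [← Finset.sum_add_distrib]
    calc ∑ i : Fin k, (μ (A ∩ (Y \ Rinf i)) + μ (Rinf i))
        = ∑ _i : Fin k, μ (A ∩ Y) := Finset.sum_congr rfl fun i _ => (hYsplit i).symm
      _ = (k : ℝ≥0∞) * μ (A ∩ Y) := by
          simp [Finset.sum_const, Finset.card_univ, nsmul_eq_mul]
      _ ≤ μ (A ∩ X) := key
      _ ≤ ∑ i : Fin k, μ (A ∩ (Y \ Rinf i)) := hXsum
  have hsum0 : ∑ i : Fin k, μ (Rinf i) = 0 := by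
    have h : (∑ i : Fin k, μ (Rinf i)) ≤ 0 := by
      rw [← ENNReal.add_le_add_iff_left hBfin, add_zero]
      exact hkey2
    exact le_antisymm h zero_le
  have hRnull : ∀ i, μ (Rinf i) = 0 := by
    intro i
    refine le_antisymm (le_trans ?_ hsum0.le) zero_le
    exact Finset.single_le_sum (f := fun j => μ (Rinf j)) (fun _ _ => zero_le)
      (Finset.mem_univ i)
  -- the fundamental domains
  set E : Fin k → ℕ → Set M := fun i n =>
    if lbl k f n = i then lam k f n • P k f X Y n else ∅ with hE
  have hEm : ∀ i n, MeasurableSet (E i n) := by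
    intro i n
    rw [hE]
    dsimp only
    split
    · exact smul_set_measurableΛ hmeasΛ _ (hPm n)
    · exact MeasurableSet.empty
  have hgen : ∀ s t : ℕ → Set M, (∀ n m, μ (s n ∩ t m) = 0) →
      μ ((⋃ n, s n) ∩ ⋃ m, t m) = 0 := by
    intro s t h
    rw [iUnion_inter]
    refine measure_iUnion_null fun n => ?_
    rw [inter_iUnion]
    exact measure_iUnion_null fun m => h n m
  refine ⟨fun i => ⋃ n, E i n, fun i => MeasurableSet.iUnion fun n => hEm i n, ?_, ?_⟩
  · -- fundamental domain
    intro i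
    refine ⟨(MeasurableSet.iUnion fun n => hEm i n).nullMeasurableSet, ?_, ?_⟩
    · -- covers
      have hbad : μ (⋃ l : Λ, (fun x => l • x) ⁻¹' Rinf i) = 0 :=
        measure_iUnion_null fun l => by
          rw [measure_preimage_smul μ l]; exact hRnull i
      have h1 : ∀ᵐ x ∂μ, x ∉ ⋃ l : Λ, (fun x => l • x) ⁻¹' Rinf i :=
        measure_eq_zero_iff_ae_notMem.mp hbad
      filter_upwards [hY.ae_covers, h1] with x hx hnb
      obtain ⟨l, hl⟩ := hx
      have hnotR : l • x ∉ Rinf i := fun hmem => hnb (mem_iUnion.mpr ⟨l, hmem⟩)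
      have hmem : l • x ∈ ⋃ n, ⋃ (_ : lbl k f n = i), P k f X Y n := by
        rw [← diff_R_eq k f X Y i]
        exact ⟨hl, hnotR⟩
      rw [mem_iUnion] at hmem
      obtain ⟨n, hmem⟩ := hmem
      rw [mem_iUnion] at hmem
      obtain ⟨hln, hp⟩ := hmem
      refine ⟨lam k f n * l, mem_iUnion.mpr ⟨n, ?_⟩⟩
      rw [hE]
      dsimp only
      rw [if_pos hln, mul_smul]
      exact smul_mem_smul_set hp
    · -- aedisjoint over Λ
      intro l l' hll'
      have goal : μ ((l • ⋃ n, E i n) ∩ (l' • ⋃ n, E i n)) = 0 := by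
        rw [smul_set_iUnion, smul_set_iUnion]
        refine hgen _ _ fun n m => ?_
        rw [hE]
        dsimp only
        by_cases h1 : lbl k f n = i
        · by_cases h2 : lbl k f m = i
          · rw [if_pos h1, if_pos h2, ← mul_smul, ← mul_smul]
            by_cases hc : l * lam k f n = l' * lam k f m
            · have hnm : n ≠ m := by
                rintro rfl
                exact hll' (mul_right_cancel hc)
              rw [hc, ← smul_set_inter,
                (P_disjoint' k f X Y hnm (h1.trans h2.symm)).inter_eq]
              simp
            · refine measure_mono_null (inter_subset_inter ?_ ?_) (hY.aedisjoint hc)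
              · exact smul_set_mono (P_subset_Y k f X Y n)
              · exact smul_set_mono (P_subset_Y k f X Y m)
          · rw [if_neg h2]; simp
        · rw [if_neg h1]; simp
      exact goal
  · -- packing by Γ
    intro g h i j hgh
    rw [smul_set_iUnion, smul_set_iUnion]
    refine hgen _ _ fun n m => ?_
    rw [hE]
    dsimp only
    by_cases h1 : lbl k f n = i
    · by_cases h2 : lbl k f m = j
      · rw [if_pos h1, if_pos h2]
        have hQn : g • lam k f n • P k f X Y n = (g * (gam k f n)⁻¹) • Q k f X Y n := by
          show _ = (g * (gam k f n)⁻¹) • gam k f n • lam k f n • P k f X Y n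
          rw [mul_smul, inv_smul_smul]
        have hQm : h • lam k f m • P k f X Y m = (h * (gam k f m)⁻¹) • Q k f X Y m := by
          show _ = (h * (gam k f m)⁻¹) • gam k f m • lam k f m • P k f X Y m
          rw [mul_smul, inv_smul_smul]
        rw [hQn, hQm]
        by_cases hc : g * (gam k f n)⁻¹ = h * (gam k f m)⁻¹
        · have hnm : n ≠ m := by
            rintro rfl
            exact hgh (by rw [mul_right_cancel hc, h1.symm.trans h2])
          rw [hc, ← smul_set_inter, (Q_disjoint' k f X Y hnm).inter_eq]
          simp
        · refine measure_mono_null (inter_subset_inter ?_ ?_) (hX.aedisjoint hc)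
          · exact smul_set_mono (Q_subset_X k f X Y n)
          · exact smul_set_mono (Q_subset_X k f X Y m)
      · rw [if_neg h2]; simp
    · rw [if_neg h1]; simp
end

section
/- Consider two commuting measure-preserving actions of countable discrete groups Γ and Λ on a σ-finite measure space (M, B, m), with fundamental domains X for Γ and Y for Λ, 0 < m(X), m(Y) < ∞. Then there exists a common fundamental domain F (simultaneously a fundamental domain for the Γ-action and for the Λ-action) if and only if m(A ∩ X) = m(A ∩ Y) for every measurable set A invariant under both Γ and Λ. -/
open MeasureTheory Set Pointwise ENNReal

section Aux

/-- Two fundamental domains of the same countable group action give equal measure to every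
set that is a.e.-invariant under the action. -/
theorem fd_inter_eq {M : Type*} [MeasurableSpace M] {G : Type*} [Group G] [Countable G]
    [MulAction G M] [MeasurableSpace G] [MeasurableSMul G M]
    (μ : Measure M) [SMulInvariantMeasure G M μ]
    {s t A : Set M}
    (hs : IsFundamentalDomain G s μ) (ht : IsFundamentalDomain G t μ)
    (hA : ∀ g : G, μ (symmDiff (g • A) A) = 0) :
    μ (A ∩ s) = μ (A ∩ t) := by
  have hA' : ∀ g : G, (g • A : Set M) =ᵐ[μ] A := fun g => by
    rw [← measure_symmDiff_eq_zero_iff]; exact hA g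
  calc μ (A ∩ s) = ∑' g : G, μ (g • (A ∩ s) ∩ t) := ht.measure_eq_tsum _
    _ = ∑' g : G, μ ((A ∩ t) ∩ g • s) := by
        refine tsum_congr fun g => ?_
        rw [smul_set_inter]
        have h1 : (g • A ∩ g • s ∩ t : Set M) =ᵐ[μ] (A ∩ g • s ∩ t : Set M) :=
          ((hA' g).inter (ae_eq_refl _)).inter (ae_eq_refl _)
        rw [measure_congr h1]
        congr 1
        ext x; constructor
        · rintro ⟨⟨h1, h2⟩, h3⟩; exact ⟨⟨h1, h3⟩, h2⟩
        · rintro ⟨⟨h1, h3⟩, h2⟩; exact ⟨⟨h1, h2⟩, h3⟩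
    _ = μ (A ∩ t) := (hs.measure_eq_tsum' _).symm

namespace CommonFD
variable {M : Type*}

/-- One step of the greedy matching: remove the matchable part. -/
def step (T : ℕ → M → M) (n : ℕ) (pq : Set M × Set M) : Set M × Set M :=
  (pq.1 \ (pq.1 ∩ T n ⁻¹' pq.2), pq.2 \ (T n '' (pq.1 ∩ T n ⁻¹' pq.2)))

/-- Remaining (unmatched) parts after `n` steps. -/
def RS (T : ℕ → M → M) (P Q : Set M) : ℕ → Set M × Set M
  | 0 => (P, Q)
  | n + 1 => step T n (RS T P Q n)

/-- The piece matched at step `n`. -/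
def Ap (T : ℕ → M → M) (P Q : Set M) (n : ℕ) : Set M :=
  (RS T P Q n).1 ∩ T n ⁻¹' (RS T P Q n).2

variable {T : ℕ → M → M} {P Q : Set M}

lemma R_succ (n : ℕ) : (RS T P Q (n + 1)).1 = (RS T P Q n).1 \ Ap T P Q n := rfl
lemma S_succ (n : ℕ) : (RS T P Q (n + 1)).2 = (RS T P Q n).2 \ T n '' Ap T P Q n := rfl

lemma Ap_subset_R (n : ℕ) : Ap T P Q n ⊆ (RS T P Q n).1 := inter_subset_left
lemma image_Ap_subset_S (n : ℕ) : T n '' Ap T P Q n ⊆ (RS T P Q n).2 := by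
  rintro _ ⟨x, ⟨-, hx⟩, rfl⟩; exact hx

lemma R_antitone : Antitone fun n => (RS T P Q n).1 :=
  antitone_nat_of_succ_le fun n => by rw [R_succ]; exact diff_subset
lemma S_antitone : Antitone fun n => (RS T P Q n).2 :=
  antitone_nat_of_succ_le fun n => by rw [S_succ]; exact diff_subset

lemma R_subset_P (n : ℕ) : (RS T P Q n).1 ⊆ P := R_antitone (Nat.zero_le n)
lemma S_subset_Q (n : ℕ) : (RS T P Q n).2 ⊆ Q := S_antitone (Nat.zero_le n)

lemma Ap_subset_P (n : ℕ) : Ap T P Q n ⊆ P := (Ap_subset_R n).trans (R_subset_P n)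
lemma image_Ap_subset_Q (n : ℕ) : T n '' Ap T P Q n ⊆ Q :=
  (image_Ap_subset_S n).trans (S_subset_Q n)

lemma Ap_disjoint : Pairwise (Function.onFun Disjoint fun n => Ap T P Q n) := by
  have key : ∀ m n, m < n → Disjoint (Ap T P Q m) (Ap T P Q n) := by
    intro m n hmn
    have h1 : Ap T P Q n ⊆ (RS T P Q (m + 1)).1 :=
      (Ap_subset_R n).trans (R_antitone hmn)
    rw [R_succ] at h1
    exact disjoint_sdiff_self_right.mono_right h1
  intro m n hmn
  rcases hmn.lt_or_gt with h | h
  · exact key m n h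
  · exact (key n m h).symm

lemma image_Ap_disjoint : Pairwise (Function.onFun Disjoint fun n => T n '' Ap T P Q n) := by
  have key : ∀ m n, m < n → Disjoint (T m '' Ap T P Q m) (T n '' Ap T P Q n) := by
    intro m n hmn
    have h1 : T n '' Ap T P Q n ⊆ (RS T P Q (m + 1)).2 :=
      (image_Ap_subset_S n).trans (S_antitone hmn)
    rw [S_succ] at h1
    exact disjoint_sdiff_self_right.mono_right h1
  intro m n hmn
  rcases hmn.lt_or_gt with h | h
  · exact key m n h
  · exact (key n m h).symm

lemma leftover_subset_R (n : ℕ) : P \ (⋃ m, Ap T P Q m) ⊆ (RS T P Q n).1 := by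
  induction n with
  | zero => exact diff_subset
  | succ k ih =>
      rw [R_succ]
      intro x hx
      exact ⟨ih hx, fun hxA => hx.2 (mem_iUnion.2 ⟨k, hxA⟩)⟩

lemma leftover_subset_S (n : ℕ) : Q \ (⋃ m, T m '' Ap T P Q m) ⊆ (RS T P Q n).2 := by
  induction n with
  | zero => exact diff_subset
  | succ k ih =>
      rw [S_succ]
      intro x hx
      exact ⟨ih hx, fun hxA => hx.2 (mem_iUnion.2 ⟨k, hxA⟩)⟩

/-- Maximality: no point of the leftover of `P` is mapped by any `T n` into the leftover
of `Q`. -/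
lemma maximality {x : M} (n : ℕ) (hx : x ∈ P \ ⋃ m, Ap T P Q m)
    (hTx : T n x ∈ Q \ ⋃ m, T m '' Ap T P Q m) : False := by
  have hxR : x ∈ (RS T P Q n).1 := leftover_subset_R n hx
  have hxS : T n x ∈ (RS T P Q n).2 := leftover_subset_S n hTx
  exact hx.2 (mem_iUnion.2 ⟨n, hxR, hxS⟩)

lemma measurable_RS [MeasurableSpace M] (hT : ∀ n, Measurable (T n))
    (hT' : ∀ n (s : Set M), MeasurableSet s → MeasurableSet (T n '' s))
    (hP : MeasurableSet P) (hQ : MeasurableSet Q) (n : ℕ) :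
    MeasurableSet (RS T P Q n).1 ∧ MeasurableSet (RS T P Q n).2 := by
  induction n with
  | zero => exact ⟨hP, hQ⟩
  | succ k ih =>
      have hA : MeasurableSet (Ap T P Q k) := ih.1.inter (hT k ih.2)
      exact ⟨ih.1.diff hA, ih.2.diff (hT' k _ hA)⟩

lemma measurable_Ap [MeasurableSpace M] (hT : ∀ n, Measurable (T n))
    (hT' : ∀ n (s : Set M), MeasurableSet s → MeasurableSet (T n '' s))
    (hP : MeasurableSet P) (hQ : MeasurableSet Q) (n : ℕ) :
    MeasurableSet (Ap T P Q n) :=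
  (measurable_RS hT hT' hP hQ n).1.inter (hT n (measurable_RS hT hT' hP hQ n).2)

end CommonFD

/-- The key cancellation argument: a greedy matching which is maximal relative to an
invariant set `I` leaves a null leftover. -/
lemma null_leftover {M : Type*} [MeasurableSpace M] {μ : Measure M}
    {X Y Pinf Qinf I : Set M} {A B : ℕ → Set M}
    (hAmeas : ∀ n, MeasurableSet (A n)) (hBmeas : ∀ n, MeasurableSet (B n))
    (hAdisj : Pairwise (Function.onFun Disjoint A))
    (hBdisj : Pairwise (Function.onFun Disjoint B))
    (hXeq : X = (⋃ n, A n) ∪ Pinf) (hXdisj : Disjoint (⋃ n, A n) Pinf)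
    (hYeq : Y = (⋃ n, B n) ∪ Qinf)
    (hPmeas : MeasurableSet Pinf) (hImeas : MeasurableSet I)
    (hXfin : μ X ≠ ⊤)
    (hIXY : μ (I ∩ X) = μ (I ∩ Y)) (hPI : Pinf ⊆ I) (hQI : I ∩ Qinf = ∅)
    (hmatch : ∀ n, μ (I ∩ A n) = μ (I ∩ B n)) :
    μ Pinf = 0 := by
  have hIX : I ∩ X = (⋃ n, I ∩ A n) ∪ Pinf := by
    rw [hXeq, inter_union_distrib_left, inter_iUnion, inter_eq_self_of_subset_right hPI]
  have hIY : I ∩ Y = ⋃ n, I ∩ B n := by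
    rw [hYeq, inter_union_distrib_left, inter_iUnion, hQI, union_empty]
  have hdisj : Disjoint (⋃ n, I ∩ A n) Pinf :=
    hXdisj.mono_left (iUnion_mono fun n => inter_subset_right)
  have hAd : Pairwise (Function.onFun Disjoint fun n => I ∩ A n) :=
    hAdisj.mono fun i j h => h.mono inter_subset_right inter_subset_right
  have hBd : Pairwise (Function.onFun Disjoint fun n => I ∩ B n) :=
    hBdisj.mono fun i j h => h.mono inter_subset_right inter_subset_right
  have hsumA : μ (I ∩ X) = (∑' n, μ (I ∩ A n)) + μ Pinf := by
    rw [hIX, measure_union hdisj hPmeas,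
      measure_iUnion hAd fun n => hImeas.inter (hAmeas n)]
  have hsumB : μ (I ∩ Y) = ∑' n, μ (I ∩ B n) := by
    rw [hIY, measure_iUnion hBd fun n => hImeas.inter (hBmeas n)]
  have hfin : (∑' n, μ (I ∩ A n)) ≠ ⊤ := by
    refine ne_top_of_le_ne_top hXfin ?_
    rw [← measure_iUnion hAd fun n => hImeas.inter (hAmeas n)]
    refine measure_mono ?_
    rw [hXeq]
    exact (iUnion_mono fun n => inter_subset_right).trans subset_union_left
  have key : (∑' n, μ (I ∩ A n)) + μ Pinf = (∑' n, μ (I ∩ A n)) + 0 := by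
    rw [add_zero, ← hsumA, hIXY, hsumB]
    exact tsum_congr fun n => (hmatch n).symm
  exact (ENNReal.add_right_inj hfin).mp key

end Aux

/-- Two commuting measure-preserving actions with fundamental domains `X`, `Y` of finite
positive measure have a common fundamental domain iff `μ (A ∩ X) = μ (A ∩ Y)` for every
measurable set `A` invariant under both actions. -/
theorem exists_common_fundamentalDomain_iff
    {M : Type*} [MeasurableSpace M]
    {Γ : Type*} [Group Γ] [Countable Γ] [MulAction Γ M]
    {Λ : Type*} [Group Λ] [Countable Λ] [MulAction Λ M]
    (hmeasΓ : ∀ γ : Γ, Measurable fun x : M => γ • x)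
    (hmeasΛ : ∀ l : Λ, Measurable fun x : M => l • x)
    (μ : Measure M) [SigmaFinite μ]
    [SMulInvariantMeasure Γ M μ] [SMulInvariantMeasure Λ M μ]
    (hcomm : ∀ (γ : Γ) (l : Λ) (x : M), γ • (l • x) = l • (γ • x))
    (X Y : Set M) (hXmeas : MeasurableSet X) (hYmeas : MeasurableSet Y)
    (hX : IsFundamentalDomain Γ X μ) (hY : IsFundamentalDomain Λ Y μ)
    (hX0 : 0 < μ X) (hXfin : μ X ≠ ⊤) (hY0 : 0 < μ Y) (hYfin : μ Y ≠ ⊤) :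
    (∃ F : Set M, MeasurableSet F ∧
        IsFundamentalDomain Γ F μ ∧ IsFundamentalDomain Λ F μ) ↔
      (∀ A : Set M, MeasurableSet A →
        (∀ γ : Γ, μ (symmDiff (γ • A) A) = 0) →
        (∀ l : Λ, μ (symmDiff (l • A) A) = 0) →
        μ (A ∩ X) = μ (A ∩ Y)) := by
  letI : MeasurableSpace Γ := ⊤
  letI : MeasurableSpace Λ := ⊤
  haveI : MeasurableSMul Γ M := @MeasurableSMul.mk _ _ _ _ _ ⟨fun c => hmeasΓ c⟩ (fun _ => measurable_from_top)
  haveI : MeasurableSMul Λ M := @MeasurableSMul.mk _ _ _ _ _ ⟨fun c => hmeasΛ c⟩ (fun _ => measurable_from_top)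
  have hcommS : ∀ (γ : Γ) (l : Λ) (s : Set M), γ • l • s = l • γ • s := by
    intro γ l s; ext x
    simp only [mem_smul_set_iff_inv_smul_mem]
    rw [hcomm γ⁻¹ l⁻¹ x]
  constructor
  · rintro ⟨F, hFmeas, hFΓ, hFΛ⟩ A hAmeas hAΓ hAΛ
    exact (fd_inter_eq μ hX hFΓ hAΓ).trans (fd_inter_eq μ hFΛ hY hAΛ)
  · intro h
    obtain ⟨e, he⟩ := exists_surjective_nat (Γ × Λ)
    set T : ℕ → M → M := fun n x => (e n).2 • (e n).1 • x with hT
    have hTim : ∀ (n : ℕ) (s : Set M), T n '' s = (e n).2 • (e n).1 • s := by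
      intro n s
      rw [← Set.image_smul, ← Set.image_smul, Set.image_image]
    have hTmeas : ∀ n, Measurable (T n) := fun n => (hmeasΛ _).comp (hmeasΓ _)
    have hTmeasSet : ∀ (n : ℕ) (s : Set M), MeasurableSet s → MeasurableSet (T n '' s) := by
      intro n s hs; rw [hTim]; exact (hs.const_smul _).const_smul _
    set Ap : ℕ → Set M := CommonFD.Ap T X Y with hApdef
    have hApmeas : ∀ n, MeasurableSet (Ap n) :=
      CommonFD.measurable_Ap hTmeas hTmeasSet hXmeas hYmeas
    set B : ℕ → Set M := fun n => T n '' Ap n with hBdef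
    have hBmeas : ∀ n, MeasurableSet (B n) := fun n => hTmeasSet n _ (hApmeas n)
    set Pinf : Set M := X \ ⋃ n, Ap n with hPinfdef
    set Qinf : Set M := Y \ ⋃ n, B n with hQinfdef
    have hPinfmeas : MeasurableSet Pinf := hXmeas.diff (MeasurableSet.iUnion hApmeas)
    have hQinfmeas : MeasurableSet Qinf := hYmeas.diff (MeasurableSet.iUnion hBmeas)
    -- saturations
    have satMeas : ∀ Z : Set M, MeasurableSet Z →
        MeasurableSet (⋃ p : Γ × Λ, p.1 • p.2 • Z) :=
      fun Z hZ => MeasurableSet.iUnion fun p => (hZ.const_smul p.2).const_smul p.1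
    have satΓ : ∀ (Z : Set M) (γ : Γ),
        γ • ⋃ p : Γ × Λ, p.1 • p.2 • Z = ⋃ p : Γ × Λ, p.1 • p.2 • Z := by
      intro Z γ
      rw [smul_set_iUnion]
      apply subset_antisymm
      · refine iUnion_subset fun p => ?_
        rw [smul_smul]
        exact subset_iUnion (fun q : Γ × Λ => q.1 • q.2 • Z) (γ * p.1, p.2)
      · refine iUnion_subset fun q => ?_
        have hq : γ • ((γ⁻¹ * q.1) • q.2 • Z) = q.1 • q.2 • Z := by
          rw [smul_smul, mul_inv_cancel_left]
        exact hq ▸ subset_iUnion (fun p : Γ × Λ => γ • (p.1 • p.2 • Z)) (γ⁻¹ * q.1, q.2)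
    have satΛ : ∀ (Z : Set M) (l : Λ),
        l • ⋃ p : Γ × Λ, p.1 • p.2 • Z = ⋃ p : Γ × Λ, p.1 • p.2 • Z := by
      intro Z l
      rw [smul_set_iUnion]
      apply subset_antisymm
      · refine iUnion_subset fun p => ?_
        rw [← hcommS p.1 l (p.2 • Z), smul_smul]
        exact subset_iUnion (fun q : Γ × Λ => q.1 • q.2 • Z) (p.1, l * p.2)
      · refine iUnion_subset fun q => ?_
        have hq : l • ((q.1 : Γ) • (l⁻¹ * q.2) • Z) = q.1 • q.2 • Z := by
          rw [← hcommS q.1 l ((l⁻¹ * q.2) • Z), smul_smul, mul_inv_cancel_left]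
        exact hq ▸ subset_iUnion (fun p : Γ × Λ => l • (p.1 • p.2 • Z)) (q.1, l⁻¹ * q.2)
    have satSub : ∀ Z : Set M, Z ⊆ ⋃ p : Γ × Λ, p.1 • p.2 • Z := by
      intro Z x hx
      refine mem_iUnion.2 ⟨(1, 1), ?_⟩
      simpa only [one_smul] using hx
    have satT : ∀ (Z : Set M) (n : ℕ),
        T n '' (⋃ p : Γ × Λ, p.1 • p.2 • Z) = ⋃ p : Γ × Λ, p.1 • p.2 • Z := by
      intro Z n
      rw [hTim, satΓ Z, satΛ Z]
    have hInvΓ : ∀ (Z : Set M) (γ : Γ),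
        μ (symmDiff (γ • ⋃ p : Γ × Λ, p.1 • p.2 • Z) (⋃ p : Γ × Λ, p.1 • p.2 • Z)) = 0 := by
      intro Z γ
      rw [satΓ Z γ, symmDiff_self]
      simp
    have hInvΛ : ∀ (Z : Set M) (l : Λ),
        μ (symmDiff (l • ⋃ p : Γ × Λ, p.1 • p.2 • Z) (⋃ p : Γ × Λ, p.1 • p.2 • Z)) = 0 := by
      intro Z l
      rw [satΛ Z l, symmDiff_self]
      simp
    -- matched pieces have equal measure relative to T-invariant sets
    have hmatch : ∀ I : Set M, (∀ n, T n '' I = I) → ∀ n, μ (I ∩ Ap n) = μ (I ∩ B n) := by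
      intro I hIT n
      have hinj : Function.Injective (T n) := by
        intro a b hab
        have := congrArg (fun y => (e n).1⁻¹ • (e n).2⁻¹ • y) hab
        simpa [hT, hcomm, inv_smul_smul] using this
      have himg : T n '' (I ∩ Ap n) = I ∩ B n := by
        rw [Set.image_inter hinj, hIT n]
      rw [← himg, hTim]
      rw [measure_smul, measure_smul]
    -- decomposition of X and Y
    have hXsub : (⋃ n, Ap n) ⊆ X := iUnion_subset fun n => CommonFD.Ap_subset_P n
    have hYsub : (⋃ n, B n) ⊆ Y := iUnion_subset fun n => CommonFD.image_Ap_subset_Q n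
    have hXeq : X = (⋃ n, Ap n) ∪ Pinf := (union_diff_cancel hXsub).symm
    have hYeq : Y = (⋃ n, B n) ∪ Qinf := (union_diff_cancel hYsub).symm
    -- leftover of X is null
    have hP0 : μ Pinf = 0 := by
      have hIQ : (⋃ p : Γ × Λ, p.1 • p.2 • Pinf) ∩ Qinf = ∅ := by
        ext x
        simp only [mem_inter_iff, mem_empty_iff_false, iff_false, not_and]
        intro hxI hxQ
        obtain ⟨p, hp⟩ := mem_iUnion.1 hxI
        obtain ⟨z, hz, rfl⟩ := hp
        obtain ⟨w, hw, rfl⟩ := hz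
        obtain ⟨n, hn⟩ := he p
        refine CommonFD.maximality n hw ?_
        have : T n w = p.1 • p.2 • w := by
          simp only [hT, hn, hcomm]
        rw [this]
        exact hxQ
      exact null_leftover hApmeas hBmeas CommonFD.Ap_disjoint CommonFD.image_Ap_disjoint
        hXeq disjoint_sdiff_self_right hYeq hPinfmeas (satMeas _ hPinfmeas) hXfin
        (h _ (satMeas _ hPinfmeas) (hInvΓ Pinf) (hInvΛ Pinf)) (satSub Pinf) hIQ
        (hmatch _ (satT Pinf))
    -- leftover of Y is null
    have hQ0 : μ Qinf = 0 := by
      have hJP : (⋃ p : Γ × Λ, p.1 • p.2 • Qinf) ∩ Pinf = ∅ := by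
        ext x
        simp only [mem_inter_iff, mem_empty_iff_false, iff_false, not_and]
        intro hxJ hxP
        obtain ⟨p, hp⟩ := mem_iUnion.1 hxJ
        obtain ⟨z, hz, rfl⟩ := hp
        obtain ⟨w, hw, rfl⟩ := hz
        obtain ⟨n, hn⟩ := he (p.1⁻¹, p.2⁻¹)
        refine CommonFD.maximality n hxP ?_
        have : T n (p.1 • p.2 • w) = w := by
          simp only [hT, hn, hcomm, inv_smul_smul]
        rw [this]
        exact hw
      exact null_leftover hBmeas hApmeas CommonFD.image_Ap_disjoint CommonFD.Ap_disjoint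
        hYeq disjoint_sdiff_self_right hXeq hQinfmeas (satMeas _ hQinfmeas) hYfin
        ((h _ (satMeas _ hQinfmeas) (hInvΓ Qinf) (hInvΛ Qinf)).symm) (satSub Qinf) hJP
        (fun n => (hmatch _ (satT Qinf) n).symm)
    -- the common fundamental domain
    refine ⟨⋃ n, (e n).1 • Ap n, MeasurableSet.iUnion fun n => (hApmeas n).const_smul _,
      ?_, ?_⟩
    · -- Γ-fundamental domain
      refine ⟨(MeasurableSet.iUnion fun n => (hApmeas n).const_smul _).nullMeasurableSet,
        ?_, ?_⟩
      · have hae : ∀ᵐ x ∂μ, ∀ δ : Γ, δ • x ∉ Pinf := by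
          rw [ae_all_iff]
          intro δ
          have h0 : μ ((δ • ·) ⁻¹' Pinf) = 0 := by
            rw [measure_preimage_smul]; exact hP0
          exact measure_eq_zero_iff_ae_notMem.mp h0
        filter_upwards [hX.ae_covers, hae] with x hx1 hx2
        obtain ⟨δ, hδ⟩ := hx1
        have hmem : δ • x ∈ ⋃ n, Ap n := by
          by_contra hc
          exact hx2 δ ⟨hδ, hc⟩
        obtain ⟨n, hn⟩ := mem_iUnion.1 hmem
        exact ⟨(e n).1 * δ, mem_iUnion.2 ⟨n, by rw [mul_smul]; exact smul_mem_smul_set hn⟩⟩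
      · intro γ γ' hne
        have hexp : ∀ g : Γ, g • (⋃ n, (e n).1 • Ap n) = ⋃ n, (g * (e n).1) • Ap n := by
          intro g; rw [smul_set_iUnion]; simp only [smul_smul]
        have : μ ((γ • ⋃ n, (e n).1 • Ap n) ∩ (γ' • ⋃ n, (e n).1 • Ap n)) = 0 := by
          rw [hexp, hexp, iUnion_inter]
          refine measure_iUnion_null fun n => ?_
          rw [inter_iUnion]
          refine measure_iUnion_null fun m => ?_
          by_cases hg : γ * (e n).1 = γ' * (e m).1
          · have hnm : n ≠ m := by
              rintro rfl
              exact hne (mul_right_cancel hg)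
            rw [hg, ← smul_set_inter,
              Disjoint.inter_eq (CommonFD.Ap_disjoint hnm), smul_set_empty]
            exact measure_empty
          · refine measure_mono_null (inter_subset_inter
              (smul_set_mono (CommonFD.Ap_subset_P n))
              (smul_set_mono (CommonFD.Ap_subset_P m))) (hX.aedisjoint hg)
        exact this
    · -- Λ-fundamental domain
      have hBrep : ∀ n, (e n).1 • Ap n = (e n).2⁻¹ • B n := by
        intro n
        rw [hBdef]
        simp only [hTim, inv_smul_smul]
      refine ⟨(MeasurableSet.iUnion fun n => (hApmeas n).const_smul _).nullMeasurableSet,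
        ?_, ?_⟩
      · have hae : ∀ᵐ x ∂μ, ∀ l : Λ, l • x ∉ Qinf := by
          rw [ae_all_iff]
          intro l
          have h0 : μ ((l • ·) ⁻¹' Qinf) = 0 := by
            rw [measure_preimage_smul]; exact hQ0
          exact measure_eq_zero_iff_ae_notMem.mp h0
        filter_upwards [hY.ae_covers, hae] with x hx1 hx2
        obtain ⟨l, hl⟩ := hx1
        have hmem : l • x ∈ ⋃ n, B n := by
          by_contra hc
          exact hx2 l ⟨hl, hc⟩
        obtain ⟨n, hn⟩ := mem_iUnion.1 hmem
        refine ⟨(e n).2⁻¹ * l, mem_iUnion.2 ⟨n, ?_⟩⟩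
        rw [hBrep n, mul_smul]
        exact smul_mem_smul_set hn
      · intro l l' hne
        have hexp : ∀ g : Λ, g • (⋃ n, (e n).1 • Ap n) = ⋃ n, (g * (e n).2⁻¹) • B n := by
          intro g
          rw [smul_set_iUnion]
          refine iUnion_congr fun n => ?_
          rw [hBrep n, smul_smul]
        have : μ ((l • ⋃ n, (e n).1 • Ap n) ∩ (l' • ⋃ n, (e n).1 • Ap n)) = 0 := by
          rw [hexp, hexp, iUnion_inter]
          refine measure_iUnion_null fun n => ?_
          rw [inter_iUnion]
          refine measure_iUnion_null fun m => ?_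
          by_cases hg : l * (e n).2⁻¹ = l' * (e m).2⁻¹
          · have hnm : n ≠ m := by
              rintro rfl
              exact hne (mul_right_cancel hg)
            rw [hg, ← smul_set_inter,
              Disjoint.inter_eq (CommonFD.image_Ap_disjoint hnm), smul_set_empty]
            exact measure_empty
          · refine measure_mono_null (inter_subset_inter
              (smul_set_mono (CommonFD.image_Ap_subset_Q n))
              (smul_set_mono (CommonFD.image_Ap_subset_Q m))) (hY.aedisjoint hg)
        exact this
end

section
/- Let Γ and Λ be countable discrete groups with commuting measure-preserving actions on (M, B, m), with fundamental domains X for Γ and Y for Λ of finite positive measure. Suppose there exists a measurable function f ≥ 0 on M that tiles by both Γ and Λ, i.e., Σ_{γ∈Γ} f(γ·x) = 1 and Σ_{λ∈Λ} f(x·λ) = 1 for m-almost every x. Then Γ and Λ have a common fundamental domain. -/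
set_option linter.unusedSectionVars false
set_option linter.unusedVariables false
set_option maxHeartbeats 1000000

open MeasureTheory Set Pointwise ENNReal

namespace CFD
section A


variable {Ω : Type*}

/-- Greedy bipartite matching state: `(unmatched left, unmatched right)`. -/
def mstate (X' Y' : Set Ω) (T : ℕ → Equiv.Perm Ω) : ℕ → Set Ω × Set Ω
  | 0 => (Set.univ, Set.univ)
  | n+1 =>
    let p := mstate X' Y' T n
    let A := X' ∩ p.1 ∩ (T n) ⁻¹' (Y' ∩ p.2)
    (p.1 \ A, p.2 \ (T n).symm ⁻¹' A)

/-- Pairs matched at stage `n` (left endpoints). -/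
def mA (X' Y' : Set Ω) (T : ℕ → Equiv.Perm Ω) (n : ℕ) : Set Ω :=
  X' ∩ (mstate X' Y' T n).1 ∩ (T n) ⁻¹' (Y' ∩ (mstate X' Y' T n).2)

/-- Right endpoints matched at stage `n`. -/
def mB (X' Y' : Set Ω) (T : ℕ → Equiv.Perm Ω) (n : ℕ) : Set Ω :=
  (T n).symm ⁻¹' (mA X' Y' T n)

variable (X' Y' : Set Ω) (T : ℕ → Equiv.Perm Ω)

lemma mstate_succ (n : ℕ) :
    mstate X' Y' T (n+1)
      = ((mstate X' Y' T n).1 \ mA X' Y' T n,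
         (mstate X' Y' T n).2 \ mB X' Y' T n) := rfl

lemma mA_subset_left (n : ℕ) : mA X' Y' T n ⊆ (mstate X' Y' T n).1 :=
  fun _ h => h.1.2

lemma mA_subset_X' (n : ℕ) : mA X' Y' T n ⊆ X' := fun _ h => h.1.1

lemma mB_subset_right (n : ℕ) : mB X' Y' T n ⊆ (mstate X' Y' T n).2 := by
  intro ω h
  have h2 : T n ((T n).symm ω) ∈ Y' ∩ (mstate X' Y' T n).2 := h.2
  simpa using h2.2

lemma mB_subset_Y' (n : ℕ) : mB X' Y' T n ⊆ Y' := by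
  intro ω h
  have h2 : T n ((T n).symm ω) ∈ Y' ∩ (mstate X' Y' T n).2 := h.2
  simpa using h2.1

lemma mem_mB (n : ℕ) {ω : Ω} (h : ω ∈ mA X' Y' T n) : T n ω ∈ mB X' Y' T n := by
  simp only [mB, Set.mem_preimage, Equiv.symm_apply_apply]
  exact h

lemma mstate_left_antitone : ∀ {m n : ℕ}, m ≤ n →
    (mstate X' Y' T n).1 ⊆ (mstate X' Y' T m).1 := by
  intro m n h
  induction n with
  | zero => cases Nat.le_zero.mp h; exact fun _ h => h
  | succ k ih =>
    rcases Nat.lt_or_ge m (k+1) with h' | h'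
    · intro ω hω
      exact ih (Nat.lt_succ_iff.mp h') (hω.1)
    · have : m = k + 1 := le_antisymm h h'
      subst this; exact fun _ h => h

lemma mstate_right_antitone : ∀ {m n : ℕ}, m ≤ n →
    (mstate X' Y' T n).2 ⊆ (mstate X' Y' T m).2 := by
  intro m n h
  induction n with
  | zero => cases Nat.le_zero.mp h; exact fun _ h => h
  | succ k ih =>
    rcases Nat.lt_or_ge m (k+1) with h' | h'
    · intro ω hω
      exact ih (Nat.lt_succ_iff.mp h') (hω.1)
    · have : m = k + 1 := le_antisymm h h'
      subst this; exact fun _ h => h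

lemma left_disjoint_mA {m n : ℕ} (h : m < n) :
    ∀ {ω : Ω}, ω ∈ (mstate X' Y' T n).1 → ω ∉ mA X' Y' T m := by
  intro ω hω hA
  have : ω ∈ (mstate X' Y' T (m+1)).1 := mstate_left_antitone X' Y' T h hω
  exact this.2 hA

lemma right_disjoint_mB {m n : ℕ} (h : m < n) :
    ∀ {ω : Ω}, ω ∈ (mstate X' Y' T n).2 → ω ∉ mB X' Y' T m := by
  intro ω hω hB
  have : ω ∈ (mstate X' Y' T (m+1)).2 := mstate_right_antitone X' Y' T h hω
  exact this.2 hB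

lemma mA_disjoint {m n : ℕ} (h : m ≠ n) {ω : Ω}
    (hm : ω ∈ mA X' Y' T m) (hn : ω ∈ mA X' Y' T n) : False := by
  rcases lt_or_gt_of_ne h with h' | h'
  · exact left_disjoint_mA X' Y' T h' (mA_subset_left X' Y' T n hn) hm
  · exact left_disjoint_mA X' Y' T h' (mA_subset_left X' Y' T m hm) hn

lemma mB_disjoint {m n : ℕ} (h : m ≠ n) {ω : Ω}
    (hm : ω ∈ mB X' Y' T m) (hn : ω ∈ mB X' Y' T n) : False := by
  rcases lt_or_gt_of_ne h with h' | h'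
  · exact right_disjoint_mB X' Y' T h' (mB_subset_right X' Y' T n hn) hm
  · exact right_disjoint_mB X' Y' T h' (mB_subset_right X' Y' T m hm) hn

lemma mem_left_of_not_matched {n : ℕ} {ω : Ω} (h : ∀ m, ω ∉ mA X' Y' T m) :
    ω ∈ (mstate X' Y' T n).1 := by
  induction n with
  | zero => trivial
  | succ k ih => exact ⟨ih, h k⟩

lemma mem_right_of_not_matched {n : ℕ} {ω : Ω} (h : ∀ m, ω ∉ mB X' Y' T m) :
    ω ∈ (mstate X' Y' T n).2 := by
  induction n with
  | zero => trivial
  | succ k ih => exact ⟨ih, h k⟩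

/-- Maximality of the greedy matching. -/
lemma greedy_maximal {n : ℕ} {ω : Ω} (hω : ω ∈ X') (hτ : T n ω ∈ Y')
    (h1 : ∀ m, ω ∉ mA X' Y' T m) (h2 : ∀ m, T n ω ∉ mB X' Y' T m) : False := by
  refine h1 n ⟨⟨hω, mem_left_of_not_matched X' Y' T h1⟩, ?_⟩
  exact ⟨hτ, mem_right_of_not_matched X' Y' T h2⟩

variable [MeasurableSpace Ω]

lemma mstate_measurable (hX' : MeasurableSet X') (hY' : MeasurableSet Y')
    (hT : ∀ n, Measurable (T n)) (hT' : ∀ n, Measurable (T n).symm) (n : ℕ) :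
    MeasurableSet (mstate X' Y' T n).1 ∧ MeasurableSet (mstate X' Y' T n).2 := by
  induction n with
  | zero => exact ⟨MeasurableSet.univ, MeasurableSet.univ⟩
  | succ k ih =>
    have hA : MeasurableSet (mA X' Y' T k) :=
      ((hX'.inter ih.1).inter ((hY'.inter ih.2).preimage (hT k)))
    exact ⟨ih.1.diff hA, ih.2.diff (hA.preimage (hT' k))⟩

lemma mA_measurable (hX' : MeasurableSet X') (hY' : MeasurableSet Y')
    (hT : ∀ n, Measurable (T n)) (hT' : ∀ n, Measurable (T n).symm) (n : ℕ) :
    MeasurableSet (mA X' Y' T n) := by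
  obtain ⟨h1, h2⟩ := mstate_measurable X' Y' T hX' hY' hT hT' n
  exact (hX'.inter h1).inter ((hY'.inter h2).preimage (hT n))

lemma mB_measurable (hX' : MeasurableSet X') (hY' : MeasurableSet Y')
    (hT : ∀ n, Measurable (T n)) (hT' : ∀ n, Measurable (T n).symm) (n : ℕ) :
    MeasurableSet (mB X' Y' T n) :=
  (mA_measurable X' Y' T hX' hY' hT hT' n).preimage (hT' n)


end A
section B


/-- The symbolic space recording membership patterns. -/
abbrev Om (Γ Λ : Type*) := Γ × Λ → ℝ≥0∞ × ℝ≥0∞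

variable {M Γ Λ : Type*} [Group Γ] [Group Λ] [MulAction Γ M] [MulAction Λ M]

/-- The marker map. -/
noncomputable def Phi (X Y : Set M) (x : M) : Om Γ Λ := fun p =>
  (X.indicator 1 (p.1 • p.2 • x), Y.indicator 1 (p.1 • p.2 • x))

/-- Left group shift on the symbolic space. -/
def LG (Γ Λ : Type*) [Group Γ] (c : Γ) : Equiv.Perm (Om Γ Λ) where
  toFun ω p := ω (p.1 * c, p.2)
  invFun ω p := ω (p.1 * c⁻¹, p.2)
  left_inv ω := by funext p; simp
  right_inv ω := by funext p; simp

/-- Right group shift on the symbolic space. -/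
def LL (Γ Λ : Type*) [Group Λ] (d : Λ) : Equiv.Perm (Om Γ Λ) where
  toFun ω p := ω (p.1, p.2 * d)
  invFun ω p := ω (p.1, p.2 * d⁻¹)
  left_inv ω := by funext p; simp
  right_inv ω := by funext p; simp

lemma LG_apply (c : Γ) (ω : Om Γ Λ) (p : Γ × Λ) : LG Γ Λ c ω p = ω (p.1 * c, p.2) := rfl
lemma LL_apply (d : Λ) (ω : Om Γ Λ) (p : Γ × Λ) : LL Γ Λ d ω p = ω (p.1, p.2 * d) := rfl

lemma LG_symm (c : Γ) : ((LG Γ Λ c).symm : Om Γ Λ → Om Γ Λ) = LG Γ Λ c⁻¹ := rfl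
lemma LL_symm (d : Λ) : ((LL Γ Λ d).symm : Om Γ Λ → Om Γ Λ) = LL Γ Λ d⁻¹ := rfl

lemma measurable_LG (c : Γ) : Measurable (LG Γ Λ c : Om Γ Λ → Om Γ Λ) :=
  measurable_pi_lambda _ fun p => measurable_pi_apply _

lemma measurable_LL (d : Λ) : Measurable (LL Γ Λ d : Om Γ Λ → Om Γ Λ) :=
  measurable_pi_lambda _ fun p => measurable_pi_apply _

variable {X Y : Set M}

lemma Phi_smul_gamma (hcomm : ∀ (γ : Γ) (l : Λ) (x : M), γ • (l • x) = l • (γ • x))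
    (γ : Γ) (x : M) : Phi X Y (γ • x) = LG Γ Λ γ (Phi X Y x) := by
  funext p
  have key : p.1 • p.2 • γ • x = (p.1 * γ) • p.2 • x := by
    rw [← hcomm γ p.2 x, ← mul_smul]
  simp only [Phi, LG_apply, key]

lemma Phi_smul_lambda (l : Λ) (x : M) : Phi X Y (l • x) = LL Γ Λ l (Phi X Y x) := by
  funext p
  have key : p.1 • p.2 • l • x = p.1 • (p.2 * l) • x := by rw [mul_smul]
  simp only [Phi, LL_apply, key]

/-- Membership test sets on the symbolic space. -/
def XOm (Γ Λ : Type*) [One Γ] [One Λ] : Set (Om Γ Λ) := {ω | (ω (1, 1)).1 = 1}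
def YOm (Γ Λ : Type*) [One Γ] [One Λ] : Set (Om Γ Λ) := {ω | (ω (1, 1)).2 = 1}

lemma mem_XOm_iff (x : M) : Phi X Y x ∈ XOm Γ Λ ↔ x ∈ X := by
  simp only [XOm, Phi, mem_setOf_eq, one_smul]
  by_cases h : x ∈ X <;> simp [h]

lemma mem_YOm_iff (x : M) : Phi X Y x ∈ YOm Γ Λ ↔ x ∈ Y := by
  simp only [YOm, Phi, mem_setOf_eq, one_smul]
  by_cases h : x ∈ Y <;> simp [h]

lemma measurable_XOm : MeasurableSet (XOm Γ Λ) := by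
  have : XOm Γ Λ = (fun ω : Om Γ Λ => (ω (1,1)).1) ⁻¹' {1} := rfl
  rw [this]
  exact ((measurable_pi_apply _).fst)  (measurableSet_singleton _)

lemma measurable_YOm : MeasurableSet (YOm Γ Λ) := by
  have : YOm Γ Λ = (fun ω : Om Γ Λ => (ω (1,1)).2) ⁻¹' {1} := rfl
  rw [this]
  exact ((measurable_pi_apply _).snd)  (measurableSet_singleton _)

variable [MeasurableSpace M]

lemma measurable_Phi (hX : MeasurableSet X) (hY : MeasurableSet Y)
    (hmeasΓ : ∀ γ : Γ, Measurable fun x : M => γ • x)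
    (hmeasΛ : ∀ l : Λ, Measurable fun x : M => l • x) :
    Measurable (Phi X Y : M → Om Γ Λ) := by
  apply measurable_pi_lambda
  intro p
  have hsm : Measurable fun x : M => p.1 • p.2 • x := (hmeasΓ p.1).comp (hmeasΛ p.2)
  exact ((measurable_one.indicator hX).comp hsm).prod
    ((measurable_one.indicator hY).comp hsm)

/-- Equality of two measurable maps into the symbolic space is measurable. -/
lemma measurable_eq_Om [Countable Γ] [Countable Λ] {F G : M → Om Γ Λ}
    (hF : Measurable F) (hG : Measurable G) : MeasurableSet {x | F x = G x} := by
  have : {x | F x = G x}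
      = ⋂ p : Γ × Λ, ({x | (F x p).1 = (G x p).1} ∩ {x | (F x p).2 = (G x p).2}) := by
    ext x
    simp only [mem_setOf_eq, mem_iInter, mem_inter_iff, funext_iff, Prod.ext_iff]
  rw [this]
  refine MeasurableSet.iInter fun p => MeasurableSet.inter ?_ ?_
  · have h1 : Measurable fun x => (F x p).1 := ((measurable_pi_apply p).comp hF).fst
    have h2 : Measurable fun x => (G x p).1 := ((measurable_pi_apply p).comp hG).fst
    have : {x | (F x p).1 = (G x p).1}
        = {x | (F x p).1 ≤ (G x p).1} ∩ {x | (G x p).1 ≤ (F x p).1} := by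
      ext x; simp [le_antisymm_iff]
    rw [this]
    exact (measurableSet_le h1 h2).inter (measurableSet_le h2 h1)
  · have h1 : Measurable fun x => (F x p).2 := ((measurable_pi_apply p).comp hF).snd
    have h2 : Measurable fun x => (G x p).2 := ((measurable_pi_apply p).comp hG).snd
    have : {x | (F x p).2 = (G x p).2}
        = {x | (F x p).2 ≤ (G x p).2} ∩ {x | (G x p).2 ≤ (F x p).2} := by
      ext x; simp [le_antisymm_iff]
    rw [this]
    exact (measurableSet_le h1 h2).inter (measurableSet_le h2 h1)


end B
end CFD


/-- If there is a nonnegative measurable function tiling by both commuting actions, then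
the two groups have a common fundamental domain. -/
theorem exists_common_fundamentalDomain_of_tiling_function
    {M : Type*} [MeasurableSpace M]
    {Γ : Type*} [Group Γ] [Countable Γ] [MulAction Γ M]
    {Λ : Type*} [Group Λ] [Countable Λ] [MulAction Λ M]
    (hmeasΓ : ∀ γ : Γ, Measurable fun x : M => γ • x)
    (hmeasΛ : ∀ l : Λ, Measurable fun x : M => l • x)
    (μ : Measure M) [SigmaFinite μ]
    [SMulInvariantMeasure Γ M μ] [SMulInvariantMeasure Λ M μ]
    (hcomm : ∀ (γ : Γ) (l : Λ) (x : M), γ • (l • x) = l • (γ • x))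
    (X Y : Set M) (hXmeas : MeasurableSet X) (hYmeas : MeasurableSet Y)
    (hX : IsFundamentalDomain Γ X μ) (hY : IsFundamentalDomain Λ Y μ)
    (hX0 : 0 < μ X) (hXfin : μ X ≠ ⊤) (hY0 : 0 < μ Y) (hYfin : μ Y ≠ ⊤)
    (f : M → ℝ≥0∞) (hf : Measurable f)
    (htileΓ : ∀ᵐ x ∂μ, (∑' γ : Γ, f (γ • x)) = 1)
    (htileΛ : ∀ᵐ x ∂μ, (∑' l : Λ, f (l • x)) = 1) :
    ∃ F : Set M, MeasurableSet F ∧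
      IsFundamentalDomain Γ F μ ∧ IsFundamentalDomain Λ F μ := by
  classical
  letI : MeasurableSpace Γ := ⊤
  letI : MeasurableSpace Λ := ⊤
  haveI : MeasurableSMul Γ M :=
    { measurable_const_smul := hmeasΓ, measurable_smul_const := fun _ => measurable_from_top }
  haveI : MeasurableSMul Λ M :=
    { measurable_const_smul := hmeasΛ, measurable_smul_const := fun _ => measurable_from_top }
  obtain ⟨eΓ, heΓ⟩ := exists_surjective_nat Γ
  obtain ⟨eΛ, heΛ⟩ := exists_surjective_nat Λ
  obtain ⟨eG, heG⟩ := exists_surjective_nat (Γ × Λ)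
  -- the pointwise good set
  set E : Set M := {x | (∃! γ : Γ, γ • x ∈ X) ∧ (∃! l : Λ, l • x ∈ Y)} with hE_def
  have hone_measΓ : ∀ (A : Set M), MeasurableSet A →
      MeasurableSet {x : M | ∃! g : Γ, g • x ∈ A} := by
    intro A hA
    have h1 : ∀ g g' : Γ, MeasurableSet {x : M | g' • x ∈ A → g' = g} := by
      intro g g'
      by_cases h : g' = g
      · have : {x : M | g' • x ∈ A → g' = g} = Set.univ := by ext x; simp [h]
        rw [this]; exact MeasurableSet.univ
      · have : {x : M | g' • x ∈ A → g' = g} = {x : M | g' • x ∈ A}ᶜ := by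
          ext x; simp [h]
        rw [this]
        exact (hA.preimage (hmeasΓ g')).compl
    have : {x : M | ∃! g : Γ, g • x ∈ A}
        = ⋃ g : Γ, ({x : M | g • x ∈ A} ∩ ⋂ g' : Γ, {x : M | g' • x ∈ A → g' = g}) := by
      ext x
      simp only [mem_setOf_eq, mem_iUnion, mem_inter_iff, mem_iInter, ExistsUnique]
    rw [this]
    exact MeasurableSet.iUnion fun g =>
      (hA.preimage (hmeasΓ g)).inter (MeasurableSet.iInter fun g' => h1 g g')
  have hone_measΛ : ∀ (A : Set M), MeasurableSet A →
      MeasurableSet {x : M | ∃! g : Λ, g • x ∈ A} := by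
    intro A hA
    have h1 : ∀ g g' : Λ, MeasurableSet {x : M | g' • x ∈ A → g' = g} := by
      intro g g'
      by_cases h : g' = g
      · have : {x : M | g' • x ∈ A → g' = g} = Set.univ := by ext x; simp [h]
        rw [this]; exact MeasurableSet.univ
      · have : {x : M | g' • x ∈ A → g' = g} = {x : M | g' • x ∈ A}ᶜ := by
          ext x; simp [h]
        rw [this]
        exact (hA.preimage (hmeasΛ g')).compl
    have : {x : M | ∃! g : Λ, g • x ∈ A}
        = ⋃ g : Λ, ({x : M | g • x ∈ A} ∩ ⋂ g' : Λ, {x : M | g' • x ∈ A → g' = g}) := by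
      ext x
      simp only [mem_setOf_eq, mem_iUnion, mem_inter_iff, mem_iInter, ExistsUnique]
    rw [this]
    exact MeasurableSet.iUnion fun g =>
      (hA.preimage (hmeasΛ g)).inter (MeasurableSet.iInter fun g' => h1 g g')
  have hEmeas : MeasurableSet E := by
    have h1 : E = {x : M | ∃! γ : Γ, γ • x ∈ X} ∩ {x : M | ∃! l : Λ, l • x ∈ Y} := rfl
    rw [h1]
    exact MeasurableSet.inter (hone_measΓ X hXmeas) (hone_measΛ Y hYmeas)
  have haeUniqueΓ : ∀ᵐ x ∂μ, ∃! g : Γ, g • x ∈ X := by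
    have h2 : ∀ᵐ x ∂μ, ∀ g g' : Γ, g ≠ g' → ¬(g • x ∈ X ∧ g' • x ∈ X) := by
      rw [ae_all_iff]
      intro g
      rw [ae_all_iff]
      intro g'
      by_cases h : g = g'
      · exact Filter.Eventually.of_forall fun x hne => absurd h hne
      · have hd : AEDisjoint μ (g⁻¹ • X) (g'⁻¹ • X) := hX.aedisjoint (by
          simp only [ne_eq, inv_inj]; exact h)
        have hnull : μ {x : M | g • x ∈ X ∧ g' • x ∈ X} = 0 := by
          apply measure_mono_null _ hd
          intro x hx
          constructor
          · rw [← Set.preimage_smul g X]; exact hx.1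
          · rw [← Set.preimage_smul g' X]; exact hx.2
        rw [ae_iff]
        apply measure_mono_null _ hnull
        intro x hx
        simp only [mem_setOf_eq, Classical.not_imp, not_not] at hx
        exact hx.2
    filter_upwards [hX.ae_covers, h2] with x hex hun
    obtain ⟨g, hg⟩ := hex
    refine ⟨g, hg, fun g' hg' => ?_⟩
    by_contra hne
    exact hun g' g hne ⟨hg', hg⟩
  have haeUniqueΛ : ∀ᵐ x ∂μ, ∃! g : Λ, g • x ∈ Y := by
    have h2 : ∀ᵐ x ∂μ, ∀ g g' : Λ, g ≠ g' → ¬(g • x ∈ Y ∧ g' • x ∈ Y) := by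
      rw [ae_all_iff]
      intro g
      rw [ae_all_iff]
      intro g'
      by_cases h : g = g'
      · exact Filter.Eventually.of_forall fun x hne => absurd h hne
      · have hd : AEDisjoint μ (g⁻¹ • Y) (g'⁻¹ • Y) := hY.aedisjoint (by
          simp only [ne_eq, inv_inj]; exact h)
        have hnull : μ {x : M | g • x ∈ Y ∧ g' • x ∈ Y} = 0 := by
          apply measure_mono_null _ hd
          intro x hx
          constructor
          · rw [← Set.preimage_smul g Y]; exact hx.1
          · rw [← Set.preimage_smul g' Y]; exact hx.2
        rw [ae_iff]
        apply measure_mono_null _ hnull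
        intro x hx
        simp only [mem_setOf_eq, Classical.not_imp, not_not] at hx
        exact hx.2
    filter_upwards [hY.ae_covers, h2] with x hex hun
    obtain ⟨g, hg⟩ := hex
    refine ⟨g, hg, fun g' hg' => ?_⟩
    by_contra hne
    exact hun g' g hne ⟨hg', hg⟩
  have hEconull : μ Eᶜ = 0 := by
    have : ∀ᵐ x ∂μ, x ∈ E := by
      filter_upwards [haeUniqueΓ, haeUniqueΛ] with x hx1 hx2
      exact ⟨hx1, hx2⟩
    rwa [ae_iff] at this
  -- rearrangement lemmas
  have hmoveΓ : ∀ (c : Γ) (d : Λ) (γ : Γ) (x : M), c • d • γ • x = (c * γ) • d • x := by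
    intro c d γ x
    rw [← hcomm γ d x, ← mul_smul]
  have hmoveΛ : ∀ (c : Γ) (d : Λ) (l : Λ) (x : M), c • d • l • x = c • (d * l) • x := by
    intro c d l x
    rw [mul_smul]
  -- the invariant conull set M₀
  set M₀ : Set M := ⋂ g : Γ × Λ, (fun x : M => g.1 • g.2 • x) ⁻¹' E with hM0_def
  have hM0meas : MeasurableSet M₀ :=
    MeasurableSet.iInter fun g => hEmeas.preimage ((hmeasΓ g.1).comp (hmeasΛ g.2))
  have hM0conull : μ M₀ᶜ = 0 := by
    rw [hM0_def, Set.compl_iInter]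
    apply measure_iUnion_null
    intro g
    have h1 : ((fun x : M => g.1 • g.2 • x) ⁻¹' E)ᶜ
        = (fun x : M => g.2 • x) ⁻¹' ((fun x : M => g.1 • x) ⁻¹' Eᶜ) := rfl
    rw [h1, measure_preimage_smul μ g.2, measure_preimage_smul μ g.1]
    exact hEconull
  have hM0_E : ∀ x ∈ M₀, x ∈ E := by
    intro x hx
    have := Set.mem_iInter.mp hx ((1 : Γ), (1 : Λ))
    simpa using this
  have hM0_smulΓ : ∀ (γ : Γ) (x : M), x ∈ M₀ → γ • x ∈ M₀ := by
    intro γ x hx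
    rw [hM0_def, Set.mem_iInter]
    intro g
    have : g.1 • g.2 • γ • x = (g.1 * γ) • g.2 • x := hmoveΓ g.1 g.2 γ x
    simp only [Set.mem_preimage, this]
    exact Set.mem_iInter.mp hx ((g.1 * γ), g.2)
  have hM0_smulΛ : ∀ (l : Λ) (x : M), x ∈ M₀ → l • x ∈ M₀ := by
    intro l x hx
    rw [hM0_def, Set.mem_iInter]
    intro g
    have : g.1 • g.2 • l • x = g.1 • (g.2 * l) • x := hmoveΛ g.1 g.2 l x
    simp only [Set.mem_preimage, this]
    exact Set.mem_iInter.mp hx (g.1, g.2 * l)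
  -- toolkit
  have hXuniq : ∀ x ∈ M₀, ∀ γ γ' : Γ, γ • x ∈ X → γ' • x ∈ X → γ = γ' := by
    intro x hx γ γ' h1 h2
    obtain ⟨γ₀, _, hu⟩ := (hM0_E x hx).1
    exact (hu γ h1).trans (hu γ' h2).symm
  have hYuniq : ∀ x ∈ M₀, ∀ l l' : Λ, l • x ∈ Y → l' • x ∈ Y → l = l' := by
    intro x hx l l' h1 h2
    obtain ⟨l₀, _, hu⟩ := (hM0_E x hx).2
    exact (hu l h1).trans (hu l' h2).symm
  have hXex : ∀ x ∈ M₀, ∃ γ : Γ, γ • x ∈ X := fun x hx => (hM0_E x hx).1.exists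
  have hYex : ∀ x ∈ M₀, ∃ l : Λ, l • x ∈ Y := fun x hx => (hM0_E x hx).2.exists
  have hfreeΓ : ∀ x ∈ M₀, ∀ γ : Γ, γ • x = x → γ = 1 := by
    intro x hx γ h
    obtain ⟨γ₀, hγ₀⟩ := hXex x hx
    have h1 : (γ₀ * γ) • x ∈ X := by rw [mul_smul, h]; exact hγ₀
    have := hXuniq x hx (γ₀ * γ) γ₀ h1 hγ₀
    calc γ = γ₀⁻¹ * (γ₀ * γ) := by group
    _ = γ₀⁻¹ * γ₀ := by rw [this]
    _ = 1 := by group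
  have hfreeΛ : ∀ x ∈ M₀, ∀ l : Λ, l • x = x → l = 1 := by
    intro x hx l h
    obtain ⟨l₀, hl₀⟩ := hYex x hx
    have h1 : (l₀ * l) • x ∈ Y := by rw [mul_smul, h]; exact hl₀
    have := hYuniq x hx (l₀ * l) l₀ h1 hl₀
    calc l = l₀⁻¹ * (l₀ * l) := by group
    _ = l₀⁻¹ * l₀ := by rw [this]
    _ = 1 := by group
  -- Part B : symbolic space machinery
  set Φ : M → CFD.Om Γ Λ := CFD.Phi X Y with hΦdef
  have hΦmeas : Measurable Φ := CFD.measurable_Phi hXmeas hYmeas hmeasΓ hmeasΛ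
  have hΦΓ : ∀ (γ : Γ) (x : M), Φ (γ • x) = CFD.LG Γ Λ γ (Φ x) := fun γ x =>
    CFD.Phi_smul_gamma hcomm γ x
  have hΦΛ : ∀ (l : Λ) (x : M), Φ (l • x) = CFD.LL Γ Λ l (Φ x) := fun l x =>
    CFD.Phi_smul_lambda l x
  have hΦX : ∀ x : M, Φ x ∈ CFD.XOm Γ Λ ↔ x ∈ X := fun x => CFD.mem_XOm_iff x
  have hΦY : ∀ x : M, Φ x ∈ CFD.YOm Γ Λ ↔ x ∈ Y := fun x => CFD.mem_YOm_iff x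
  set T : ℕ → Equiv.Perm (CFD.Om Γ Λ) :=
    fun n => (CFD.LL Γ Λ (eG n).2).trans (CFD.LG Γ Λ (eG n).1) with hTdef
  have hTΦ : ∀ (n : ℕ) (x : M), T n (Φ x) = Φ ((eG n).1 • (eG n).2 • x) := by
    intro n x
    rw [hΦΓ, hΦΛ]
    rfl
  have hTmeas : ∀ n, Measurable (T n : CFD.Om Γ Λ → CFD.Om Γ Λ) := by
    intro n
    have h1 : (T n : CFD.Om Γ Λ → CFD.Om Γ Λ)
        = fun ω => CFD.LG Γ Λ (eG n).1 (CFD.LL Γ Λ (eG n).2 ω) := rfl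
    rw [h1]; exact (CFD.measurable_LG _).comp (CFD.measurable_LL _)
  have hTsymm_meas : ∀ n, Measurable ((T n).symm : CFD.Om Γ Λ → CFD.Om Γ Λ) := by
    intro n
    have h1 : ((T n).symm : CFD.Om Γ Λ → CFD.Om Γ Λ)
        = fun ω => CFD.LL Γ Λ (eG n).2⁻¹ (CFD.LG Γ Λ (eG n).1⁻¹ ω) := rfl
    rw [h1]; exact (CFD.measurable_LL _).comp (CFD.measurable_LG _)
  set A : ℕ → Set (CFD.Om Γ Λ) := CFD.mA (CFD.XOm Γ Λ) (CFD.YOm Γ Λ) T with hAdef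
  set B : ℕ → Set (CFD.Om Γ Λ) := CFD.mB (CFD.XOm Γ Λ) (CFD.YOm Γ Λ) T with hBdef
  have hAmeas : ∀ n, MeasurableSet (A n) := fun n =>
    CFD.mA_measurable _ _ T CFD.measurable_XOm CFD.measurable_YOm hTmeas hTsymm_meas n
  have hBmeas : ∀ n, MeasurableSet (B n) := fun n =>
    CFD.mB_measurable _ _ T CFD.measurable_XOm CFD.measurable_YOm hTmeas hTsymm_meas n
  have hA_sub_X : ∀ n, A n ⊆ CFD.XOm Γ Λ := fun n => CFD.mA_subset_X' _ _ T n
  have hB_sub_Y : ∀ n, B n ⊆ CFD.YOm Γ Λ := fun n => CFD.mB_subset_Y' _ _ T n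
  have hAB : ∀ (n : ℕ) (ω), ω ∈ A n → T n ω ∈ B n := fun n ω h => CFD.mem_mB _ _ T n h
  have hBA : ∀ (n : ℕ) (ω), ω ∈ B n → (T n).symm ω ∈ A n := fun n ω h => h
  have hAdisj : ∀ {m n : ℕ}, m ≠ n → ∀ {ω}, ω ∈ A m → ω ∈ A n → False := by
    intro m n hmn ω hm hn
    exact CFD.mA_disjoint _ _ T hmn hm hn
  have hBdisj : ∀ {m n : ℕ}, m ≠ n → ∀ {ω}, ω ∈ B m → ω ∈ B n → False := by
    intro m n hmn ω hm hn
    exact CFD.mB_disjoint _ _ T hmn hm hn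
  -- unmatched patterns
  set UX : Set (CFD.Om Γ Λ) := CFD.XOm Γ Λ \ ⋃ n, A n with hUXdef
  set UY : Set (CFD.Om Γ Λ) := CFD.YOm Γ Λ \ ⋃ n, B n with hUYdef
  have hUXmeas : MeasurableSet UX := CFD.measurable_XOm.diff (MeasurableSet.iUnion hAmeas)
  have hUYmeas : MeasurableSet UY := CFD.measurable_YOm.diff (MeasurableSet.iUnion hBmeas)
  -- unmatched points
  set coreX : Set M := X ∩ M₀ ∩ Φ ⁻¹' UX with hcoreXdef
  set coreY : Set M := Y ∩ M₀ ∩ Φ ⁻¹' UY with hcoreYdef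
  have hcoreXmeas : MeasurableSet coreX := (hXmeas.inter hM0meas).inter (hUXmeas.preimage hΦmeas)
  have hcoreYmeas : MeasurableSet coreY := (hYmeas.inter hM0meas).inter (hUYmeas.preimage hΦmeas)
  -- saturations
  have hsatmeas : ∀ S : Set M, MeasurableSet S →
      MeasurableSet (⋃ g : Γ × Λ, (fun x : M => g.1 • g.2 • x) ⁻¹' S) := fun S hS =>
    MeasurableSet.iUnion fun g => hS.preimage ((hmeasΓ g.1).comp (hmeasΛ g.2))
  have hsatnull : ∀ S : Set M, μ S = 0 →
      μ (⋃ g : Γ × Λ, (fun x : M => g.1 • g.2 • x) ⁻¹' S) = 0 := by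
    intro S hS
    apply measure_iUnion_null
    intro g
    have h1 : (fun x : M => g.1 • g.2 • x) ⁻¹' S
        = (fun x : M => g.2 • x) ⁻¹' ((fun x : M => g.1 • x) ⁻¹' S) := rfl
    rw [h1]
    rw [measure_preimage_smul μ g.2, measure_preimage_smul μ g.1]
    exact hS
  have hsatsub : ∀ S : Set M, S ⊆ ⋃ g : Γ × Λ, (fun x : M => g.1 • g.2 • x) ⁻¹' S := by
    intro S x hx
    refine Set.mem_iUnion.mpr ⟨(1, 1), ?_⟩
    simpa using hx
  have hsatinvΓ : ∀ (S : Set M) (γ : Γ) (x : M),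
      (γ • x ∈ ⋃ g : Γ × Λ, (fun x : M => g.1 • g.2 • x) ⁻¹' S)
        ↔ x ∈ ⋃ g : Γ × Λ, (fun x : M => g.1 • g.2 • x) ⁻¹' S := by
    intro S γ x
    constructor
    · rintro h
      obtain ⟨g, hg⟩ := Set.mem_iUnion.mp h
      refine Set.mem_iUnion.mpr ⟨(g.1 * γ, g.2), ?_⟩
      simp only [Set.mem_preimage] at hg ⊢
      rwa [← hmoveΓ g.1 g.2 γ x]
    · rintro h
      obtain ⟨g, hg⟩ := Set.mem_iUnion.mp h
      refine Set.mem_iUnion.mpr ⟨(g.1 * γ⁻¹, g.2), ?_⟩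
      simp only [Set.mem_preimage] at hg ⊢
      rw [hmoveΓ (g.1 * γ⁻¹) g.2 γ x, inv_mul_cancel_right]
      exact hg
  have hsatinvΛ : ∀ (S : Set M) (l : Λ) (x : M),
      (l • x ∈ ⋃ g : Γ × Λ, (fun x : M => g.1 • g.2 • x) ⁻¹' S)
        ↔ x ∈ ⋃ g : Γ × Λ, (fun x : M => g.1 • g.2 • x) ⁻¹' S := by
    intro S l x
    constructor
    · rintro h
      obtain ⟨g, hg⟩ := Set.mem_iUnion.mp h
      refine Set.mem_iUnion.mpr ⟨(g.1, g.2 * l), ?_⟩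
      simp only [Set.mem_preimage] at hg ⊢
      rwa [← hmoveΛ g.1 g.2 l x]
    · rintro h
      obtain ⟨g, hg⟩ := Set.mem_iUnion.mp h
      refine Set.mem_iUnion.mpr ⟨(g.1, g.2 * l⁻¹), ?_⟩
      simp only [Set.mem_preimage] at hg ⊢
      rw [hmoveΛ g.1 (g.2 * l⁻¹) l x, inv_mul_cancel_right]
      exact hg
  -- the key measure identity:  μ (W ∩ X) = ∫_W f = μ (W ∩ Y)  for invariant W
  have hWXint : ∀ W : Set M, MeasurableSet W →
      (∀ (γ : Γ) (x : M), γ • x ∈ W ↔ x ∈ W) →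
      ∫⁻ x, W.indicator f x ∂μ = μ (W ∩ X) := by
    intro W hW hWΓ
    rw [hX.lintegral_eq_tsum'' (W.indicator f)]
    have step1 : ∀ (γ : Γ) (x : M), W.indicator f (γ • x)
        = W.indicator (fun y => f (γ • y)) x := by
      intro γ x
      by_cases hx : x ∈ W
      · rw [Set.indicator_of_mem ((hWΓ γ x).mpr hx) f, Set.indicator_of_mem hx]
      · rw [Set.indicator_of_notMem (fun h => hx ((hWΓ γ x).mp h)) f,
          Set.indicator_of_notMem hx]
    calc ∑' γ : Γ, ∫⁻ x in X, W.indicator f (γ • x) ∂μ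
        = ∑' γ : Γ, ∫⁻ x in X, W.indicator (fun y => f (γ • y)) x ∂μ := by
          simp only [step1]
      _ = ∫⁻ x in X, ∑' γ : Γ, W.indicator (fun y => f (γ • y)) x ∂μ :=
          (lintegral_tsum fun γ => ((hf.comp (hmeasΓ γ)).indicator hW).aemeasurable).symm
      _ = ∫⁻ x in X, W.indicator (fun y => ∑' γ : Γ, f (γ • y)) x ∂μ := by
          apply lintegral_congr
          intro x
          by_cases hx : x ∈ W
          · simp only [Set.indicator_of_mem hx]
          · simp only [Set.indicator_of_notMem hx, tsum_zero]
      _ = ∫⁻ x in X, W.indicator (fun _ => (1 : ℝ≥0∞)) x ∂μ := by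
          apply lintegral_congr_ae
          filter_upwards [ae_restrict_of_ae htileΓ] with x hx
          by_cases hxW : x ∈ W
          · simp only [Set.indicator_of_mem hxW]; exact hx
          · simp only [Set.indicator_of_notMem hxW]
      _ = μ (W ∩ X) := by
          rw [show (W.indicator (fun _ => (1 : ℝ≥0∞))) = W.indicator 1 from rfl,
            lintegral_indicator_one hW, Measure.restrict_apply hW]
  have hWYint : ∀ W : Set M, MeasurableSet W →
      (∀ (l : Λ) (x : M), l • x ∈ W ↔ x ∈ W) →
      ∫⁻ x, W.indicator f x ∂μ = μ (W ∩ Y) := by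
    intro W hW hWΛ
    rw [hY.lintegral_eq_tsum'' (W.indicator f)]
    have step1 : ∀ (l : Λ) (x : M), W.indicator f (l • x)
        = W.indicator (fun y => f (l • y)) x := by
      intro l x
      by_cases hx : x ∈ W
      · rw [Set.indicator_of_mem ((hWΛ l x).mpr hx) f, Set.indicator_of_mem hx]
      · rw [Set.indicator_of_notMem (fun h => hx ((hWΛ l x).mp h)) f,
          Set.indicator_of_notMem hx]
    calc ∑' l : Λ, ∫⁻ x in Y, W.indicator f (l • x) ∂μ
        = ∑' l : Λ, ∫⁻ x in Y, W.indicator (fun y => f (l • y)) x ∂μ := by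
          simp only [step1]
      _ = ∫⁻ x in Y, ∑' l : Λ, W.indicator (fun y => f (l • y)) x ∂μ :=
          (lintegral_tsum fun l => ((hf.comp (hmeasΛ l)).indicator hW).aemeasurable).symm
      _ = ∫⁻ x in Y, W.indicator (fun y => ∑' l : Λ, f (l • y)) x ∂μ := by
          apply lintegral_congr
          intro x
          by_cases hx : x ∈ W
          · simp only [Set.indicator_of_mem hx]
          · simp only [Set.indicator_of_notMem hx, tsum_zero]
      _ = ∫⁻ x in Y, W.indicator (fun _ => (1 : ℝ≥0∞)) x ∂μ := by
          apply lintegral_congr_ae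
          filter_upwards [ae_restrict_of_ae htileΛ] with x hx
          by_cases hxW : x ∈ W
          · simp only [Set.indicator_of_mem hxW]; exact hx
          · simp only [Set.indicator_of_notMem hxW]
      _ = μ (W ∩ Y) := by
          rw [show (W.indicator (fun _ => (1 : ℝ≥0∞))) = W.indicator 1 from rfl,
            lintegral_indicator_one hW, Measure.restrict_apply hW]
  have hWeq : ∀ W : Set M, MeasurableSet W →
      (∀ (γ : Γ) (x : M), γ • x ∈ W ↔ x ∈ W) →
      (∀ (l : Λ) (x : M), l • x ∈ W ↔ x ∈ W) →
      μ (W ∩ X) = μ (W ∩ Y) := fun W hW h1 h2 =>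
    (hWXint W hW h1).symm.trans (hWYint W hW h2)
  -- smul set helpers
  have hsmulΓ_meas : ∀ (c : Γ) (S : Set M), MeasurableSet S → MeasurableSet (c • S) := by
    intro c S hS
    have h1 : c • S = (fun x : M => c⁻¹ • x) ⁻¹' S := by
      rw [Set.preimage_smul c⁻¹ S, inv_inv]
    rw [h1]; exact hS.preimage (hmeasΓ c⁻¹)
  have hsmulΛ_meas : ∀ (d : Λ) (S : Set M), MeasurableSet S → MeasurableSet (d • S) := by
    intro d S hS
    have h1 : d • S = (fun x : M => d⁻¹ • x) ⁻¹' S := by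
      rw [Set.preimage_smul d⁻¹ S, inv_inv]
    rw [h1]; exact hS.preimage (hmeasΛ d⁻¹)
  -- null lemma for unmatched Y points
  have hcoreYnull : μ coreY = 0 := by
    set W : Set M := ⋃ g : Γ × Λ, (fun x : M => g.1 • g.2 • x) ⁻¹' coreY with hWdef
    have hWmeas : MeasurableSet W := hsatmeas coreY hcoreYmeas
    have hWΓ : ∀ (γ : Γ) (x : M), γ • x ∈ W ↔ x ∈ W := fun γ x => hsatinvΓ coreY γ x
    have hWΛ : ∀ (l : Λ) (x : M), l • x ∈ W ↔ x ∈ W := fun l x => hsatinvΛ coreY l x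
    set PX : ℕ → Set M := fun n => W ∩ X ∩ M₀ ∩ Φ ⁻¹' (A n) with hPXdef
    have hPXmeas : ∀ n, MeasurableSet (PX n) :=
      fun n => (((hWmeas.inter hXmeas).inter hM0meas)).inter ((hAmeas n).preimage hΦmeas)
    have hPXcover : W ∩ X ∩ M₀ ⊆ ⋃ n, PX n := by
      rintro x ⟨⟨hxW, hxX⟩, hxM0⟩
      by_contra hnc
      have hunm : ∀ n, Φ x ∉ A n := by
        intro n hn
        exact hnc (Set.mem_iUnion.mpr ⟨n, ⟨⟨hxW, hxX⟩, hxM0⟩, hn⟩)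
      obtain ⟨g, hg⟩ := Set.mem_iUnion.mp hxW
      simp only [Set.mem_preimage] at hg
      obtain ⟨n₀, hn₀⟩ := heG g
      have hτ : T n₀ (Φ x) = Φ (g.1 • g.2 • x) := by rw [hTΦ, hn₀]
      have hΦxX : Φ x ∈ CFD.XOm Γ Λ := (hΦX x).mpr hxX
      have hτY : T n₀ (Φ x) ∈ CFD.YOm Γ Λ := by
        rw [hτ]; exact (hΦY _).mpr hg.1.1
      have hτun : ∀ m, T n₀ (Φ x) ∉ B m := by
        intro m hm
        rw [hτ] at hm
        exact hg.2.2 (Set.mem_iUnion.mpr ⟨m, hm⟩)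
      exact CFD.greedy_maximal _ _ T hΦxX hτY hunm hτun
    set Q : ℕ → Set M := fun n => (eG n).1 • ((eG n).2 • PX n) with hQdef
    have hQmeas : ∀ n, MeasurableSet (Q n) :=
      fun n => hsmulΓ_meas _ _ (hsmulΛ_meas _ _ (hPXmeas n))
    have hQμ : ∀ n, μ (Q n) = μ (PX n) := by
      intro n
      rw [hQdef]
      rw [measure_smul μ (eG n).1, measure_smul μ (eG n).2]
    have hQelim : ∀ n y, y ∈ Q n → ∃ x ∈ PX n, (eG n).1 • (eG n).2 • x = y := by
      intro n y hy
      rw [hQdef] at hy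
      obtain ⟨z, hz, rfl⟩ := hy
      obtain ⟨x, hx, rfl⟩ := hz
      exact ⟨x, hx, rfl⟩
    have hQsub : ∀ n, Q n ⊆ (W ∩ Y) ∩ Φ ⁻¹' (B n) := by
      intro n y hy
      obtain ⟨x, hx, rfl⟩ := hQelim n y hy
      have hxA : Φ x ∈ A n := hx.2
      have hyB : Φ ((eG n).1 • (eG n).2 • x) ∈ B n := by
        rw [← hTΦ]; exact hAB n _ hxA
      refine ⟨⟨?_, ?_⟩, hyB⟩
      · exact (hWΓ _ _).mpr ((hWΛ _ _).mpr hx.1.1.1)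
      · exact (hΦY _).mp (hB_sub_Y n hyB)
    have hQdisj : Pairwise (Function.onFun Disjoint Q) := by
      intro m n hmn
      rw [Function.onFun, Set.disjoint_left]
      intro y hym hyn
      exact hBdisj hmn ((hQsub m hym).2) ((hQsub n hyn).2)
    have hQcore : ∀ n, Disjoint coreY (Q n) := by
      intro n
      rw [Set.disjoint_left]
      intro y hyc hyq
      exact hyc.2.2 (Set.mem_iUnion.mpr ⟨n, (hQsub n hyq).2⟩)
    have hPXdisj : Pairwise (Function.onFun Disjoint PX) := by
      intro m n hmn
      rw [Function.onFun, Set.disjoint_left]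
      intro x hxm hxn
      exact hAdisj hmn hxm.2 hxn.2
    have hXW1 : μ (W ∩ X) ≤ μ (⋃ n, PX n) := by
      have h1 : W ∩ X ⊆ (⋃ n, PX n) ∪ M₀ᶜ := by
        intro x hx
        by_cases hxM : x ∈ M₀
        · exact Or.inl (hPXcover ⟨hx, hxM⟩)
        · exact Or.inr hxM
      calc μ (W ∩ X) ≤ μ ((⋃ n, PX n) ∪ M₀ᶜ) := measure_mono h1
        _ ≤ μ (⋃ n, PX n) + μ M₀ᶜ := measure_union_le _ _
        _ = μ (⋃ n, PX n) := by rw [hM0conull, add_zero]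
    have hsum1 : μ (⋃ n, PX n) = ∑' n, μ (PX n) := measure_iUnion hPXdisj hPXmeas
    have hsum2 : μ (⋃ n, Q n) = ∑' n, μ (Q n) := measure_iUnion hQdisj hQmeas
    have hQtot : μ (⋃ n, Q n) = ∑' n, μ (PX n) := by
      rw [hsum2]; exact tsum_congr hQμ
    have hfinal : μ coreY + μ (W ∩ X) ≤ μ (W ∩ Y) := by
      have hsubY : coreY ∪ ⋃ n, Q n ⊆ W ∩ Y := by
        rintro y (hy | hy)
        · exact ⟨hsatsub coreY hy, hy.1.1⟩
        · obtain ⟨n, hn⟩ := Set.mem_iUnion.mp hy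
          exact ⟨(hQsub n hn).1.1, (hQsub n hn).1.2⟩
      have hdisj : Disjoint coreY (⋃ n, Q n) := Set.disjoint_iUnion_right.mpr hQcore
      calc μ coreY + μ (W ∩ X) ≤ μ coreY + μ (⋃ n, Q n) := by
            exact add_le_add le_rfl (hXW1.trans (le_of_eq (hsum1.trans hQtot.symm)))
        _ = μ (coreY ∪ ⋃ n, Q n) := (measure_union hdisj (MeasurableSet.iUnion hQmeas)).symm
        _ ≤ μ (W ∩ Y) := measure_mono hsubY
    have heq := hWeq W hWmeas hWΓ hWΛ
    have hfin : μ (W ∩ X) ≠ ⊤ :=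
      fun h => hXfin (top_le_iff.mp (h ▸ measure_mono Set.inter_subset_right))
    rw [← heq] at hfinal
    have h2 : μ coreY + μ (W ∩ X) ≤ 0 + μ (W ∩ X) := by rwa [zero_add]
    have h3 := (ENNReal.add_le_add_iff_right hfin).mp h2
    exact le_antisymm h3 (by simp)
  -- null lemma for unmatched X points
  have hcoreXnull : μ coreX = 0 := by
    set W : Set M := ⋃ g : Γ × Λ, (fun x : M => g.1 • g.2 • x) ⁻¹' coreX with hWdef
    have hWmeas : MeasurableSet W := hsatmeas coreX hcoreXmeas
    have hWΓ : ∀ (γ : Γ) (x : M), γ • x ∈ W ↔ x ∈ W := fun γ x => hsatinvΓ coreX γ x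
    have hWΛ : ∀ (l : Λ) (x : M), l • x ∈ W ↔ x ∈ W := fun l x => hsatinvΛ coreX l x
    set PY : ℕ → Set M := fun n => W ∩ Y ∩ M₀ ∩ Φ ⁻¹' (B n) with hPYdef
    have hPYmeas : ∀ n, MeasurableSet (PY n) :=
      fun n => (((hWmeas.inter hYmeas).inter hM0meas)).inter ((hBmeas n).preimage hΦmeas)
    have hPYcover : W ∩ Y ∩ M₀ ⊆ ⋃ n, PY n := by
      rintro y ⟨⟨hyW, hyY⟩, hyM0⟩
      by_contra hnc
      have hunm : ∀ n, Φ y ∉ B n := by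
        intro n hn
        exact hnc (Set.mem_iUnion.mpr ⟨n, ⟨⟨hyW, hyY⟩, hyM0⟩, hn⟩)
      obtain ⟨g, hg⟩ := Set.mem_iUnion.mp hyW
      simp only [Set.mem_preimage] at hg
      obtain ⟨n₀, hn₀⟩ := heG (g.1⁻¹, g.2⁻¹)
      have hid : g.1⁻¹ • g.2⁻¹ • g.1 • g.2 • y = y := by
        rw [← hcomm g.1 g.2⁻¹ (g.2 • y), inv_smul_smul, inv_smul_smul]
      have hτ : T n₀ (Φ (g.1 • g.2 • y)) = Φ y := by
        rw [hTΦ, hn₀]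
        simp only
        rw [hid]
      have hΦuX : Φ (g.1 • g.2 • y) ∈ CFD.XOm Γ Λ := (hΦX _).mpr hg.1.1
      have hτY : T n₀ (Φ (g.1 • g.2 • y)) ∈ CFD.YOm Γ Λ := by
        rw [hτ]; exact (hΦY _).mpr hyY
      have huun : ∀ m, Φ (g.1 • g.2 • y) ∉ A m := by
        intro m hm
        exact hg.2.2 (Set.mem_iUnion.mpr ⟨m, hm⟩)
      have hτun : ∀ m, T n₀ (Φ (g.1 • g.2 • y)) ∉ B m := by
        intro m hm
        rw [hτ] at hm
        exact hunm m hm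
      exact CFD.greedy_maximal _ _ T hΦuX hτY huun hτun
    set Q : ℕ → Set M := fun n => (eG n).2⁻¹ • ((eG n).1⁻¹ • PY n) with hQdef
    have hQmeas : ∀ n, MeasurableSet (Q n) :=
      fun n => hsmulΛ_meas _ _ (hsmulΓ_meas _ _ (hPYmeas n))
    have hQμ : ∀ n, μ (Q n) = μ (PY n) := by
      intro n
      rw [hQdef]
      rw [measure_smul μ (eG n).2⁻¹, measure_smul μ (eG n).1⁻¹]
    have hQelim : ∀ n x, x ∈ Q n → ∃ y ∈ PY n, (eG n).2⁻¹ • (eG n).1⁻¹ • y = x := by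
      intro n x hx
      rw [hQdef] at hx
      obtain ⟨z, hz, rfl⟩ := hx
      obtain ⟨y, hy, rfl⟩ := hz
      exact ⟨y, hy, rfl⟩
    have hkey : ∀ n y, y ∈ PY n →
        Φ ((eG n).2⁻¹ • (eG n).1⁻¹ • y) ∈ A n := by
      intro n y hy
      have hid2 : (eG n).1 • (eG n).2 • (eG n).2⁻¹ • (eG n).1⁻¹ • y = y := by
        rw [smul_inv_smul, smul_inv_smul]
      have h1 : T n (Φ ((eG n).2⁻¹ • (eG n).1⁻¹ • y)) = Φ y := by
        rw [hTΦ, hid2]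
      have h2 : (T n).symm (Φ y) = Φ ((eG n).2⁻¹ • (eG n).1⁻¹ • y) := by
        rw [← h1, Equiv.symm_apply_apply]
      have h3 := hBA n (Φ y) hy.2
      rwa [h2] at h3
    have hQsub : ∀ n, Q n ⊆ (W ∩ X) ∩ Φ ⁻¹' (A n) := by
      intro n x hx
      obtain ⟨y, hy, rfl⟩ := hQelim n x hx
      have hxA : Φ ((eG n).2⁻¹ • (eG n).1⁻¹ • y) ∈ A n := hkey n y hy
      refine ⟨⟨?_, ?_⟩, hxA⟩
      · exact (hWΛ _ _).mpr ((hWΓ _ _).mpr hy.1.1.1)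
      · exact (hΦX _).mp (hA_sub_X n hxA)
    have hQdisj : Pairwise (Function.onFun Disjoint Q) := by
      intro m n hmn
      rw [Function.onFun, Set.disjoint_left]
      intro x hxm hxn
      exact hAdisj hmn ((hQsub m hxm).2) ((hQsub n hxn).2)
    have hQcore : ∀ n, Disjoint coreX (Q n) := by
      intro n
      rw [Set.disjoint_left]
      intro x hxc hxq
      exact hxc.2.2 (Set.mem_iUnion.mpr ⟨n, (hQsub n hxq).2⟩)
    have hPYdisj : Pairwise (Function.onFun Disjoint PY) := by
      intro m n hmn
      rw [Function.onFun, Set.disjoint_left]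
      intro y hym hyn
      exact hBdisj hmn hym.2 hyn.2
    have hYW1 : μ (W ∩ Y) ≤ μ (⋃ n, PY n) := by
      have h1 : W ∩ Y ⊆ (⋃ n, PY n) ∪ M₀ᶜ := by
        intro y hy
        by_cases hyM : y ∈ M₀
        · exact Or.inl (hPYcover ⟨hy, hyM⟩)
        · exact Or.inr hyM
      calc μ (W ∩ Y) ≤ μ ((⋃ n, PY n) ∪ M₀ᶜ) := measure_mono h1
        _ ≤ μ (⋃ n, PY n) + μ M₀ᶜ := measure_union_le _ _
        _ = μ (⋃ n, PY n) := by rw [hM0conull, add_zero]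
    have hsum1 : μ (⋃ n, PY n) = ∑' n, μ (PY n) := measure_iUnion hPYdisj hPYmeas
    have hsum2 : μ (⋃ n, Q n) = ∑' n, μ (Q n) := measure_iUnion hQdisj hQmeas
    have hQtot : μ (⋃ n, Q n) = ∑' n, μ (PY n) := by
      rw [hsum2]; exact tsum_congr hQμ
    have hfinal : μ coreX + μ (W ∩ Y) ≤ μ (W ∩ X) := by
      have hsubX : coreX ∪ ⋃ n, Q n ⊆ W ∩ X := by
        rintro x (hx | hx)
        · exact ⟨hsatsub coreX hx, hx.1.1⟩
        · obtain ⟨n, hn⟩ := Set.mem_iUnion.mp hx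
          exact ⟨(hQsub n hn).1.1, (hQsub n hn).1.2⟩
      have hdisj : Disjoint coreX (⋃ n, Q n) := Set.disjoint_iUnion_right.mpr hQcore
      calc μ coreX + μ (W ∩ Y) ≤ μ coreX + μ (⋃ n, Q n) := by
            exact add_le_add le_rfl (hYW1.trans (le_of_eq (hsum1.trans hQtot.symm)))
        _ = μ (coreX ∪ ⋃ n, Q n) := (measure_union hdisj (MeasurableSet.iUnion hQmeas)).symm
        _ ≤ μ (W ∩ X) := measure_mono hsubX
    have heq := hWeq W hWmeas hWΓ hWΛ
    have hfin : μ (W ∩ Y) ≠ ⊤ :=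
      fun h => hYfin (top_le_iff.mp (h ▸ measure_mono Set.inter_subset_right))
    rw [heq] at hfinal
    have h2 : μ coreX + μ (W ∩ Y) ≤ 0 + μ (W ∩ Y) := by rwa [zero_add]
    have h3 := (ENNReal.add_le_add_iff_right hfin).mp h2
    exact le_antisymm h3 (by simp)
  -- the full invariant conull set
  set satX : Set M := ⋃ g : Γ × Λ, (fun x : M => g.1 • g.2 • x) ⁻¹' coreX with hsatXdef
  set satY : Set M := ⋃ g : Γ × Λ, (fun x : M => g.1 • g.2 • x) ⁻¹' coreY with hsatYdef
  set M₁ : Set M := M₀ \ (satX ∪ satY) with hM1def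
  have hM1meas : MeasurableSet M₁ :=
    hM0meas.diff ((hsatmeas coreX hcoreXmeas).union (hsatmeas coreY hcoreYmeas))
  have hM1null : μ M₁ᶜ = 0 := by
    have h1 : M₁ᶜ ⊆ M₀ᶜ ∪ (satX ∪ satY) := by
      intro x hx
      rw [hM1def] at hx
      simp only [Set.mem_compl_iff, Set.mem_diff, not_and, not_not] at hx
      by_cases hm : x ∈ M₀
      · exact Or.inr (hx hm)
      · exact Or.inl hm
    refine measure_mono_null h1 ?_
    have h2 : μ (satX ∪ satY) = 0 := by
      refine measure_union_null ?_ ?_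
      · exact hsatnull coreX hcoreXnull
      · exact hsatnull coreY hcoreYnull
    refine measure_union_null ?_ h2
    exact hM0conull
  have hM1sub : M₁ ⊆ M₀ := fun x hx => hx.1
  have hM1Γ : ∀ (γ : Γ) (x : M), x ∈ M₁ → γ • x ∈ M₁ := by
    intro γ x hx
    refine ⟨hM0_smulΓ γ x hx.1, ?_⟩
    intro hmem
    apply hx.2
    rcases hmem with h | h
    · exact Or.inl ((hsatinvΓ coreX γ x).mp h)
    · exact Or.inr ((hsatinvΓ coreY γ x).mp h)
  have hM1Λ : ∀ (l : Λ) (x : M), x ∈ M₁ → l • x ∈ M₁ := by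
    intro l x hx
    refine ⟨hM0_smulΛ l x hx.1, ?_⟩
    intro hmem
    apply hx.2
    rcases hmem with h | h
    · exact Or.inl ((hsatinvΛ coreX l x).mp h)
    · exact Or.inr ((hsatinvΛ coreY l x).mp h)
  have hmatchedX : ∀ x, x ∈ M₁ → x ∈ X → ∃ n, Φ x ∈ A n := by
    intro x hx hxX
    by_contra hnc
    push_neg at hnc
    have h1 : Φ x ∈ UX := ⟨(hΦX x).mpr hxX, fun h => by
      obtain ⟨n, hn⟩ := Set.mem_iUnion.mp h
      exact hnc n hn⟩
    have h2 : x ∈ coreX := ⟨⟨hxX, hx.1⟩, h1⟩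
    exact hx.2 (Or.inl (hsatsub coreX h2))
  have hmatchedY : ∀ x, x ∈ M₁ → x ∈ Y → ∃ n, Φ x ∈ B n := by
    intro x hx hxY
    by_contra hnc
    push_neg at hnc
    have h1 : Φ x ∈ UY := ⟨(hΦY x).mpr hxY, fun h => by
      obtain ⟨n, hn⟩ := Set.mem_iUnion.mp h
      exact hnc n hn⟩
    have h2 : x ∈ coreY := ⟨⟨hxY, hx.1⟩, h1⟩
    exact hx.2 (Or.inr (hsatsub coreY h2))
  -- Phi is injective along orbits
  have hPhiInjΓ : ∀ x, x ∈ M₀ → ∀ γ₁ γ₂ : Γ, Φ (γ₁ • x) = Φ (γ₂ • x) → γ₁ = γ₂ := by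
    intro x hx γ₁ γ₂ h
    obtain ⟨γh, hγh⟩ := hXex (γ₁ • x) (hM0_smulΓ γ₁ x hx)
    have h1 : (γh * γ₁) • x ∈ X := by rw [mul_smul]; exact hγh
    have hcoord := congrFun h (γh, (1 : Λ))
    have h2 : (X.indicator (1 : M → ℝ≥0∞) (γh • (1:Λ) • γ₁ • x))
        = (X.indicator (1 : M → ℝ≥0∞) (γh • (1:Λ) • γ₂ • x)) := congrArg Prod.fst hcoord
    simp only [one_smul] at h2
    have h3 : γh • γ₁ • x ∈ X := by rw [← mul_smul]; exact h1
    rw [Set.indicator_of_mem h3] at h2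
    have h4 : γh • γ₂ • x ∈ X := by
      by_contra hno
      rw [Set.indicator_of_notMem hno] at h2
      simp only [Pi.one_apply] at h2
      exact (one_ne_zero : (1:ℝ≥0∞) ≠ 0) h2
    have h5 : (γh * γ₂) • x ∈ X := by rw [mul_smul]; exact h4
    exact mul_left_cancel (hXuniq x hx (γh * γ₁) (γh * γ₂) h1 h5)
  have hPhiInjΛ : ∀ x, x ∈ M₀ → ∀ l₁ l₂ : Λ, Φ (l₁ • x) = Φ (l₂ • x) → l₁ = l₂ := by
    intro x hx l₁ l₂ h
    obtain ⟨lh, hlh⟩ := hYex (l₁ • x) (hM0_smulΛ l₁ x hx)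
    have h1 : (lh * l₁) • x ∈ Y := by rw [mul_smul]; exact hlh
    have hcoord := congrFun h ((1 : Γ), lh)
    have h2 : (Y.indicator (1 : M → ℝ≥0∞) ((1:Γ) • lh • l₁ • x))
        = (Y.indicator (1 : M → ℝ≥0∞) ((1:Γ) • lh • l₂ • x)) := congrArg Prod.snd hcoord
    simp only [one_smul] at h2
    have h3 : lh • l₁ • x ∈ Y := by rw [← mul_smul]; exact h1
    rw [Set.indicator_of_mem h3] at h2
    have h4 : lh • l₂ • x ∈ Y := by
      by_contra hno
      rw [Set.indicator_of_notMem hno] at h2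
      simp only [Pi.one_apply] at h2
      exact (one_ne_zero : (1:ℝ≥0∞) ≠ 0) h2
    have h5 : (lh * l₂) • x ∈ Y := by rw [mul_smul]; exact h4
    exact mul_left_cancel (hYuniq x hx (lh * l₁) (lh * l₂) h1 h5)
  -- selection data
  set D : CFD.Om Γ Λ → ℕ → ℕ → Prop := fun ωa n j =>
    ∃ l : Λ, CFD.LL Γ Λ l (CFD.LG Γ Λ (eΓ j)⁻¹ ωa) = T n ωa with hDdef
  set QQ : M → Γ → ℕ → Prop := fun z γ n =>
    CFD.LG Γ Λ γ (Φ z) ∈ A n ∧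
    ∃ j, D (CFD.LG Γ Λ γ (Φ z)) n j ∧ (∀ j' < j, ¬ D (CFD.LG Γ Λ γ (Φ z)) n j') ∧
      Φ z = CFD.LG Γ Λ (eΓ j)⁻¹ (CFD.LG Γ Λ γ (Φ z)) with hQQdef
  set F : Set M := M₁ ∩ {z | ∃ (n : ℕ) (γ : Γ), QQ z γ n} with hFdef
  have hDmeas : ∀ (γ : Γ) (n j : ℕ),
      MeasurableSet {z : M | D (CFD.LG Γ Λ γ (Φ z)) n j} := by
    intro γ n j
    have h1 : {z : M | D (CFD.LG Γ Λ γ (Φ z)) n j}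
        = ⋃ l : Λ, {z : M | CFD.LL Γ Λ l (CFD.LG Γ Λ (eΓ j)⁻¹ (CFD.LG Γ Λ γ (Φ z)))
            = T n (CFD.LG Γ Λ γ (Φ z))} := by
      ext z; simp only [hDdef, Set.mem_setOf_eq, Set.mem_iUnion]
    rw [h1]
    exact MeasurableSet.iUnion fun l => CFD.measurable_eq_Om
      ((CFD.measurable_LL l).comp ((CFD.measurable_LG _).comp
        ((CFD.measurable_LG γ).comp hΦmeas)))
      ((hTmeas n).comp ((CFD.measurable_LG γ).comp hΦmeas))
  have hFmeas : MeasurableSet F := by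
    rw [hFdef]
    refine hM1meas.inter ?_
    have h1 : {z : M | ∃ (n : ℕ) (γ : Γ), QQ z γ n}
        = ⋃ (n : ℕ), ⋃ (γ : Γ), {z | QQ z γ n} := by
      ext z; simp only [Set.mem_setOf_eq, Set.mem_iUnion]
    rw [h1]
    refine MeasurableSet.iUnion fun n => MeasurableSet.iUnion fun γ => ?_
    have h2 : {z : M | QQ z γ n} =
        ((fun z => CFD.LG Γ Λ γ (Φ z)) ⁻¹' (A n)) ∩
        (⋃ j : ℕ, (({z : M | D (CFD.LG Γ Λ γ (Φ z)) n j}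
          ∩ ⋂ j' : ℕ, ⋂ _ : j' < j, {z : M | D (CFD.LG Γ Λ γ (Φ z)) n j'}ᶜ)
          ∩ {z : M | Φ z = CFD.LG Γ Λ (eΓ j)⁻¹ (CFD.LG Γ Λ γ (Φ z))})) := by
      ext z
      simp only [hQQdef, Set.mem_setOf_eq, Set.mem_inter_iff, Set.mem_preimage,
        Set.mem_iUnion, Set.mem_iInter, Set.mem_compl_iff]
      constructor
      · rintro ⟨ha, j, h2, h3, h4⟩
        exact ⟨ha, j, ⟨h2, fun j' hj' => h3 j' hj'⟩, h4⟩
      · rintro ⟨ha, j, ⟨h2, h3⟩, h4⟩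
        exact ⟨ha, j, h2, fun j' hj' => h3 j' hj', h4⟩
    rw [h2]
    refine MeasurableSet.inter ((hAmeas n).preimage ((CFD.measurable_LG γ).comp hΦmeas)) ?_
    refine MeasurableSet.iUnion fun j => ?_
    refine MeasurableSet.inter (MeasurableSet.inter (hDmeas γ n j) ?_) ?_
    · exact MeasurableSet.iInter fun j' => MeasurableSet.iInter fun _ => (hDmeas γ n j').compl
    · exact CFD.measurable_eq_Om hΦmeas
        ((CFD.measurable_LG _).comp ((CFD.measurable_LG γ).comp hΦmeas))
  have hQQX : ∀ z (γ : Γ) n, QQ z γ n → γ • z ∈ X := by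
    intro z γ n h
    have h1 : Φ (γ • z) ∈ A n := by rw [hΦΓ]; exact h.1
    exact (hΦX _).mp (hA_sub_X n h1)
  have hJne : ∀ (a : M) (n : ℕ), Φ a ∈ A n → ∃ j, D (Φ a) n j := by
    intro a n ha
    obtain ⟨j, hj⟩ := heΓ (eG n).1⁻¹
    refine ⟨j, (eG n).2, ?_⟩
    rw [hj, inv_inv]
    rw [← hΦΓ, ← hΦΛ, hTΦ]
    rw [hcomm (eG n).1 (eG n).2 a]
  -- pieces of X ∩ M₁ according to matching data
  set P : ℕ → ℕ → ℕ → Set M := fun n j ℓ =>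
    {a : M | (a ∈ X ∧ a ∈ M₁) ∧ Φ a ∈ A n ∧
      (D (Φ a) n j ∧ ∀ j' < j, ¬ D (Φ a) n j') ∧
      (CFD.LL Γ Λ (eΛ ℓ) (CFD.LG Γ Λ (eΓ j)⁻¹ (Φ a)) = T n (Φ a) ∧
        ∀ ℓ' < ℓ, ¬ (CFD.LL Γ Λ (eΛ ℓ') (CFD.LG Γ Λ (eΓ j)⁻¹ (Φ a)) = T n (Φ a)))} with hPdef
  have hDmeas' : ∀ (n j : ℕ), MeasurableSet {z : M | D (Φ z) n j} := by
    intro n j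
    have h1 : {z : M | D (Φ z) n j}
        = ⋃ l : Λ, {z : M | CFD.LL Γ Λ l (CFD.LG Γ Λ (eΓ j)⁻¹ (Φ z)) = T n (Φ z)} := by
      ext z; simp only [hDdef, Set.mem_setOf_eq, Set.mem_iUnion]
    rw [h1]
    exact MeasurableSet.iUnion fun l => CFD.measurable_eq_Om
      ((CFD.measurable_LL l).comp ((CFD.measurable_LG _).comp hΦmeas))
      ((hTmeas n).comp hΦmeas)
  have hLmeas : ∀ (n j ℓ : ℕ), MeasurableSet
      {z : M | CFD.LL Γ Λ (eΛ ℓ) (CFD.LG Γ Λ (eΓ j)⁻¹ (Φ z)) = T n (Φ z)} := by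
    intro n j ℓ
    exact CFD.measurable_eq_Om
      ((CFD.measurable_LL _).comp ((CFD.measurable_LG _).comp hΦmeas))
      ((hTmeas n).comp hΦmeas)
  have hPmeas : ∀ n j ℓ, MeasurableSet (P n j ℓ) := by
    intro n j ℓ
    have h1 : P n j ℓ
        = ((X ∩ M₁) ∩ Φ ⁻¹' (A n))
          ∩ (({z : M | D (Φ z) n j} ∩ ⋂ j' : ℕ, ⋂ _ : j' < j, {z : M | D (Φ z) n j'}ᶜ)
          ∩ ({z : M | CFD.LL Γ Λ (eΛ ℓ) (CFD.LG Γ Λ (eΓ j)⁻¹ (Φ z)) = T n (Φ z)}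
            ∩ ⋂ ℓ' : ℕ, ⋂ _ : ℓ' < ℓ,
              {z : M | CFD.LL Γ Λ (eΛ ℓ') (CFD.LG Γ Λ (eΓ j)⁻¹ (Φ z)) = T n (Φ z)}ᶜ)) := by
      ext a
      simp only [hPdef, Set.mem_setOf_eq, Set.mem_inter_iff, Set.mem_preimage, Set.mem_iInter,
        Set.mem_compl_iff]
      constructor
      · rintro ⟨⟨h1, h2⟩, h3, ⟨h4, h5⟩, h6, h7⟩
        exact ⟨⟨⟨h1, h2⟩, h3⟩, ⟨h4, fun j' hj' => h5 j' hj'⟩, h6, fun ℓ' hℓ' => h7 ℓ' hℓ'⟩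
      · rintro ⟨⟨⟨h1, h2⟩, h3⟩, ⟨h4, h5⟩, h6, h7⟩
        exact ⟨⟨h1, h2⟩, h3, ⟨h4, fun j' hj' => h5 j' hj'⟩, h6, fun ℓ' hℓ' => h7 ℓ' hℓ'⟩
    rw [h1]
    refine MeasurableSet.inter ((hXmeas.inter hM1meas).inter ((hAmeas n).preimage hΦmeas)) ?_
    refine MeasurableSet.inter (MeasurableSet.inter (hDmeas' n j) ?_) ?_
    · exact MeasurableSet.iInter fun j' => MeasurableSet.iInter fun _ => (hDmeas' n j').compl
    · exact MeasurableSet.inter (hLmeas n j ℓ)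
        (MeasurableSet.iInter fun ℓ' => MeasurableSet.iInter fun _ => (hLmeas n j ℓ').compl)
  have hPcover : ∀ a, a ∈ X → a ∈ M₁ → ∃ n j ℓ, a ∈ P n j ℓ := by
    intro a haX haM
    obtain ⟨n, hn⟩ := hmatchedX a haM haX
    have hJ : ∃ j, D (Φ a) n j := hJne a n hn
    have hj1 : D (Φ a) n (Nat.find hJ) := Nat.find_spec hJ
    obtain ⟨l, hl⟩ := hj1
    obtain ⟨ℓ₀, hℓ₀⟩ := heΛ l
    have hL : ∃ ℓ, CFD.LL Γ Λ (eΛ ℓ) (CFD.LG Γ Λ (eΓ (Nat.find hJ))⁻¹ (Φ a)) = T n (Φ a) :=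
      ⟨ℓ₀, by rw [hℓ₀]; exact hl⟩
    refine ⟨n, Nat.find hJ, Nat.find hL, ⟨haX, haM⟩, hn,
      ⟨Nat.find_spec hJ, fun j' hj' => Nat.find_min hJ hj'⟩,
      Nat.find_spec hL, fun ℓ' hℓ' => Nat.find_min hL hℓ'⟩
  have hPdisj : ∀ {n j ℓ n' j' ℓ' : ℕ} {a : M},
      a ∈ P n j ℓ → a ∈ P n' j' ℓ' → n = n' ∧ j = j' ∧ ℓ = ℓ' := by
    intro n j ℓ n' j' ℓ' a h h'
    have hn : n = n' := by
      by_contra hne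
      exact hAdisj hne h.2.1 h'.2.1
    subst hn
    have hj : j = j' := by
      rcases lt_trichotomy j j' with hlt | heq | hgt
      · exact absurd h.2.2.1.1 (h'.2.2.1.2 j hlt)
      · exact heq
      · exact absurd h'.2.2.1.1 (h.2.2.1.2 j' hgt)
    subst hj
    refine ⟨rfl, rfl, ?_⟩
    rcases lt_trichotomy ℓ ℓ' with hlt | heq | hgt
    · exact absurd h.2.2.2.1 (h'.2.2.2.2 ℓ hlt)
    · exact heq
    · exact absurd h'.2.2.2.1 (h.2.2.2.2 ℓ' hgt)
  have hzF : ∀ n j ℓ, ∀ a ∈ P n j ℓ, ((eΓ j)⁻¹ • a) ∈ F := by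
    intro n j ℓ a ha
    have hza : (eΓ j) • ((eΓ j)⁻¹ • a) = a := smul_inv_smul _ _
    have hLGa : CFD.LG Γ Λ (eΓ j) (Φ ((eΓ j)⁻¹ • a)) = Φ a := by
      rw [← hΦΓ, hza]
    refine ⟨hM1Γ (eΓ j)⁻¹ a ha.1.2, n, eΓ j, ?_⟩
    refine ⟨?_, j, ?_, ?_, ?_⟩
    · rw [hLGa]; exact ha.2.1
    · rw [hLGa]; exact ha.2.2.1.1
    · intro j' hj'
      rw [hLGa]
      exact ha.2.2.1.2 j' hj'
    · rw [hLGa, hΦΓ]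
  -- uniqueness of the selected point in each Γ-orbit
  have huniqΓ : ∀ x, x ∈ M₁ → ∀ γ₁ γ₂ : Γ, γ₁ • x ∈ F → γ₂ • x ∈ F → γ₁ = γ₂ := by
    intro x hx γ₁ γ₂ h1 h2
    obtain ⟨hz1M, n1, γa, hQ1⟩ := h1
    obtain ⟨hz2M, n2, γb, hQ2⟩ := h2
    have hxM0 : x ∈ M₀ := hM1sub hx
    have haX1 : γa • (γ₁ • x) ∈ X := hQQX _ _ _ hQ1
    have haX2 : γb • (γ₂ • x) ∈ X := hQQX _ _ _ hQ2
    have hgg : γa * γ₁ = γb * γ₂ := hXuniq x hxM0 _ _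
      (by rw [mul_smul]; exact haX1) (by rw [mul_smul]; exact haX2)
    have haeq : γa • (γ₁ • x) = γb • (γ₂ • x) := by
      rw [← mul_smul, ← mul_smul, hgg]
    obtain ⟨j1, hD1, hmin1, hpin1⟩ := hQ1.2
    obtain ⟨j2, hD2, hmin2, hpin2⟩ := hQ2.2
    have hsame : CFD.LG Γ Λ γa (Φ (γ₁ • x)) = CFD.LG Γ Λ γb (Φ (γ₂ • x)) := by
      rw [← hΦΓ, ← hΦΓ, haeq]
    have hn12 : n1 = n2 := by
      by_contra hne
      have hA1 : CFD.LG Γ Λ γa (Φ (γ₁ • x)) ∈ A n1 := hQ1.1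
      rw [hsame] at hA1
      exact hAdisj hne hA1 hQ2.1
    subst hn12
    have hj12 : j1 = j2 := by
      rcases lt_trichotomy j1 j2 with hlt | heq | hgt
      · refine absurd ?_ (hmin2 j1 hlt)
        rw [← hsame]; exact hD1
      · exact heq
      · refine absurd ?_ (hmin1 j2 hgt)
        rw [hsame]; exact hD2
    have hΦeq : Φ (γ₁ • x) = Φ (γ₂ • x) := by
      rw [hpin1, hpin2, hsame, hj12]
    exact hPhiInjΓ x hxM0 γ₁ γ₂ hΦeq
  -- uniqueness of the selected point in each Λ-orbit
  have huniqΛ : ∀ x, x ∈ M₁ → ∀ l₁ l₂ : Λ, l₁ • x ∈ F → l₂ • x ∈ F → l₁ = l₂ := by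
    intro x hx l₁ l₂ h1 h2
    obtain ⟨hz1M, n1, γa, hQ1⟩ := h1
    obtain ⟨hz2M, n2, γb, hQ2⟩ := h2
    have hxM0 : x ∈ M₀ := hM1sub hx
    obtain ⟨j1, hD1, hmin1, hpin1⟩ := hQ1.2
    obtain ⟨j2, hD2, hmin2, hpin2⟩ := hQ2.2
    obtain ⟨la, hla⟩ := hD1
    obtain ⟨lb, hlb⟩ := hD2
    have hz1 : CFD.LG Γ Λ (eΓ j1)⁻¹ (CFD.LG Γ Λ γa (Φ (l₁ • x))) = Φ (l₁ • x) := hpin1.symm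
    have hz2 : CFD.LG Γ Λ (eΓ j2)⁻¹ (CFD.LG Γ Λ γb (Φ (l₂ • x))) = Φ (l₂ • x) := hpin2.symm
    rw [hz1] at hla
    rw [hz2] at hlb
    have hT1 : T n1 (CFD.LG Γ Λ γa (Φ (l₁ • x))) = Φ (la • l₁ • x) := by
      rw [hΦΛ la (l₁ • x), hla]
    have hT2 : T n2 (CFD.LG Γ Λ γb (Φ (l₂ • x))) = Φ (lb • l₂ • x) := by
      rw [hΦΛ lb (l₂ • x), hlb]
    have hY1 : Φ (la • l₁ • x) ∈ B n1 := by
      rw [← hT1]; exact hAB n1 _ hQ1.1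
    have hY2 : Φ (lb • l₂ • x) ∈ B n2 := by
      rw [← hT2]; exact hAB n2 _ hQ2.1
    have hmemY1 : la • l₁ • x ∈ Y := (hΦY _).mp (hB_sub_Y _ hY1)
    have hmemY2 : lb • l₂ • x ∈ Y := (hΦY _).mp (hB_sub_Y _ hY2)
    have hll : la * l₁ = lb * l₂ := hYuniq x hxM0 _ _
      (by rw [mul_smul]; exact hmemY1) (by rw [mul_smul]; exact hmemY2)
    have hyeq : la • l₁ • x = lb • l₂ • x := by
      rw [← mul_smul, ← mul_smul, hll]
    have hY2' : Φ (la • l₁ • x) ∈ B n2 := by rw [hyeq]; exact hY2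
    have hn12 : n1 = n2 := by
      by_contra hne
      exact hBdisj hne hY1 hY2'
    subst hn12
    have haeq : CFD.LG Γ Λ γa (Φ (l₁ • x)) = CFD.LG Γ Λ γb (Φ (l₂ • x)) := by
      apply (T n1).injective
      rw [hT1, hT2, hyeq]
    have hD1' : D (CFD.LG Γ Λ γa (Φ (l₁ • x))) n1 j1 := ⟨la, by rw [hz1]; exact hla⟩
    have hD2' : D (CFD.LG Γ Λ γb (Φ (l₂ • x))) n1 j2 := ⟨lb, by rw [hz2]; exact hlb⟩
    have hj12 : j1 = j2 := by
      rcases lt_trichotomy j1 j2 with hlt | heq | hgt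
      · exact absurd (haeq ▸ hD1') (hmin2 j1 hlt)
      · exact heq
      · exact absurd (haeq.symm ▸ hD2') (hmin1 j2 hgt)
    have hΦeq : Φ (l₁ • x) = Φ (l₂ • x) := by
      rw [hpin1, hpin2, haeq, hj12]
    exact hPhiInjΛ x hxM0 l₁ l₂ hΦeq
  -- Γ-covering on M₁
  have hcovΓ : ∀ x, x ∈ M₁ → ∃ γ : Γ, γ • x ∈ F := by
    intro x hx
    obtain ⟨γ₀, hγ₀⟩ := hXex x (hM1sub hx)
    have haM1 : γ₀ • x ∈ M₁ := hM1Γ γ₀ x hx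
    obtain ⟨n, j, ℓ, hP⟩ := hPcover (γ₀ • x) hγ₀ haM1
    refine ⟨(eΓ j)⁻¹ * γ₀, ?_⟩
    rw [mul_smul]
    exact hzF n j ℓ _ hP
  -- images of pieces in Y
  set R : ℕ → ℕ → ℕ → Set M := fun n j ℓ => (eΛ ℓ) • ((eΓ j)⁻¹ • P n j ℓ) with hRdef
  have hRmeas : ∀ n j ℓ, MeasurableSet (R n j ℓ) :=
    fun n j ℓ => hsmulΛ_meas _ _ (hsmulΓ_meas _ _ (hPmeas n j ℓ))
  have hRμ : ∀ n j ℓ, μ (R n j ℓ) = μ (P n j ℓ) := by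
    intro n j ℓ
    rw [hRdef]
    rw [measure_smul μ (eΛ ℓ), measure_smul μ (eΓ j)⁻¹]
  have hRelim : ∀ n j ℓ w, w ∈ R n j ℓ → ∃ a ∈ P n j ℓ, (eΛ ℓ) • ((eΓ j)⁻¹ • a) = w := by
    intro n j ℓ w hw
    rw [hRdef] at hw
    obtain ⟨z, hz, rfl⟩ := hw
    obtain ⟨a, ha, rfl⟩ := hz
    exact ⟨a, ha, rfl⟩
  have hRY : ∀ n j ℓ, R n j ℓ ⊆ Y ∩ M₁ := by
    intro n j ℓ w hw
    obtain ⟨a, ha, rfl⟩ := hRelim n j ℓ w hw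
    have h1 : Φ ((eΛ ℓ) • (eΓ j)⁻¹ • a) = T n (Φ a) := by
      rw [hΦΛ, hΦΓ]; exact ha.2.2.2.1
    have h2 : Φ ((eΛ ℓ) • (eΓ j)⁻¹ • a) ∈ B n := by
      rw [h1]; exact hAB n _ ha.2.1
    exact ⟨(hΦY _).mp (hB_sub_Y n h2), hM1Λ _ _ (hM1Γ _ _ ha.1.2)⟩
  have hRdisjoint : ∀ {n j ℓ n' j' ℓ' : ℕ} {w : M}, w ∈ R n j ℓ → w ∈ R n' j' ℓ' →
      n = n' ∧ j = j' ∧ ℓ = ℓ' := by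
    intro n j ℓ n' j' ℓ' w hw hw'
    obtain ⟨a, ha, hwa⟩ := hRelim n j ℓ w hw
    obtain ⟨a', ha', hwa'⟩ := hRelim n' j' ℓ' w hw'
    have hwM1 : w ∈ M₁ := (hRY n j ℓ hw).2
    have hz1 : ((eΛ ℓ)⁻¹ • w) ∈ F := by
      rw [← hwa, inv_smul_smul]
      exact hzF n j ℓ a ha
    have hz2 : ((eΛ ℓ')⁻¹ • w) ∈ F := by
      rw [← hwa', inv_smul_smul]
      exact hzF n' j' ℓ' a' ha'
    have hll := huniqΛ w hwM1 (eΛ ℓ)⁻¹ (eΛ ℓ')⁻¹ hz1 hz2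
    have e1 : (eΓ j)⁻¹ • a = (eΛ ℓ)⁻¹ • w := by rw [← hwa, inv_smul_smul]
    have e2 : (eΓ j')⁻¹ • a' = (eΛ ℓ')⁻¹ • w := by rw [← hwa', inv_smul_smul]
    have hzz : (eΓ j)⁻¹ • a = (eΓ j')⁻¹ • a' := by rw [e1, e2, hll]
    have hzM0 : ((eΓ j)⁻¹ • a) ∈ M₀ := hM1sub (hM1Γ _ _ ha.1.2)
    have hgg : eΓ j = eΓ j' := by
      apply hXuniq ((eΓ j)⁻¹ • a) hzM0
      · rw [smul_inv_smul]; exact ha.1.1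
      · rw [hzz, smul_inv_smul]; exact ha'.1.1
    have haa : a = a' := by
      have e3 : a = (eΓ j) • ((eΓ j)⁻¹ • a) := (smul_inv_smul _ _).symm
      have e4 : a' = (eΓ j') • ((eΓ j')⁻¹ • a') := (smul_inv_smul _ _).symm
      rw [e3, e4, ← hzz, hgg]
    exact hPdisj (haa ▸ ha) ha'
  -- total measure of the images
  set R3 : ℕ × ℕ × ℕ → Set M := fun t => R t.1 t.2.1 t.2.2 with hR3def
  set P3 : ℕ × ℕ × ℕ → Set M := fun t => P t.1 t.2.1 t.2.2 with hP3def
  have hR3meas : ∀ t, MeasurableSet (R3 t) := fun t => hRmeas _ _ _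
  have hP3meas : ∀ t, MeasurableSet (P3 t) := fun t => hPmeas _ _ _
  have hR3disj : Pairwise (Function.onFun Disjoint R3) := by
    intro t t' htt
    rw [Function.onFun, Set.disjoint_left]
    intro w hw hw'
    obtain ⟨h1, h2, h3⟩ := hRdisjoint hw hw'
    exact htt (Prod.ext h1 (Prod.ext h2 h3))
  have hP3disj : Pairwise (Function.onFun Disjoint P3) := by
    intro t t' htt
    rw [Function.onFun, Set.disjoint_left]
    intro a hat hat'
    obtain ⟨h1, h2, h3⟩ := hPdisj hat hat'
    exact htt (Prod.ext h1 (Prod.ext h2 h3))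
  have hRPμ : ∀ t, μ (R3 t) = μ (P3 t) := fun t => hRμ _ _ _
  have hPuni : (⋃ t, P3 t) = X ∩ M₁ := by
    apply Set.Subset.antisymm
    · intro a ha
      obtain ⟨t, ht⟩ := Set.mem_iUnion.mp ha
      exact ⟨ht.1.1, ht.1.2⟩
    · intro a ha
      obtain ⟨n, j, ℓ, h⟩ := hPcover a ha.1 ha.2
      exact Set.mem_iUnion.mpr ⟨(n, j, ℓ), h⟩
  have hXM1 : μ (X ∩ M₁) = μ X := by
    apply le_antisymm (measure_mono Set.inter_subset_left)
    calc μ X ≤ μ ((X ∩ M₁) ∪ M₁ᶜ) := measure_mono (fun x hx => by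
        by_cases h : x ∈ M₁
        · exact Or.inl ⟨hx, h⟩
        · exact Or.inr h)
      _ ≤ μ (X ∩ M₁) + μ M₁ᶜ := measure_union_le _ _
      _ = μ (X ∩ M₁) := by rw [hM1null, add_zero]
  have hYM1 : μ (Y ∩ M₁) = μ Y := by
    apply le_antisymm (measure_mono Set.inter_subset_left)
    calc μ Y ≤ μ ((Y ∩ M₁) ∪ M₁ᶜ) := measure_mono (fun x hx => by
        by_cases h : x ∈ M₁
        · exact Or.inl ⟨hx, h⟩
        · exact Or.inr h)
      _ ≤ μ (Y ∩ M₁) + μ M₁ᶜ := measure_union_le _ _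
      _ = μ (Y ∩ M₁) := by rw [hM1null, add_zero]
  have hRtot : μ (⋃ t, R3 t) = μ X := by
    rw [measure_iUnion hR3disj hR3meas]
    rw [show (∑' t, μ (R3 t)) = ∑' t, μ (P3 t) from tsum_congr hRPμ]
    rw [← measure_iUnion hP3disj hP3meas, hPuni, hXM1]
  have hXY : μ X = μ Y := by
    have h := hWeq Set.univ MeasurableSet.univ (fun γ x => by simp) (fun l x => by simp)
    simpa using h
  set N : Set M := (Y ∩ M₁) \ ⋃ t, R3 t with hNdef
  have hNnull : μ N = 0 := by
    have hsub : (⋃ t, R3 t) ⊆ Y ∩ M₁ := by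
      intro w hw
      obtain ⟨t, ht⟩ := Set.mem_iUnion.mp hw
      exact hRY _ _ _ ht
    have hun : (⋃ t, R3 t) ∪ N = Y ∩ M₁ := Set.union_diff_cancel hsub
    have hdisj : Disjoint (⋃ t, R3 t) N := Set.disjoint_sdiff_right
    have hNmeas : MeasurableSet N := (hYmeas.inter hM1meas).diff (MeasurableSet.iUnion hR3meas)
    have h1 : μ (⋃ t, R3 t) + μ N = μ (Y ∩ M₁) := by
      rw [← measure_union hdisj hNmeas, hun]
    rw [hRtot, hYM1, ← hXY] at h1
    have h2 : μ X + μ N ≤ μ X + 0 := by rw [add_zero]; exact le_of_eq h1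
    have h3 := (ENNReal.add_le_add_iff_left hXfin).mp h2
    exact le_antisymm h3 (by simp)
  have hbadsub : {x : M | x ∈ M₁ ∧ ∀ l : Λ, l • x ∉ F} ⊆ ⋃ l : Λ, (fun x : M => l • x) ⁻¹' N := by
    rintro x ⟨hx, hbad⟩
    obtain ⟨l₀, hl₀⟩ := hYex x (hM1sub hx)
    have hyN : l₀ • x ∈ N := by
      refine ⟨⟨hl₀, hM1Λ l₀ x hx⟩, ?_⟩
      intro hmem
      obtain ⟨t, ht⟩ := Set.mem_iUnion.mp hmem
      obtain ⟨a, haP, hw⟩ := hRelim t.1 t.2.1 t.2.2 _ ht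
      have hzF' : ((eΓ t.2.1)⁻¹ • a) ∈ F := hzF t.1 t.2.1 t.2.2 a haP
      have hzeq : (eΓ t.2.1)⁻¹ • a = ((eΛ t.2.2)⁻¹ * l₀) • x := by
        rw [mul_smul, ← hw, inv_smul_smul]
      rw [hzeq] at hzF'
      exact hbad _ hzF'
    exact Set.mem_iUnion.mpr ⟨l₀, hyN⟩
  have hprenull : μ (⋃ l : Λ, (fun x : M => l • x) ⁻¹' N) = 0 :=
    measure_iUnion_null fun l => by
      rw [measure_preimage_smul μ l]; exact hNnull
  -- assemble the two fundamental domain statements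
  refine ⟨F, hFmeas, ⟨hFmeas.nullMeasurableSet, ?_, ?_⟩, ⟨hFmeas.nullMeasurableSet, ?_, ?_⟩⟩
  · -- Γ ae_covers
    rw [ae_iff]
    refine measure_mono_null ?_ hM1null
    intro x hx
    simp only [Set.mem_setOf_eq, not_exists] at hx
    intro hxM1
    obtain ⟨γ, hγ⟩ := hcovΓ x hxM1
    exact hx γ hγ
  · -- Γ aedisjoint
    intro γ₁ γ₂ hne
    show μ ((γ₁ • F) ∩ (γ₂ • F)) = 0
    refine measure_mono_null ?_ hM1null
    intro x hx
    intro hxM1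
    have e1 : γ₁⁻¹ • x ∈ F := by
      have h := hx.1
      rwa [Set.mem_smul_set_iff_inv_smul_mem] at h
    have e2 : γ₂⁻¹ • x ∈ F := by
      have h := hx.2
      rwa [Set.mem_smul_set_iff_inv_smul_mem] at h
    exact hne (inv_injective (huniqΓ x hxM1 γ₁⁻¹ γ₂⁻¹ e1 e2))
  · -- Λ ae_covers
    rw [ae_iff]
    refine measure_mono_null ?_ (measure_union_null hM1null hprenull)
    intro x hx
    simp only [Set.mem_setOf_eq, not_exists] at hx
    by_cases hxM1 : x ∈ M₁
    · exact Or.inr (hbadsub ⟨hxM1, fun l h => hx l h⟩)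
    · exact Or.inl hxM1
  · -- Λ aedisjoint
    intro l₁ l₂ hne
    show μ ((l₁ • F) ∩ (l₂ • F)) = 0
    refine measure_mono_null ?_ hM1null
    intro x hx
    intro hxM1
    have e1 : l₁⁻¹ • x ∈ F := by
      have h := hx.1
      rwa [Set.mem_smul_set_iff_inv_smul_mem] at h
    have e2 : l₂⁻¹ • x ∈ F := by
      have h := hx.2
      rwa [Set.mem_smul_set_iff_inv_smul_mem] at h
    exact hne (inv_injective (huniqΛ x hxM1 l₁⁻¹ l₂⁻¹ e1 e2))
end

section
/- There exist two commuting measure-preserving actions of Z on M = R × {0,1} (with Lebesgue measure on each copy of R) admitting fundamental domains of equal measure but no common fundamental domain. Concretely: the left action n·(x,0) = (x+2n,0), n·(x,1) = (x+n,1) and the right action (x,0)·n = (x+n,0), (x,1)·n = (x+2n,1) have fundamental domains X = [0,2)×{0} ∪ [0,1)×{1} and Y = [0,1)×{0} ∪ [0,2)×{1} respectively, which have equal measure 3, yet the set A = R×{0} is invariant for both actions and m(A ∩ X) = 2 ≠ 1 = m(A ∩ Y), so no common fundamental domain exists. -/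
open MeasureTheory Set ENNReal

/-- The measure on `M = ℝ × Bool`: Lebesgue measure on each copy of `ℝ`. -/
noncomputable def exMeasure : Measure (ℝ × Bool) := (volume : Measure ℝ).prod Measure.count

/-- The left action: `n·(x,0) = (x+2n,0)`, `n·(x,1) = (x+n,1)` (false = 0, true = 1). -/
def actL (n : ℤ) (p : ℝ × Bool) : ℝ × Bool :=
  (p.1 + (if p.2 then (n : ℝ) else 2 * n), p.2)

/-- The right action: `(x,0)·n = (x+n,0)`, `(x,1)·n = (x+2n,1)`. -/
def actR (n : ℤ) (p : ℝ × Bool) : ℝ × Bool :=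
  (p.1 + (if p.2 then 2 * (n : ℝ) else n), p.2)

/-- `S` is a fundamental domain for the action `a` of `ℤ` on `ℝ × Bool`. -/
def IsFD (a : ℤ → ℝ × Bool → ℝ × Bool) (S : Set (ℝ × Bool)) : Prop :=
  MeasurableSet S ∧ exMeasure ((⋃ n : ℤ, a n '' S)ᶜ) = 0 ∧
    Pairwise fun n n' : ℤ => exMeasure ((a n '' S) ∩ (a n' '' S)) = 0

/-! ### Auxiliary machinery -/

/-- Generic "shift" action with speed `c b` on row `b`. -/
def shAct (c : Bool → ℝ) (n : ℤ) (p : ℝ × Bool) : ℝ × Bool :=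
  (p.1 + c p.2 * n, p.2)

lemma actL_eq : actL = shAct (fun b => if b then 1 else 2) := by
  funext n p
  obtain ⟨x, b⟩ := p
  cases b <;> simp [actL, shAct]

lemma actR_eq : actR = shAct (fun b => if b then 2 else 1) := by
  funext n p
  obtain ⟨x, b⟩ := p
  cases b <;> simp [actR, shAct]

lemma shAct_zero (c : Bool → ℝ) (p : ℝ × Bool) : shAct c 0 p = p := by
  simp [shAct]

lemma shAct_add (c : Bool → ℝ) (m n : ℤ) (p : ℝ × Bool) :
    shAct c m (shAct c n p) = shAct c (m + n) p := by
  simp [shAct]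
  ring_nf

lemma shAct_meas (c : Bool → ℝ) (n : ℤ) : Measurable (shAct c n) := by
  refine Measurable.prod (measurable_fst.add ?_) measurable_snd
  exact (measurable_from_top (f := fun b : Bool => c b * n)).comp measurable_snd

lemma shAct_comp_preimage (c : Bool → ℝ) (m n : ℤ) (E : Set (ℝ × Bool)) :
    shAct c m ⁻¹' (shAct c n ⁻¹' E) = shAct c (n + m) ⁻¹' E := by
  ext p
  rw [Set.mem_preimage, Set.mem_preimage, shAct_add]
  exact Iff.rfl

lemma shAct_image_eq (c : Bool → ℝ) (n : ℤ) (E : Set (ℝ × Bool)) :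
    shAct c n '' E = shAct c (-n) ⁻¹' E := by
  refine congrFun (Set.image_eq_preimage_of_inverse ?_ ?_) E
  · intro p; rw [shAct_add]; simp [shAct_zero]
  · intro p; rw [shAct_add]; simp [shAct_zero]

/-- Row decomposition of the measure. -/
lemma rowdec {E : Set (ℝ × Bool)} (hE : MeasurableSet E) :
    exMeasure E = volume ((fun x => (x, false)) ⁻¹' E) + volume ((fun x => (x, true)) ⁻¹' E) := by
  rw [exMeasure, Measure.prod_apply_symm hE, lintegral_count, tsum_bool]

lemma shAct_row (c : Bool → ℝ) (n : ℤ) (b : Bool) (E : Set (ℝ × Bool)) :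
    (fun x => (x, b)) ⁻¹' (shAct c n ⁻¹' E) = (· + c b * n) ⁻¹' ((fun x => (x, b)) ⁻¹' E) := rfl

lemma shAct_mp (c : Bool → ℝ) (n : ℤ) : MeasurePreserving (shAct c n) exMeasure exMeasure := by
  refine ⟨shAct_meas c n, Measure.ext fun E hE => ?_⟩
  rw [Measure.map_apply (shAct_meas c n) hE, rowdec (hE.preimage (shAct_meas c n)), rowdec hE,
    shAct_row, shAct_row, measure_preimage_add_right, measure_preimage_add_right]

lemma shAct_measure_preimage (c : Bool → ℝ) (n : ℤ) {E : Set (ℝ × Bool)}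
    (hE : MeasurableSet E) : exMeasure (shAct c n ⁻¹' E) = exMeasure E :=
  (shAct_mp c n).measure_preimage hE.nullMeasurableSet

/-- Half of the exchange argument. -/
lemma key1 (c : Bool → ℝ) {S T A : Set (ℝ × Bool)} (hSm : MeasurableSet S)
    (hT : IsFD (shAct c) T) (hA : MeasurableSet A) :
    exMeasure (A ∩ S) = ∑' n : ℤ, exMeasure (A ∩ (shAct c n ⁻¹' T) ∩ S) := by
  obtain ⟨hTm, hTc, hTd⟩ := hT
  have hmeas : ∀ n : ℤ, MeasurableSet (A ∩ (shAct c n ⁻¹' T) ∩ S) := fun n =>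
    (hA.inter (hTm.preimage (shAct_meas c n))).inter hSm
  have h1 : exMeasure (A ∩ S) = exMeasure ((A ∩ S) ∩ ⋃ n : ℤ, shAct c n '' T) := by
    refine le_antisymm ?_ (measure_mono inter_subset_left)
    calc exMeasure (A ∩ S)
        ≤ exMeasure (((A ∩ S) ∩ ⋃ n : ℤ, shAct c n '' T) ∪ (⋃ n : ℤ, shAct c n '' T)ᶜ) := by
          refine measure_mono fun x hx => ?_
          by_cases hu : x ∈ ⋃ n : ℤ, shAct c n '' T
          · exact Or.inl ⟨hx, hu⟩
          · exact Or.inr hu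
      _ ≤ exMeasure ((A ∩ S) ∩ ⋃ n : ℤ, shAct c n '' T) +
            exMeasure ((⋃ n : ℤ, shAct c n '' T)ᶜ) := measure_union_le _ _
      _ = exMeasure ((A ∩ S) ∩ ⋃ n : ℤ, shAct c n '' T) := by rw [hTc, add_zero]
  rw [h1, inter_iUnion, measure_iUnion₀]
  · simp only [shAct_image_eq]
    rw [← (Equiv.neg ℤ).tsum_eq (fun n => exMeasure (A ∩ (shAct c n ⁻¹' T) ∩ S))]
    refine tsum_congr fun n => ?_
    simp only [Equiv.neg_apply]
    rw [Set.inter_right_comm]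
  · intro n n' hnn'
    refine measure_mono_null ?_ (hTd hnn')
    rintro x ⟨⟨_, hx⟩, _, hx'⟩
    exact ⟨hx, hx'⟩
  · intro n
    rw [shAct_image_eq]
    exact (((hA.inter hSm)).inter (hTm.preimage (shAct_meas c (-n)))).nullMeasurableSet

/-- The exchange criterion: a jointly invariant set meets any two fundamental domains of the
same action in sets of the same measure. -/
lemma key (c : Bool → ℝ) {S T A : Set (ℝ × Bool)} (hS : IsFD (shAct c) S)
    (hT : IsFD (shAct c) T) (hA : MeasurableSet A)
    (hAi : ∀ n : ℤ, shAct c n ⁻¹' A = A) :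
    exMeasure (A ∩ S) = exMeasure (A ∩ T) := by
  have e0 : ∀ E : Set (ℝ × Bool), shAct c 0 ⁻¹' E = E := by
    intro E; ext p; simp [Set.mem_preimage, shAct_zero]
  have term : ∀ n : ℤ, exMeasure (A ∩ (shAct c n ⁻¹' T) ∩ S)
      = exMeasure (A ∩ (shAct c (-n) ⁻¹' S) ∩ T) := by
    intro n
    have := shAct_measure_preimage c (-n)
      (E := A ∩ (shAct c n ⁻¹' T) ∩ S)
      (((hA.inter (hT.1.preimage (shAct_meas c n))).inter hS.1))
    rw [← this]
    congr 1
    rw [Set.preimage_inter, Set.preimage_inter, hAi (-n), shAct_comp_preimage, add_neg_cancel, e0,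
      Set.inter_right_comm]
  rw [key1 c hS.1 hT hA, key1 c hT.1 hS hA]
  calc ∑' n : ℤ, exMeasure (A ∩ (shAct c n ⁻¹' T) ∩ S)
      = ∑' n : ℤ, exMeasure (A ∩ (shAct c (-n) ⁻¹' S) ∩ T) := by
        exact tsum_congr term
    _ = ∑' n : ℤ, exMeasure (A ∩ (shAct c n ⁻¹' S) ∩ T) := by
        exact (Equiv.neg ℤ).tsum_eq (fun n => exMeasure (A ∩ (shAct c n ⁻¹' S) ∩ T))

/-- The generic fundamental domain for `shAct c`. -/
lemma shAct_FD (c : Bool → ℝ) (hc : ∀ b, 0 < c b) :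
    IsFD (shAct c) (Ico (0:ℝ) (c false) ×ˢ {false} ∪ Ico (0:ℝ) (c true) ×ˢ {true}) := by
  set S := Ico (0:ℝ) (c false) ×ˢ ({false} : Set Bool) ∪ Ico (0:ℝ) (c true) ×ˢ {true} with hSdef
  have hmem : ∀ (x : ℝ) (b : Bool) (n : ℤ), shAct c n (x, b) ∈ S ↔
      0 ≤ x + c b * n ∧ x + c b * n < c b := by
    intro x b n
    cases b <;> simp [hSdef, shAct, Set.mem_prod]
  refine ⟨?_, ?_, ?_⟩
  · exact (measurableSet_Ico.prod (measurableSet_singleton _)).union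
      (measurableSet_Ico.prod (measurableSet_singleton _))
  · have : (⋃ n : ℤ, shAct c n '' S) = univ := by
      rw [Set.eq_univ_iff_forall]
      rintro ⟨x, b⟩
      rw [Set.mem_iUnion]
      refine ⟨-(-⌊x / c b⌋), ?_⟩
      rw [shAct_image_eq, Set.mem_preimage, neg_neg]
      rw [hmem]
      have h1 : (⌊x / c b⌋ : ℝ) * c b ≤ x := (le_div_iff₀ (hc b)).mp (Int.floor_le _)
      have h2 : x < ((⌊x / c b⌋ : ℝ) + 1) * c b := (div_lt_iff₀ (hc b)).mp (Int.lt_floor_add_one _)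
      push_cast
      constructor <;> nlinarith
    rw [this, Set.compl_univ, measure_empty]
  · intro n n' hnn'
    have : (shAct c n '' S) ∩ (shAct c n' '' S) = ∅ := by
      rw [shAct_image_eq, shAct_image_eq, Set.eq_empty_iff_forall_notMem]
      rintro ⟨x, b⟩ ⟨h1, h2⟩
      rw [Set.mem_preimage, hmem] at h1 h2
      have hb := hc b
      have hd1 : c b * ((-n' : ℝ) - (-n : ℝ)) < c b * 1 := by push_cast at h1 h2 ⊢; nlinarith
      have hd2 : c b * ((-n : ℝ) - (-n' : ℝ)) < c b * 1 := by push_cast at h1 h2 ⊢; nlinarith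
      have hd1' : ((-n' : ℝ) - (-n : ℝ)) < 1 := (mul_lt_mul_iff_right₀ hb).mp hd1
      have hd2' : ((-n : ℝ) - (-n' : ℝ)) < 1 := (mul_lt_mul_iff_right₀ hb).mp hd2
      have e1 : (-n' : ℤ) - (-n : ℤ) < 1 := by exact_mod_cast hd1'
      have e2 : (-n : ℤ) - (-n' : ℤ) < 1 := by exact_mod_cast hd2'
      omega
    rw [this, measure_empty]

/-- Two commuting measure-preserving actions of `ℤ` on `ℝ × Bool` with fundamental domains
of equal measure, but no common fundamental domain: the invariant set `A = ℝ × {0}` meets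
them in different measures. -/
theorem no_common_fundamentalDomain_example :
    (∀ n m : ℤ, ∀ p : ℝ × Bool, actL n (actR m p) = actR m (actL n p)) ∧
    (∀ n : ℤ, MeasurePreserving (actL n) exMeasure exMeasure) ∧
    (∀ n : ℤ, MeasurePreserving (actR n) exMeasure exMeasure) ∧
    IsFD actL (Ico (0:ℝ) 2 ×ˢ {false} ∪ Ico (0:ℝ) 1 ×ˢ {true}) ∧
    IsFD actR (Ico (0:ℝ) 1 ×ˢ {false} ∪ Ico (0:ℝ) 2 ×ˢ {true}) ∧
    exMeasure (Ico (0:ℝ) 2 ×ˢ {false} ∪ Ico (0:ℝ) 1 ×ˢ {true}) =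
      exMeasure (Ico (0:ℝ) 1 ×ˢ {false} ∪ Ico (0:ℝ) 2 ×ˢ {true}) ∧
    (∀ n : ℤ, actL n '' ((univ : Set ℝ) ×ˢ {false}) = (univ : Set ℝ) ×ˢ {false}) ∧
    (∀ n : ℤ, actR n '' ((univ : Set ℝ) ×ˢ {false}) = (univ : Set ℝ) ×ˢ {false}) ∧
    exMeasure (((univ : Set ℝ) ×ˢ {false}) ∩
        (Ico (0:ℝ) 2 ×ˢ {false} ∪ Ico (0:ℝ) 1 ×ˢ {true})) = 2 ∧
    exMeasure (((univ : Set ℝ) ×ˢ {false}) ∩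
        (Ico (0:ℝ) 1 ×ˢ {false} ∪ Ico (0:ℝ) 2 ×ˢ {true})) = 1 ∧
    ¬ ∃ F : Set (ℝ × Bool), IsFD actL F ∧ IsFD actR F := by
  have hcL : ∀ b : Bool, (0:ℝ) < (fun b : Bool => if b then 1 else 2) b := by
    intro b; cases b <;> norm_num
  have hcR : ∀ b : Bool, (0:ℝ) < (fun b : Bool => if b then 2 else 1) b := by
    intro b; cases b <;> norm_num
  have hX : IsFD actL (Ico (0:ℝ) 2 ×ˢ {false} ∪ Ico (0:ℝ) 1 ×ˢ {true}) := by
    rw [actL_eq]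
    simpa using shAct_FD _ hcL
  have hY : IsFD actR (Ico (0:ℝ) 1 ×ˢ {false} ∪ Ico (0:ℝ) 2 ×ˢ {true}) := by
    rw [actR_eq]
    simpa using shAct_FD _ hcR
  have hA : MeasurableSet ((univ : Set ℝ) ×ˢ ({false} : Set Bool)) :=
    MeasurableSet.univ.prod (measurableSet_singleton _)
  have hAiL : ∀ n : ℤ, shAct (fun b : Bool => if b then 1 else 2) n ⁻¹'
      ((univ : Set ℝ) ×ˢ ({false} : Set Bool)) = (univ : Set ℝ) ×ˢ {false} := by
    intro n; ext ⟨x, b⟩; simp [shAct]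
  have hAiR : ∀ n : ℤ, shAct (fun b : Bool => if b then 2 else 1) n ⁻¹'
      ((univ : Set ℝ) ×ˢ ({false} : Set Bool)) = (univ : Set ℝ) ×ˢ {false} := by
    intro n; ext ⟨x, b⟩; simp [shAct]
  have hAX : exMeasure (((univ : Set ℝ) ×ˢ {false}) ∩
      (Ico (0:ℝ) 2 ×ˢ {false} ∪ Ico (0:ℝ) 1 ×ˢ {true})) = 2 := by
    rw [rowdec (hA.inter hX.1)]
    have e1 : (fun x : ℝ => (x, false)) ⁻¹' (((univ : Set ℝ) ×ˢ {false}) ∩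
        (Ico (0:ℝ) 2 ×ˢ {false} ∪ Ico (0:ℝ) 1 ×ˢ {true})) = Ico (0:ℝ) 2 := by
      ext x; simp
    have e2 : (fun x : ℝ => (x, true)) ⁻¹' (((univ : Set ℝ) ×ˢ {false}) ∩
        (Ico (0:ℝ) 2 ×ˢ {false} ∪ Ico (0:ℝ) 1 ×ˢ {true})) = ∅ := by
      ext x; simp
    rw [e1, e2, Real.volume_Ico, measure_empty, add_zero]
    norm_num
  have hAY : exMeasure (((univ : Set ℝ) ×ˢ {false}) ∩
      (Ico (0:ℝ) 1 ×ˢ {false} ∪ Ico (0:ℝ) 2 ×ˢ {true})) = 1 := by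
    rw [rowdec (hA.inter hY.1)]
    have e1 : (fun x : ℝ => (x, false)) ⁻¹' (((univ : Set ℝ) ×ˢ {false}) ∩
        (Ico (0:ℝ) 1 ×ˢ {false} ∪ Ico (0:ℝ) 2 ×ˢ {true})) = Ico (0:ℝ) 1 := by
      ext x; simp
    have e2 : (fun x : ℝ => (x, true)) ⁻¹' (((univ : Set ℝ) ×ˢ {false}) ∩
        (Ico (0:ℝ) 1 ×ˢ {false} ∪ Ico (0:ℝ) 2 ×ˢ {true})) = ∅ := by
      ext x; simp
    rw [e1, e2, Real.volume_Ico, measure_empty, add_zero]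
    norm_num
  refine ⟨?_, ?_, ?_, hX, hY, ?_, ?_, ?_, hAX, hAY, ?_⟩
  · rintro n m ⟨x, b⟩
    cases b <;> simp [actL, actR] <;> ring
  · intro n; rw [actL_eq]; exact shAct_mp _ n
  · intro n; rw [actR_eq]; exact shAct_mp _ n
  · -- equal measures, both 3
    rw [rowdec hX.1, rowdec hY.1]
    have e1 : (fun x : ℝ => (x, false)) ⁻¹'
        (Ico (0:ℝ) 2 ×ˢ {false} ∪ Ico (0:ℝ) 1 ×ˢ {true}) = Ico (0:ℝ) 2 := by ext x; simp
    have e2 : (fun x : ℝ => (x, true)) ⁻¹'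
        (Ico (0:ℝ) 2 ×ˢ {false} ∪ Ico (0:ℝ) 1 ×ˢ {true}) = Ico (0:ℝ) 1 := by ext x; simp
    have e3 : (fun x : ℝ => (x, false)) ⁻¹'
        (Ico (0:ℝ) 1 ×ˢ {false} ∪ Ico (0:ℝ) 2 ×ˢ {true}) = Ico (0:ℝ) 1 := by ext x; simp
    have e4 : (fun x : ℝ => (x, true)) ⁻¹'
        (Ico (0:ℝ) 1 ×ˢ {false} ∪ Ico (0:ℝ) 2 ×ˢ {true}) = Ico (0:ℝ) 2 := by ext x; simp
    rw [e1, e2, e3, e4, add_comm]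
  · intro n
    rw [actL_eq, shAct_image_eq]
    exact hAiL (-n)
  · intro n
    rw [actR_eq, shAct_image_eq]
    exact hAiR (-n)
  · rintro ⟨F, hFL, hFR⟩
    rw [actL_eq] at hFL
    rw [actR_eq] at hFR
    have hX' := hX; rw [actL_eq] at hX'
    have hY' := hY; rw [actR_eq] at hY'
    have h1 := key _ hX' hFL hA hAiL
    have h2 := key _ hFR hY' hA hAiR
    rw [hAX] at h1
    rw [hAY] at h2
    exact absurd (h1.trans h2) (by norm_num)
end

section
/- In the setting of two commuting measure-preserving actions of countable groups Γ, Λ on (M, B, m) with finite-positive-measure fundamental domains X, Y satisfying m(X) = (k+ε)·m(Y) for an integer k ≥ 1 and 0 ≤ ε < 1: if there exists a sequence of measurable sets (A_n) of positive finite measure with asymptotically zero (Γ,X)-boundary and asymptotically zero (Λ,Y)-boundary, then m(A ∩ X) = (k+ε)·m(A ∩ Y) for every measurable set A invariant under both actions. -/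
open MeasureTheory Set Pointwise ENNReal Filter

/-- The number of translates `γ • X` meeting both `A` and its complement in nonzero measure. -/
noncomputable def boundaryCount {M : Type*} [MeasurableSpace M] (Γ : Type*) [Group Γ]
    [MulAction Γ M] (μ : Measure M) (X A : Set M) : ℕ∞ :=
  {γ : Γ | μ ((γ • X) ∩ A) ≠ 0 ∧ μ ((γ • X) ∩ Aᶜ) ≠ 0}.encard

lemma key_estimate {M : Type*} [MeasurableSpace M] {Γ : Type*} [Group Γ] [Countable Γ]
    [MulAction Γ M] (hmeas : ∀ γ : Γ, Measurable fun x : M => γ • x)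
    (μ : Measure M) [SMulInvariantMeasure Γ M μ]
    {X : Set M} (hX : IsFundamentalDomain Γ X μ)
    {B : Set M} (hB : ∀ γ : Γ, μ (symmDiff (γ • B) B) = 0) (Aset : Set M) :
    μ (B ∩ Aset) * μ X ≤ μ Aset * μ (B ∩ X)
        + (boundaryCount Γ μ X Aset : ℝ≥0∞) * (μ X * μ X)
    ∧ μ Aset * μ (B ∩ X) ≤ μ (B ∩ Aset) * μ X
        + (boundaryCount Γ μ X Aset : ℝ≥0∞) * (μ X * μ X) := by
  letI : MeasurableSpace Γ := ⊤
  haveI : MeasurableSMul Γ M := { measurable_const_smul := fun c => hmeas c, measurable_smul_const := fun _ => measurable_from_top }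
  set S : Set Γ := {γ : Γ | μ ((γ • X) ∩ Aset) ≠ 0 ∧ μ ((γ • X) ∩ Asetᶜ) ≠ 0} with hS
  set F : Γ → ℝ≥0∞ := fun γ => μ (Aset ∩ γ • X) with hF
  set G : Γ → ℝ≥0∞ := fun γ => μ ((B ∩ Aset) ∩ γ • X) with hG
  have hsmul : ∀ γ : Γ, μ (γ • X) = μ X := fun γ => measure_smul μ γ X
  have hBX : ∀ γ : Γ, μ (B ∩ γ • X) = μ (B ∩ X) := by
    intro γ
    have e1 : γ⁻¹ • (B ∩ γ • X) = (γ⁻¹ • B) ∩ X := by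
      rw [smul_set_inter, inv_smul_smul]
    have e2 : (γ⁻¹ • B : Set M) =ᵐ[μ] B := measure_symmDiff_eq_zero_iff.mp (hB γ⁻¹)
    calc μ (B ∩ γ • X) = μ (γ⁻¹ • (B ∩ γ • X)) := (measure_smul μ γ⁻¹ _).symm
      _ = μ ((γ⁻¹ • B) ∩ X) := by rw [e1]
      _ = μ (B ∩ X) := measure_congr (ae_eq_set_inter e2 (ae_eq_refl X))
  have hFle : ∀ γ, F γ ≤ μ X := fun γ =>
    (measure_mono inter_subset_right).trans (hsmul γ).le
  have hGle : ∀ γ, G γ ≤ μ X := fun γ =>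
    (measure_mono inter_subset_right).trans (hsmul γ).le
  have hBXle : μ (B ∩ X) ≤ μ X := measure_mono inter_subset_right
  -- pointwise estimates
  have hpt : ∀ γ : Γ,
      G γ * μ X ≤ F γ * μ (B ∩ X) + S.indicator (fun _ => μ X * μ X) γ
      ∧ F γ * μ (B ∩ X) ≤ G γ * μ X + S.indicator (fun _ => μ X * μ X) γ := by
    intro γ
    by_cases h1 : μ ((γ • X) ∩ Aset) = 0
    · have hF0 : F γ = 0 := by
        show μ (Aset ∩ γ • X) = 0; rw [inter_comm]; exact h1
      have hG0 : G γ = 0 := by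
        refine le_antisymm ?_ zero_le
        rw [← hF0]
        exact measure_mono (inter_subset_inter_left _ inter_subset_right)
      simp [hF0, hG0]
    · by_cases h2 : μ ((γ • X) ∩ Asetᶜ) = 0
      · -- interior
        have hFeq : F γ = μ X := by
          refine le_antisymm (hFle γ) ?_
          calc μ X = μ (γ • X) := (hsmul γ).symm
            _ ≤ μ (((γ • X) ∩ Aset) ∪ ((γ • X) ∩ Asetᶜ)) :=
                measure_mono (inter_union_compl (γ • X) Aset).symm.subset
            _ ≤ μ ((γ • X) ∩ Aset) + μ ((γ • X) ∩ Asetᶜ) := measure_union_le _ _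
            _ = μ (Aset ∩ γ • X) := by rw [h2, add_zero, inter_comm]
        have hGeq : G γ = μ (B ∩ X) := by
          refine le_antisymm ?_ ?_
          · calc G γ ≤ μ (B ∩ γ • X) :=
                measure_mono (inter_subset_inter_left _ inter_subset_left)
              _ = μ (B ∩ X) := hBX γ
          · calc μ (B ∩ X) = μ (B ∩ γ • X) := (hBX γ).symm
              _ ≤ μ (((B ∩ Aset) ∩ γ • X) ∪ ((γ • X) ∩ Asetᶜ)) := by
                  refine measure_mono ?_
                  rintro x ⟨hxB, hxγ⟩
                  by_cases hA : x ∈ Aset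
                  · exact Or.inl ⟨⟨hxB, hA⟩, hxγ⟩
                  · exact Or.inr ⟨hxγ, hA⟩
              _ ≤ μ ((B ∩ Aset) ∩ γ • X) + μ ((γ • X) ∩ Asetᶜ) := measure_union_le _ _
              _ = G γ := by rw [h2, add_zero]
        constructor
        · rw [hGeq, hFeq, mul_comm]; exact le_self_add
        · rw [hGeq, hFeq, mul_comm]; exact le_self_add
      · -- boundary
        have hγS : γ ∈ S := ⟨h1, h2⟩
        have hind : S.indicator (fun _ => μ X * μ X) γ = μ X * μ X :=
          indicator_of_mem hγS _
        constructor
        · rw [hind]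
          calc G γ * μ X ≤ μ X * μ X := mul_le_mul_left (hGle γ) _
            _ ≤ F γ * μ (B ∩ X) + μ X * μ X := le_add_self
        · rw [hind]
          calc F γ * μ (B ∩ X) ≤ μ X * μ X := mul_le_mul' (hFle γ) hBXle
            _ ≤ G γ * μ X + μ X * μ X := le_add_self
  have hsumA : μ Aset = (∑' γ : Γ, F γ) := hX.measure_eq_tsum' Aset
  have hsumB : μ (B ∩ Aset) = (∑' γ : Γ, G γ) := hX.measure_eq_tsum' (B ∩ Aset)
  have hsumInd : ∑' γ : Γ, S.indicator (fun _ => μ X * μ X) γ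
      = (boundaryCount Γ μ X Aset : ℝ≥0∞) * (μ X * μ X) := by
    rw [← tsum_subtype S (fun _ => μ X * μ X), ENNReal.tsum_set_const]
    rfl
  constructor
  · calc μ (B ∩ Aset) * μ X = (∑' γ : Γ, G γ * μ X) := by
          rw [hsumB]; exact ENNReal.tsum_mul_right.symm
      _ ≤ ∑' γ : Γ, (F γ * μ (B ∩ X) + S.indicator (fun _ => μ X * μ X) γ) :=
        ENNReal.tsum_le_tsum fun γ => (hpt γ).1
      _ = μ Aset * μ (B ∩ X) + (boundaryCount Γ μ X Aset : ℝ≥0∞) * (μ X * μ X) := by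
          rw [ENNReal.tsum_add, ENNReal.tsum_mul_right, ← hsumA, hsumInd]
  · calc μ Aset * μ (B ∩ X) = (∑' γ : Γ, F γ * μ (B ∩ X)) := by
          rw [hsumA]; exact ENNReal.tsum_mul_right.symm
      _ ≤ ∑' γ : Γ, (G γ * μ X + S.indicator (fun _ => μ X * μ X) γ) :=
        ENNReal.tsum_le_tsum fun γ => (hpt γ).2
      _ = μ (B ∩ Aset) * μ X + (boundaryCount Γ μ X Aset : ℝ≥0∞) * (μ X * μ X) := by
          rw [ENNReal.tsum_add, ENNReal.tsum_mul_right, ← hsumB, hsumInd]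

lemma dir_le {a b N N' : ℕ → ℝ≥0∞} {x y cX cY : ℝ≥0∞}
    (ha0 : ∀ n, a n ≠ 0) (hafin : ∀ n, a n ≠ ⊤)
    (hx0 : x ≠ 0) (hxfin : x ≠ ⊤) (hy0 : y ≠ 0) (hyfin : y ≠ ⊤)
    (hN : limsup (fun n => N n / a n) atTop = 0)
    (hN' : limsup (fun n => N' n / a n) atTop = 0)
    (h1 : ∀ n, a n * cX ≤ b n * x + N n * (x * x))
    (h2 : ∀ n, b n * y ≤ a n * cY + N' n * (y * y)) :
    cX * y ≤ cY * x := by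
  refine ENNReal.le_of_forall_pos_le_add fun ε' hε' _ => ?_
  set C : ℝ≥0∞ := y * y * x + x * x * y with hC
  have hxxy : x * x * y ≠ 0 := by
    simp [mul_ne_zero, hx0, hy0]
  have hC0 : C ≠ 0 := by
    intro h
    exact hxxy ((add_eq_zero.mp h).2)
  have hCfin : C ≠ ⊤ :=
    ENNReal.add_ne_top.mpr ⟨ENNReal.mul_ne_top (ENNReal.mul_ne_top hyfin hyfin) hxfin,
      ENNReal.mul_ne_top (ENNReal.mul_ne_top hxfin hxfin) hyfin⟩
  set δ : ℝ≥0∞ := (ε' : ℝ≥0∞) / C with hδ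
  have hδ0 : 0 < δ := ENNReal.div_pos (ENNReal.coe_ne_zero.mpr hε'.ne') hCfin
  obtain ⟨n, hn1, hn2⟩ :=
    ((eventually_lt_of_limsup_lt (show limsup (fun n => N n / a n) atTop < δ by
        rw [hN]; exact hδ0)).and
      (eventually_lt_of_limsup_lt (show limsup (fun n => N' n / a n) atTop < δ by
        rw [hN']; exact hδ0))).exists
  have hNle : N n ≤ δ * a n := by
    calc N n = N n / a n * a n := (ENNReal.div_mul_cancel (ha0 n) (hafin n)).symm
      _ ≤ δ * a n := mul_le_mul_left hn1.le _
  have hN'le : N' n ≤ δ * a n := by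
    calc N' n = N' n / a n * a n := (ENNReal.div_mul_cancel (ha0 n) (hafin n)).symm
      _ ≤ δ * a n := mul_le_mul_left hn2.le _
  have main : a n * (cX * y) ≤ a n * (cY * x + δ * C) := by
    calc a n * (cX * y) = (a n * cX) * y := by ring
      _ ≤ (b n * x + N n * (x * x)) * y := mul_le_mul_left (h1 n) y
      _ = (b n * y) * x + N n * (x * x) * y := by ring
      _ ≤ (a n * cY + N' n * (y * y)) * x + N n * (x * x) * y :=
          add_le_add (mul_le_mul_left (h2 n) x) le_rfl
      _ ≤ (a n * cY + (δ * a n) * (y * y)) * x + (δ * a n) * (x * x) * y :=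
          add_le_add (mul_le_mul_left (add_le_add le_rfl (mul_le_mul_left hN'le _)) x)
            (mul_le_mul_left (mul_le_mul_left hNle _) y)
      _ = a n * (cY * x + δ * (y * y * x + x * x * y)) := by ring
  have hfinal := (ENNReal.mul_le_mul_iff_right (ha0 n) (hafin n)).mp main
  calc cX * y ≤ cY * x + δ * C := hfinal
    _ = cY * x + ε' := by rw [hδ, ENNReal.div_mul_cancel hC0 hCfin]

/-- If `μ X = (k+ε)·μ Y` and there is a sequence of sets with asymptotically zero
`(Γ,X)`- and `(Λ,Y)`-boundary, then `μ (A ∩ X) = (k+ε)·μ (A ∩ Y)` for every jointly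
invariant set `A`. -/
theorem measure_inter_eq_of_asymptotically_zero_boundary
    {M : Type*} [MeasurableSpace M]
    {Γ : Type*} [Group Γ] [Countable Γ] [MulAction Γ M]
    {Λ : Type*} [Group Λ] [Countable Λ] [MulAction Λ M]
    (hmeasΓ : ∀ γ : Γ, Measurable fun x : M => γ • x)
    (hmeasΛ : ∀ l : Λ, Measurable fun x : M => l • x)
    (μ : Measure M) [SigmaFinite μ]
    [SMulInvariantMeasure Γ M μ] [SMulInvariantMeasure Λ M μ]
    (hcomm : ∀ (γ : Γ) (l : Λ) (x : M), γ • (l • x) = l • (γ • x))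
    (X Y : Set M) (hXmeas : MeasurableSet X) (hYmeas : MeasurableSet Y)
    (hX : IsFundamentalDomain Γ X μ) (hY : IsFundamentalDomain Λ Y μ)
    (hX0 : 0 < μ X) (hXfin : μ X ≠ ⊤) (hY0 : 0 < μ Y) (hYfin : μ Y ≠ ⊤)
    (k : ℕ) (hk : 1 ≤ k) (ε : ℝ) (hε0 : 0 ≤ ε) (hε1 : ε < 1)
    (hcov : μ X = ((k : ℝ≥0∞) + ENNReal.ofReal ε) * μ Y)
    (A : ℕ → Set M) (hAmeas : ∀ n, MeasurableSet (A n))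
    (hA0 : ∀ n, 0 < μ (A n)) (hAfin : ∀ n, μ (A n) ≠ ⊤)
    (hbdΓ : limsup (fun n => (boundaryCount Γ μ X (A n) : ℝ≥0∞) / μ (A n)) atTop = 0)
    (hbdΛ : limsup (fun n => (boundaryCount Λ μ Y (A n) : ℝ≥0∞) / μ (A n)) atTop = 0) :
    ∀ B : Set M, MeasurableSet B →
      (∀ γ : Γ, μ (symmDiff (γ • B) B) = 0) →
      (∀ l : Λ, μ (symmDiff (l • B) B) = 0) →
      μ (B ∩ X) = ((k : ℝ≥0∞) + ENNReal.ofReal ε) * μ (B ∩ Y) := by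
  intro B hBmeas hBΓ hBΛ
  have hkX := fun n => key_estimate hmeasΓ μ hX hBΓ (A n)
  have hkY := fun n => key_estimate hmeasΛ μ hY hBΛ (A n)
  have ha0 : ∀ n, μ (A n) ≠ 0 := fun n => (hA0 n).ne'
  have d1 : μ (B ∩ X) * μ Y ≤ μ (B ∩ Y) * μ X :=
    dir_le ha0 hAfin hX0.ne' hXfin hY0.ne' hYfin hbdΓ hbdΛ
      (fun n => (hkX n).2) (fun n => (hkY n).1)
  have d2 : μ (B ∩ Y) * μ X ≤ μ (B ∩ X) * μ Y :=
    dir_le ha0 hAfin hY0.ne' hYfin hX0.ne' hXfin hbdΛ hbdΓ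
      (fun n => (hkY n).2) (fun n => (hkX n).1)
  have heq : μ (B ∩ X) * μ Y = μ (B ∩ Y) * μ X := le_antisymm d1 d2
  have hmul : μ (B ∩ X) * μ Y = (((k : ℝ≥0∞) + ENNReal.ofReal ε) * μ (B ∩ Y)) * μ Y := by
    rw [heq, hcov]; ring
  exact le_antisymm ((ENNReal.mul_le_mul_iff_left hY0.ne' hYfin).mp hmul.le)
    ((ENNReal.mul_le_mul_iff_left hY0.ne' hYfin).mp hmul.ge)
end

section
/- Let Γ act measure-preservingly on (M, B, m) with fundamental domain X of finite positive measure, and let (A_n) be a sequence of measurable sets of finite positive measure with asymptotically zero (Γ,X)-boundary. Then for every bounded nonnegative measurable Γ-invariant function f on M, (1/m(X)) ∫_X f dm = liminf_{n→∞} (1/m(A_n)) ∫_{A_n} f dm. -/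
open MeasureTheory Set Pointwise ENNReal Filter

/-- For a sequence with asymptotically zero `(Γ,X)`-boundary, the averages of a bounded
nonnegative `Γ`-invariant measurable function over `A n` have liminf equal to its average
over the fundamental domain `X`. -/
theorem liminf_average_eq_average_fundamentalDomain
    {M : Type*} [MeasurableSpace M]
    {Γ : Type*} [Group Γ] [Countable Γ] [MulAction Γ M]
    (hmeasΓ : ∀ γ : Γ, Measurable fun x : M => γ • x)
    (μ : Measure M) [SigmaFinite μ] [SMulInvariantMeasure Γ M μ]
    (X : Set M) (hXmeas : MeasurableSet X) (hX : IsFundamentalDomain Γ X μ)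
    (hX0 : 0 < μ X) (hXfin : μ X ≠ ⊤)
    (A : ℕ → Set M) (hAmeas : ∀ n, MeasurableSet (A n))
    (hA0 : ∀ n, 0 < μ (A n)) (hAfin : ∀ n, μ (A n) ≠ ⊤)
    (hbd : limsup (fun n => (boundaryCount Γ μ X (A n) : ℝ≥0∞) / μ (A n)) atTop = 0)
    (f : M → ℝ≥0∞) (hf : Measurable f)
    (C : ℝ≥0∞) (hC : C ≠ ⊤) (hfC : ∀ x, f x ≤ C)
    (hfinv : ∀ γ : Γ, ∀ᵐ x ∂μ, f (γ • x) = f x) :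
    (μ X)⁻¹ * ∫⁻ x in X, f x ∂μ =
      liminf (fun n => (μ (A n))⁻¹ * ∫⁻ x in A n, f x ∂μ) atTop := by
  classical
  letI : MeasurableSpace Γ := ⊤
  haveI : MeasurableSMul Γ M := 
    @MeasurableSMul.mk Γ M _ _ _ ⟨fun c => hmeasΓ c⟩ (fun _ => measurable_from_top)
  set c : ℝ≥0∞ := ∫⁻ x in X, f x ∂μ with hc
  set κ : ℝ≥0∞ := (μ X)⁻¹ * c with hκ
  -- the integral of f over every translate of X equals c
  have hint : ∀ γ : Γ, ∫⁻ x in γ • X, f x ∂μ = c := by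
    intro γ
    have h1 : ∫⁻ x in X, f (γ • x) ∂μ = ∫⁻ x in γ • X, f x ∂μ := by
      have := (measurePreserving_smul γ μ).setLIntegral_comp_emb
        (measurableEmbedding_const_smul γ) f X
      simpa [Set.image_smul] using this
    have h2 : ∫⁻ x in X, f (γ • x) ∂μ = ∫⁻ x in X, f x ∂μ :=
      lintegral_congr_ae ((ae_restrict_of_ae (hfinv γ)).mono fun x hx => hx)
    rw [← h1, h2]
  -- boundedness of c and κ
  have hcC : c ≤ C * μ X := by
    calc c ≤ ∫⁻ _ in X, C ∂μ := lintegral_mono fun x => hfC x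
    _ = C * μ X := setLIntegral_const X C
  have hκC : κ ≤ C := by
    calc κ ≤ (μ X)⁻¹ * (C * μ X) := mul_le_mul_right hcC _
    _ = (μ X)⁻¹ * μ X * C := by ac_rfl
    _ = C := by rw [ENNReal.inv_mul_cancel hX0.ne' hXfin, one_mul]
  have hκμX : κ * μ X = c := by
    rw [hκ, mul_right_comm, ENNReal.inv_mul_cancel hX0.ne' hXfin, one_mul]
  -- the boundary sets
  set B : ℕ → Set Γ := fun n =>
    {γ : Γ | μ ((γ • X) ∩ A n) ≠ 0 ∧ μ ((γ • X) ∩ (A n)ᶜ) ≠ 0} with hB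
  have hβ : ∀ n, ∑' γ : Γ, (B n).indicator (fun _ => μ X) γ =
      (boundaryCount Γ μ X (A n) : ℝ≥0∞) * μ X := by
    intro n
    rw [← tsum_subtype, ENNReal.tsum_set_const]
    rfl
  -- facts about "interior" translates
  have hImem : ∀ n, ∀ γ : Γ, μ ((γ • X) ∩ (A n)ᶜ) = 0 →
      (A n ∩ γ • X : Set M) =ᵐ[μ] (γ • X : Set M) := by
    intro n γ h0
    rw [ae_eq_set]
    constructor
    · exact measure_mono_null (fun x hx => (hx.2 hx.1.2).elim) measure_empty
    · refine measure_mono_null ?_ h0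
      intro x hx
      exact ⟨hx.1, fun hA' => hx.2 ⟨hA', hx.1⟩⟩
  -- per-γ bounds
  have hjle : ∀ n, ∀ γ : Γ, ∫⁻ x in A n ∩ γ • X, f x ∂μ ≤ C * μ (A n ∩ γ • X) := by
    intro n γ
    calc ∫⁻ x in A n ∩ γ • X, f x ∂μ ≤ ∫⁻ _ in A n ∩ γ • X, C ∂μ :=
        lintegral_mono fun x => hfC x
    _ = C * μ (A n ∩ γ • X) := setLIntegral_const _ C
  have hμinter : ∀ n, ∀ γ : Γ, μ (A n ∩ γ • X) ≤ μ X := by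
    intro n γ
    calc μ (A n ∩ γ • X) ≤ μ (γ • X) := measure_mono fun x hx => hx.2
    _ = μ X := measure_smul μ γ X
  -- key pointwise estimates
  have key1 : ∀ n, ∀ γ : Γ, κ * μ (A n ∩ γ • X) ≤
      ∫⁻ x in A n ∩ γ • X, f x ∂μ + κ * (B n).indicator (fun _ => μ X) γ := by
    intro n γ
    by_cases hI : μ ((γ • X) ∩ (A n)ᶜ) = 0
    · have h1 : μ (A n ∩ γ • X) = μ X := by
        rw [measure_congr (hImem n γ hI), measure_smul]
      have h2 : ∫⁻ x in A n ∩ γ • X, f x ∂μ = c := by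
        rw [setLIntegral_congr (hImem n γ hI), hint]
      rw [h1, h2, hκμX]
      exact le_self_add
    · by_cases hA' : μ ((γ • X) ∩ A n) = 0
      · have : μ (A n ∩ γ • X) = 0 := by rwa [inter_comm]
        simp [this]
      · have hγB : γ ∈ B n := ⟨hA', hI⟩
        rw [Set.indicator_of_mem hγB]
        calc κ * μ (A n ∩ γ • X) ≤ κ * μ X := mul_le_mul_right (hμinter n γ) _
        _ ≤ _ := le_add_self
  have key2 : ∀ n, ∀ γ : Γ, ∫⁻ x in A n ∩ γ • X, f x ∂μ ≤
      κ * μ (A n ∩ γ • X) + C * (B n).indicator (fun _ => μ X) γ := by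
    intro n γ
    by_cases hI : μ ((γ • X) ∩ (A n)ᶜ) = 0
    · have h1 : μ (A n ∩ γ • X) = μ X := by
        rw [measure_congr (hImem n γ hI), measure_smul]
      have h2 : ∫⁻ x in A n ∩ γ • X, f x ∂μ = c := by
        rw [setLIntegral_congr (hImem n γ hI), hint]
      rw [h1, h2, hκμX]
      exact le_self_add
    · by_cases hA' : μ ((γ • X) ∩ A n) = 0
      · have h0 : μ (A n ∩ γ • X) = 0 := by rwa [inter_comm]
        rw [setLIntegral_measure_zero _ _ h0]
        exact zero_le
      · have hγB : γ ∈ B n := ⟨hA', hI⟩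
        rw [Set.indicator_of_mem hγB]
        calc ∫⁻ x in A n ∩ γ • X, f x ∂μ ≤ C * μ (A n ∩ γ • X) := hjle n γ
        _ ≤ C * μ X := mul_le_mul_right (hμinter n γ) _
        _ ≤ _ := le_add_self
  -- summed estimates
  have hμA : ∀ n, μ (A n) = ∑' γ : Γ, μ (A n ∩ γ • X) := fun n =>
    hX.measure_eq_tsum' (A n)
  have hintA : ∀ n, ∫⁻ x in A n, f x ∂μ = ∑' γ : Γ, ∫⁻ x in A n ∩ γ • X, f x ∂μ :=
    fun n => hX.setLIntegral_eq_tsum f (A n)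
  set bc : ℕ → ℝ≥0∞ := fun n => (boundaryCount Γ μ X (A n) : ℝ≥0∞) with hbc
  have sum1 : ∀ n, κ * μ (A n) ≤ ∫⁻ x in A n, f x ∂μ + κ * (bc n * μ X) := by
    intro n
    rw [hμA n, hintA n, ← ENNReal.tsum_mul_left, ← hβ n, ← ENNReal.tsum_mul_left,
      ← ENNReal.tsum_add]
    exact ENNReal.tsum_le_tsum fun γ => key1 n γ
  have sum2 : ∀ n, ∫⁻ x in A n, f x ∂μ ≤ κ * μ (A n) + C * (bc n * μ X) := by
    intro n
    rw [hμA n, hintA n, ← ENNReal.tsum_mul_left, ← hβ n, ← ENNReal.tsum_mul_left,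
      ← ENNReal.tsum_add]
    exact ENNReal.tsum_le_tsum fun γ => key2 n γ
  -- the averages
  set avg : ℕ → ℝ≥0∞ := fun n => (μ (A n))⁻¹ * ∫⁻ x in A n, f x ∂μ with havg
  set ε : ℕ → ℝ≥0∞ := fun n => bc n / μ (A n) with hε
  set D : ℝ≥0∞ := C * μ X with hD
  have hDfin : D ≠ ⊤ := ENNReal.mul_ne_top hC hXfin
  have hinvA : ∀ n, (μ (A n))⁻¹ * μ (A n) = 1 := fun n =>
    ENNReal.inv_mul_cancel (hA0 n).ne' (hAfin n)
  have upper : ∀ n, avg n ≤ κ + D * ε n := by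
    intro n
    calc avg n ≤ (μ (A n))⁻¹ * (κ * μ (A n) + C * (bc n * μ X)) :=
        mul_le_mul_right (sum2 n) _
    _ = (μ (A n))⁻¹ * μ (A n) * κ + C * μ X * (bc n * (μ (A n))⁻¹) := by
        rw [mul_add]; congr 1 <;> ac_rfl
    _ = κ + D * ε n := by rw [hinvA n, one_mul]; simp only [hε, hD, div_eq_mul_inv]
  have lower : ∀ n, κ ≤ avg n + D * ε n := by
    intro n
    calc
      κ = κ * (μ (A n) * (μ (A n))⁻¹) := by
        rw [ENNReal.mul_inv_cancel (hA0 n).ne' (hAfin n), mul_one]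
    _ = κ * μ (A n) * (μ (A n))⁻¹ := (mul_assoc κ _ _).symm
    _ ≤ (∫⁻ x in A n, f x ∂μ + κ * (bc n * μ X)) * (μ (A n))⁻¹ :=
        mul_le_mul_left (sum1 n) _
    _ = avg n + κ * μ X * (bc n * (μ (A n))⁻¹) := by
        simp only [havg]; rw [add_mul]; congr 1 <;> ac_rfl
    _ ≤ avg n + C * μ X * (bc n * (μ (A n))⁻¹) :=
        add_le_add_right (mul_le_mul_left (mul_le_mul_left hκC _) _) _
    _ = avg n + D * ε n := by simp only [hε, hD, div_eq_mul_inv]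
  -- ε tends to zero
  have hεlim : Tendsto ε atTop (nhds 0) := by
    refine tendsto_of_liminf_eq_limsup ?_ hbd
    exact le_antisymm (hbd ▸ liminf_le_limsup) zero_le
  have hDε : Tendsto (fun n => D * ε n) atTop (nhds 0) := by
    have := ENNReal.Tendsto.const_mul hεlim (Or.inr hDfin)
    simpa using this
  -- conclusion via liminf/limsup
  have hup : limsup avg atTop ≤ κ := by
    refine ENNReal.le_of_forall_pos_le_add fun δ hδ _ => ?_
    have hev : ∀ᶠ n in atTop, D * ε n < (δ : ℝ≥0∞) := by
      exact hDε.eventually_lt_const (by exact_mod_cast hδ)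
    refine limsup_le_of_le (by isBoundedDefault) ?_
    filter_upwards [hev] with n hn
    exact (upper n).trans (add_le_add_right hn.le _)
  have hlo : κ ≤ liminf avg atTop := by
    refine ENNReal.le_of_forall_pos_le_add fun δ hδ _ => ?_
    have hev : ∀ᶠ n in atTop, D * ε n < (δ : ℝ≥0∞) := by
      exact hDε.eventually_lt_const (by exact_mod_cast hδ)
    have : κ - δ ≤ liminf avg atTop := by
      refine le_liminf_of_le (by isBoundedDefault) ?_
      filter_upwards [hev] with n hn
      refine tsub_le_iff_right.2 ?_
      exact (lower n).trans (add_le_add_right hn.le _)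
    exact tsub_le_iff_right.1 this
  have h3 : liminf avg atTop ≤ limsup avg atTop := liminf_le_limsup
  exact le_antisymm hlo (h3.trans hup)
end
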